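/- arXiv:2605.08101 — 12 statements merged into one kernel-verified Lean document; each statement's English description precedes it below -/
import Mathlib

section
/- Let A be an n×n real symmetric matrix (n ≥ 2) such that every (n−1)×(n−1) principal submatrix of A is positive semidefinite and det(A) < 0. Then A has exactly one negative eigenvalue, and all other eigenvalues are nonnegative. -/
open Matrix

/-- If `x` vanishes at `k` and the principal submatrix deleting `k` is PSD, the quadratic form
at `x` is nonnegative. -/
lemma quadform_nonneg_of_vanish {n : ℕ} (A : Matrix (Fin n) (Fin n) ℝ) (k : Fin n)
    (hk : (A.submatrix (fun j : {j : Fin n // j ≠ k} => (j : Fin n))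
        (fun j : {j : Fin n // j ≠ k} => (j : Fin n))).PosSemidef)
    (x : Fin n → ℝ) (hx : x k = 0) : 0 ≤ x ⬝ᵥ A *ᵥ x := by
  have h := hk.dotProduct_mulVec_nonneg (fun j : {j : Fin n // j ≠ k} => x (j : Fin n))
  simp only [star_trivial] at h
  have inner_eq : ∀ j : Fin n,
      (∑ p : {j : Fin n // j ≠ k}, A j (p : Fin n) * x (p : Fin n)) = ∑ p, A j p * x p := by
    intro j
    rw [← Finset.sum_subtype (Finset.univ.erase k)
      (fun p => by simp [Finset.mem_erase]) (fun p => A j p * x p)]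
    rw [Finset.sum_erase _ (by simp [hx])]
  calc (0:ℝ) ≤ _ := h
    _ = ∑ j : {j : Fin n // j ≠ k}, x (j:Fin n) * ∑ p, A (j:Fin n) p * x p := by
        simp only [dotProduct, mulVec, submatrix_apply, inner_eq]
    _ = ∑ j, x j * ∑ p, A j p * x p := by
        rw [← Finset.sum_subtype (Finset.univ.erase k)
          (fun p => by simp [Finset.mem_erase]) (fun j => x j * ∑ p, A j p * x p)]
        rw [Finset.sum_erase _ (by simp [hx])]
    _ = x ⬝ᵥ A *ᵥ x := by simp [dotProduct, mulVec]

/-- The quadratic form at a combination of two distinct eigenvectors. -/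
lemma quadform_eigen_combo {n : ℕ} (A : Matrix (Fin n) (Fin n) ℝ) (hA : A.IsHermitian)
    (i j : Fin n) (hij : i ≠ j) (a b : ℝ) :
    (a • ⇑(hA.eigenvectorBasis i) + b • ⇑(hA.eigenvectorBasis j)) ⬝ᵥ
      A *ᵥ (a • ⇑(hA.eigenvectorBasis i) + b • ⇑(hA.eigenvectorBasis j))
      = a ^ 2 * hA.eigenvalues i + b ^ 2 * hA.eigenvalues j := by
  have horth : ∀ p q : Fin n,
      (⇑(hA.eigenvectorBasis p) ⬝ᵥ ⇑(hA.eigenvectorBasis q)) = if p = q then 1 else 0 := by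
    intro p q
    have := orthonormal_iff_ite.mp hA.eigenvectorBasis.orthonormal p q
    rw [dotProduct_comm]
    simpa [PiLp.inner_apply, RCLike.inner_apply, dotProduct] using this
  rw [mulVec_add, mulVec_smul, mulVec_smul, hA.mulVec_eigenvectorBasis,
    hA.mulVec_eigenvectorBasis]
  simp only [add_dotProduct, dotProduct_add, smul_dotProduct, dotProduct_smul, smul_eq_mul,
    horth, if_pos rfl, if_neg hij, if_neg hij.symm]
  simp only [if_true]; ring

/-- There cannot be two distinct negative eigenvalues. -/
lemma not_two_negative {n : ℕ} (hn : 2 ≤ n) (A : Matrix (Fin n) (Fin n) ℝ) (hA : A.IsHermitian)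
    (hloc : ∀ i : Fin n,
      (A.submatrix (fun j : {j : Fin n // j ≠ i} => (j : Fin n))
        (fun j : {j : Fin n // j ≠ i} => (j : Fin n))).PosSemidef)
    (i j : Fin n) (hij : i ≠ j)
    (hi : hA.eigenvalues i < 0) (hj : hA.eigenvalues j < 0) : False := by
  set u := ⇑(hA.eigenvectorBasis i) with hu
  set w := ⇑(hA.eigenvectorBasis j) with hw
  have h0 : (0 : ℕ) < n := by omega
  set k : Fin n := ⟨0, h0⟩ with hk
  by_cases huk : u k = 0
  · -- use x = u itself
    have hform := quadform_eigen_combo A hA i j hij 1 0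
    have hx : (1 : ℝ) • u + (0 : ℝ) • w = u := by simp
    rw [hx] at hform
    have hge := quadform_nonneg_of_vanish A k (hloc k) u huk
    rw [hform] at hge
    nlinarith
  · -- use x = (-(w k)) • u + (u k) • w
    set a : ℝ := -(w k)
    set b : ℝ := u k
    have hform := quadform_eigen_combo A hA i j hij a b
    have hxk : (a • u + b • w) k = 0 := by
      simp only [Pi.add_apply, Pi.smul_apply, smul_eq_mul]
      ring
    have hge := quadform_nonneg_of_vanish A k (hloc k) _ hxk
    rw [hform] at hge
    have ha2 : a ^ 2 * hA.eigenvalues i ≤ 0 := by nlinarith [sq_nonneg a]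
    have hb2 : b ^ 2 * hA.eigenvalues j < 0 := by
      have : 0 < b ^ 2 := by positivity
      nlinarith
    linarith

/-- A matrix whose principal submatrices of size `n-1` are all PSD and whose determinant is
negative has exactly one negative eigenvalue; all other eigenvalues are nonnegative. -/
theorem one_negative_eigenvalue_of_locally_psd
    (n : ℕ) (hn : 2 ≤ n) (A : Matrix (Fin n) (Fin n) ℝ) (hA : A.IsHermitian)
    (hloc : ∀ i : Fin n,
      (A.submatrix (fun j : {j : Fin n // j ≠ i} => (j : Fin n))
        (fun j : {j : Fin n // j ≠ i} => (j : Fin n))).PosSemidef)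
    (hdet : A.det < 0) :
    ∃ i₀ : Fin n, hA.eigenvalues i₀ < 0 ∧ ∀ i : Fin n, i ≠ i₀ → 0 ≤ hA.eigenvalues i := by
  have hprod : (∏ i, hA.eigenvalues i) < 0 := by
    have h := hA.det_eq_prod_eigenvalues
    push_cast at h
    rw [h] at hdet
    exact_mod_cast hdet
  have hex : ∃ i₀ : Fin n, hA.eigenvalues i₀ < 0 := by
    by_contra hcon
    push_neg at hcon
    exact absurd (Finset.prod_nonneg fun i _ => hcon i) (not_le.mpr hprod)
  obtain ⟨i₀, hi₀⟩ := hex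
  refine ⟨i₀, hi₀, fun i hi => ?_⟩
  by_contra hcon
  push_neg at hcon
  exact not_two_negative hn A hA hloc i i₀ hi hcon hi₀
end

section
/- Let A be an n×n real symmetric matrix (n ≥ 2) such that every (n−1)×(n−1) principal submatrix of A is positive definite and det(A) < 0. Then A has exactly one negative eigenvalue, and all other eigenvalues are strictly positive. -/
open Matrix

private lemma aux_sum_subtype {n : ℕ} (k : Fin n) (g : Fin n → ℝ) (hg : g k = 0) :
    ∑ j : {j : Fin n // j ≠ k}, g j = ∑ j, g j := by
  rw [← Finset.sum_subtype (Finset.univ.erase k)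
    (fun x => by simp [Finset.mem_erase]) g]
  exact Finset.sum_erase _ hg

private lemma aux_pd {n : ℕ} (A : Matrix (Fin n) (Fin n) ℝ) (k : Fin n)
    (hk : (A.submatrix (fun j : {j : Fin n // j ≠ k} => (j : Fin n))
        (fun j : {j : Fin n // j ≠ k} => (j : Fin n))).PosDef)
    (x : Fin n → ℝ) (hx : x ≠ 0) (hxk : x k = 0) : 0 < x ⬝ᵥ (A *ᵥ x) := by
  set B := A.submatrix (fun j : {j : Fin n // j ≠ k} => (j : Fin n))
      (fun j : {j : Fin n // j ≠ k} => (j : Fin n)) with hB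
  set y : {j : Fin n // j ≠ k} → ℝ := fun j => x j with hy
  have hyne : y ≠ 0 := by
    obtain ⟨j, hj⟩ := Function.ne_iff.mp hx
    have hjk : j ≠ k := by rintro rfl; exact hj hxk
    intro h0
    exact hj (by simpa [hy] using congrFun h0 ⟨j, hjk⟩)
  have key := hk.dotProduct_mulVec_pos hyne
  have hstar : star y = y := funext fun j => rfl
  rw [hstar] at key
  have hmv : ∀ j : {j : Fin n // j ≠ k}, (B *ᵥ y) j = (A *ᵥ x) (j : Fin n) := by
    intro j
    show ∑ l : {j : Fin n // j ≠ k}, A j l * x l = ∑ l, A j l * x l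
    exact aux_sum_subtype k (fun l => A j l * x l) (by simp [hxk])
  have heq : y ⬝ᵥ (B *ᵥ y) = x ⬝ᵥ (A *ᵥ x) := by
    calc y ⬝ᵥ (B *ᵥ y) = ∑ j : {j : Fin n // j ≠ k}, x j * (A *ᵥ x) (j : Fin n) := by
          show ∑ j, y j * (B *ᵥ y) j = _
          exact Finset.sum_congr rfl fun j _ => congrArg (fun t => x j * t) (hmv j)
      _ = ∑ j, x j * (A *ᵥ x) j :=
          aux_sum_subtype k (fun j => x j * (A *ᵥ x) j) (by simp [hxk])
      _ = x ⬝ᵥ (A *ᵥ x) := rfl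
  linarith [key, heq.le, heq.ge]

/-- A matrix whose principal submatrices of size `n-1` are all PD and whose determinant is
negative has exactly one negative eigenvalue; all other eigenvalues are positive. -/
theorem one_negative_eigenvalue_of_locally_pd
    (n : ℕ) (hn : 2 ≤ n) (A : Matrix (Fin n) (Fin n) ℝ) (hA : A.IsHermitian)
    (hloc : ∀ i : Fin n,
      (A.submatrix (fun j : {j : Fin n // j ≠ i} => (j : Fin n))
        (fun j : {j : Fin n // j ≠ i} => (j : Fin n))).PosDef)
    (hdet : A.det < 0) :
    ∃ i₀ : Fin n, hA.eigenvalues i₀ < 0 ∧ ∀ i : Fin n, i ≠ i₀ → 0 < hA.eigenvalues i := by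
  set μ := hA.eigenvalues with hμ
  have hd : A.det = ∏ i, μ i := by simpa using hA.det_eq_prod_eigenvalues
  have hex : ∃ i, μ i < 0 := by
    by_contra h
    push_neg at h
    have : (0 : ℝ) ≤ ∏ i, μ i := Finset.prod_nonneg fun i _ => h i
    rw [hd] at hdet; linarith
  obtain ⟨i₀, hi₀⟩ := hex
  refine ⟨i₀, hi₀, ?_⟩
  intro i hi
  by_contra hle
  push_neg at hle
  -- the orthonormal eigenvectors
  set v : Fin n → (Fin n → ℝ) := fun j => ⇑(hA.eigenvectorBasis j) with hv
  have hAv : ∀ j, A *ᵥ v j = μ j • v j := fun j => hA.mulVec_eigenvectorBasis j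
  have hvv : ∀ j l : Fin n, v j ⬝ᵥ v l = if j = l then 1 else 0 := by
    intro j l
    have horth := hA.eigenvectorBasis.orthonormal
    rw [orthonormal_iff_ite] at horth
    have h := horth j l
    simpa [PiLp.inner_apply, RCLike.inner_apply, dotProduct, hv, mul_comm] using h
  have hquad : ∀ a b : ℝ, (a • v i₀ + b • v i) ⬝ᵥ (A *ᵥ (a • v i₀ + b • v i))
      = a ^ 2 * μ i₀ + b ^ 2 * μ i := by
    intro a b
    rw [mulVec_add, mulVec_smul, mulVec_smul, hAv, hAv]
    have h1 := hvv i₀ i₀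
    have h2 := hvv i₀ i
    have h3 := hvv i i₀
    have h4 := hvv i i
    rw [if_pos rfl] at h1 h4
    rw [if_neg (Ne.symm hi)] at h2
    rw [if_neg hi] at h3
    simp only [add_dotProduct, dotProduct_add, smul_dotProduct, dotProduct_smul,
      smul_eq_mul, h1, h2, h3, h4]
    ring
  set k : Fin n := ⟨0, by omega⟩ with hk
  by_cases hc : v i k = 0
  · -- use x = v i
    have hne : (0:ℝ) • v i₀ + (1:ℝ) • v i ≠ 0 := by
      have := hA.eigenvectorBasis.orthonormal.ne_zero i
      simp only [zero_smul, one_smul, zero_add]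
      intro h0
      exact this (by ext l; exact congrFun h0 l)
    have hpos := aux_pd A k (hloc k) _ hne (by simp [hc])
    rw [hquad 0 1] at hpos
    nlinarith
  · set b : ℝ := -(v i₀ k / v i k) with hb
    set x : Fin n → ℝ := (1:ℝ) • v i₀ + b • v i with hx
    have hxk : x k = 0 := by
      simp only [hx, Pi.add_apply, Pi.smul_apply, smul_eq_mul, one_mul, hb]
      field_simp
      ring
    have hxne : x ≠ 0 := by
      intro h0
      have hdx : x ⬝ᵥ v i₀ = 1 := by
        have h1 := hvv i₀ i₀
        have h3 := hvv i i₀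
        rw [if_pos rfl] at h1
        rw [if_neg hi] at h3
        simp only [hx, add_dotProduct, smul_dotProduct, smul_eq_mul, h1, h3]
        ring
      rw [h0] at hdx
      simp [dotProduct] at hdx
    have hpos := aux_pd A k (hloc k) x hxne hxk
    rw [hx, hquad 1 b] at hpos
    nlinarith [sq_nonneg b, mul_nonpos_of_nonneg_of_nonpos (sq_nonneg b) hle]
end

section
/- Let n ≥ 3 and let A be an n×n real symmetric matrix with all diagonal entries equal to 1, such that every (n−1)×(n−1) principal submatrix of A is positive definite and det(A) < 0. Then the smallest eigenvalue of A satisfies λ_min(A) > −1/(n−2). -/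
open Matrix Finset

/-- Auxiliary: a symmetric real matrix whose principal `(n-1)×(n-1)` submatrices are all
positive definite cannot have two distinct nonpositive eigenvalues. -/
theorem aux_no_two_nonpos (n : ℕ) (A : Matrix (Fin n) (Fin n) ℝ) (hA : A.IsHermitian)
    (hloc : ∀ i : Fin n,
      (A.submatrix (fun j : {j : Fin n // j ≠ i} => (j : Fin n))
        (fun j : {j : Fin n // j ≠ i} => (j : Fin n))).PosDef)
    (i j : Fin n) (hij : i ≠ j)
    (hi : hA.eigenvalues i ≤ 0) (hj : hA.eigenvalues j ≤ 0) : False := by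
  set a := hA.eigenvalues i with ha
  set b := hA.eigenvalues j with hb
  set u : Fin n → ℝ := ⇑(hA.eigenvectorBasis i) with hu
  set v : Fin n → ℝ := ⇑(hA.eigenvectorBasis j) with hv
  have horth := orthonormal_iff_ite.mp hA.eigenvectorBasis.orthonormal
  have huu : dotProduct u u = 1 := by
    have h := horth i i
    simp only [PiLp.inner_apply, RCLike.inner_apply, conj_trivial] at h
    simpa [dotProduct, mul_comm] using h
  have hvv : dotProduct v v = 1 := by
    have h := horth j j
    simp only [PiLp.inner_apply, RCLike.inner_apply, conj_trivial] at h
    simpa [dotProduct, mul_comm] using h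
  have huv : dotProduct u v = 0 := by
    have h := horth i j
    simp only [PiLp.inner_apply, RCLike.inner_apply, conj_trivial, if_neg hij] at h
    simpa [dotProduct, mul_comm] using h
  have hvu : dotProduct v u = 0 := by rwa [dotProduct_comm] at huv
  have hAu : A *ᵥ u = a • u := hA.mulVec_eigenvectorBasis i
  have hAv : A *ᵥ v = b • v := hA.mulVec_eigenvectorBasis j
  obtain ⟨k, hk⟩ : ∃ k, u k ≠ 0 := by
    by_contra h
    push_neg at h
    have : dotProduct u u = 0 := by simp [dotProduct, h]
    rw [huu] at this; norm_num at this
  set x : Fin n → ℝ := v k • u - u k • v with hx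
  have hxk : x k = 0 := by simp [hx]; ring
  have hAx : A *ᵥ x = (a * v k) • u - (b * u k) • v := by
    rw [hx, mulVec_sub, mulVec_smul, mulVec_smul, hAu, hAv, smul_smul, smul_smul]
    ring_nf
  have hquad : dotProduct x (A *ᵥ x) = a * (v k)^2 + b * (u k)^2 := by
    rw [hAx, hx, sub_dotProduct, dotProduct_sub, dotProduct_sub,
      smul_dotProduct, smul_dotProduct, smul_dotProduct, smul_dotProduct,
      dotProduct_smul, dotProduct_smul, dotProduct_smul, dotProduct_smul,
      huu, hvv, huv, hvu]
    simp only [smul_eq_mul]; ring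
  have hquad_le : dotProduct x (A *ᵥ x) ≤ 0 := by
    rw [hquad]
    have := sq_nonneg (v k); have := sq_nonneg (u k)
    nlinarith
  have hx0 : x ≠ 0 := by
    intro h
    have : dotProduct v x = -(u k) := by
      rw [hx, dotProduct_sub, dotProduct_smul, dotProduct_smul, hvu, hvv]
      simp only [smul_eq_mul]; ring
    rw [h, dotProduct_zero] at this
    exact hk (by linarith [this.symm])
  set y : {l : Fin n // l ≠ k} → ℝ := fun l => x l with hy
  have hsum : ∀ f : Fin n → ℝ, f k = 0 → ∑ l : {l : Fin n // l ≠ k}, f ↑l = ∑ l, f l := by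
    intro f hf
    rw [← Finset.sum_subtype (Finset.univ.erase k) (by simp) f,
      ← Finset.sum_erase_add Finset.univ f (Finset.mem_univ k), hf, add_zero]
  have hy0 : y ≠ 0 := by
    intro h
    apply hx0
    funext l
    by_cases hl : l = k
    · rw [hl, hxk]; rfl
    · have := congrFun h ⟨l, hl⟩
      simpa [hy] using this
  have hpos := (hloc k).dotProduct_mulVec_pos hy0
  have hstar : star y = y := by funext l; simp
  rw [hstar] at hpos
  have hBy : ∀ p : {l : Fin n // l ≠ k},
      ((A.submatrix (fun j : {j : Fin n // j ≠ k} => (j : Fin n))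
        (fun j : {j : Fin n // j ≠ k} => (j : Fin n))) *ᵥ y) p = (A *ᵥ x) ↑p := by
    intro p
    have := hsum (fun l => A ↑p l * x l) (by simp [hxk])
    simpa [Matrix.mulVec, dotProduct, hy] using this
  have heq : dotProduct y ((A.submatrix (fun j : {j : Fin n // j ≠ k} => (j : Fin n))
        (fun j : {j : Fin n // j ≠ k} => (j : Fin n))) *ᵥ y) = dotProduct x (A *ᵥ x) := by
    unfold dotProduct
    rw [Finset.sum_congr rfl (fun p _ => by rw [hBy p])]
    exact hsum (fun l => x l * (A *ᵥ x) l) (by simp [hxk])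
  rw [heq] at hpos
  linarith

/-- Lower bound on the smallest eigenvalue: every eigenvalue is greater than `-1/(n-2)`. -/
theorem eigenvalue_lower_bound
    (n : ℕ) (hn : 3 ≤ n) (A : Matrix (Fin n) (Fin n) ℝ) (hA : A.IsHermitian)
    (hdiag : ∀ i : Fin n, A i i = 1)
    (hloc : ∀ i : Fin n,
      (A.submatrix (fun j : {j : Fin n // j ≠ i} => (j : Fin n))
        (fun j : {j : Fin n // j ≠ i} => (j : Fin n))).PosDef)
    (hdet : A.det < 0) :
    ∀ i : Fin n, -(1 / ((n : ℝ) - 2)) < hA.eigenvalues i := by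
  obtain ⟨m, rfl⟩ : ∃ m, n = m + 1 := ⟨n - 1, by omega⟩
  set N : ℝ := ((m + 1 : ℕ) : ℝ) with hN
  have hn3 : (3 : ℝ) ≤ N := by rw [hN]; exact_mod_cast hn
  set ev := hA.eigenvalues with hev
  -- trace = sum of eigenvalues = N
  have hsum_ev : ∑ i, ev i = N := by
    have h1 : A.trace = ∑ i, ev i := by
      conv_lhs => rw [hA.spectral_theorem]
      rw [Unitary.conjStarAlgAut_apply, Matrix.trace_mul_cycle, Unitary.coe_star_mul_self, one_mul, trace_diagonal]
      simp [RCLike.ofReal_real_eq_id, hev]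
    have h2 : A.trace = N := by
      simp [Matrix.trace, Matrix.diag, hdiag, hN]
    rw [← h1, h2]
  -- product of eigenvalues = det < 0
  have hprod : ∏ i, ev i < 0 := by
    have : A.det = ∏ i, ev i := by
      simpa [RCLike.ofReal_real_eq_id] using hA.det_eq_prod_eigenvalues
    rwa [this] at hdet
  -- trace of adjugate is the (n-1)-st elementary symmetric polynomial, and it is positive
  have hadjtr : (adjugate A).trace = ∑ i, ∏ j ∈ Finset.univ.erase i, ev j := by
    conv_lhs => rw [hA.spectral_theorem]
    rw [Unitary.conjStarAlgAut_apply, adjugate_mul_distrib, adjugate_mul_distrib, ← mul_assoc, Matrix.trace_mul_cycle,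
      ← adjugate_mul_distrib, Unitary.coe_star_mul_self, adjugate_one, one_mul,
      adjugate_diagonal, trace_diagonal]
    simp [RCLike.ofReal_real_eq_id, hev]
  have hadj_pos : ∀ i, 0 < adjugate A i i := by
    intro i
    rw [adjugate_fin_succ_eq_det_submatrix]
    have he : (A.submatrix (fun j : {j : Fin (m+1) // j ≠ i} => (j : Fin (m+1)))
          (fun j : {j : Fin (m+1) // j ≠ i} => (j : Fin (m+1)))).submatrix
          (finSuccAboveEquiv i) (finSuccAboveEquiv i) = A.submatrix i.succAbove i.succAbove := by
      ext p q
      simp [finSuccAboveEquiv_apply]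
    have h2 : 0 < det (A.submatrix i.succAbove i.succAbove) := by
      rw [← he, det_submatrix_equiv_self]
      exact (hloc i).det_pos
    have h3 : ((-1 : ℝ)) ^ ((i : ℕ) + (i : ℕ)) = 1 := by
      rw [← two_mul, pow_mul]; norm_num
    rw [h3, one_mul]; exact h2
  have hE : 0 < ∑ i, ∏ j ∈ Finset.univ.erase i, ev j := by
    rw [← hadjtr, Matrix.trace]
    exact Finset.sum_pos (fun i _ => hadj_pos i) Finset.univ_nonempty
  -- at most one nonpositive eigenvalue
  have key := aux_no_two_nonpos (m + 1) A hA hloc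
  -- there is a negative eigenvalue
  obtain ⟨i₀, hi₀⟩ : ∃ i₀, ev i₀ < 0 := by
    by_contra h
    push_neg at h
    exact absurd (Finset.prod_nonneg fun i _ => h i) (not_le.mpr hprod)
  have hposj : ∀ j, j ≠ i₀ → 0 < ev j := by
    intro j hj
    by_contra h
    push_neg at h
    exact key j i₀ hj h hi₀.le
  -- now the main estimate for i₀
  set μ : ℝ := -ev i₀ with hμdef
  have hμ : 0 < μ := by simp [hμdef]; exact hi₀
  set S : Finset (Fin (m+1)) := Finset.univ.erase i₀ with hS
  have hPjpos : ∀ j ∈ S, 0 < ev j := fun j hj => hposj j (Finset.mem_erase.mp hj).1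
  set P : ℝ := ∏ j ∈ S, ev j with hP
  have hPpos : 0 < P := Finset.prod_pos hPjpos
  set T : ℝ := ∑ j ∈ S, (ev j)⁻¹ with hT
  have hTnn : 0 ≤ T := Finset.sum_nonneg fun j hj => (inv_nonneg.mpr (hPjpos j hj).le)
  have hcardR : (S.card : ℝ) = N - 1 := by
    rw [hS, Finset.card_erase_of_mem (Finset.mem_univ i₀)]
    simp [hN]
  have hsumS : ∑ j ∈ S, ev j = N + μ := by
    have h := Finset.sum_erase_add Finset.univ ev (Finset.mem_univ i₀)
    rw [hsum_ev] at h
    rw [hS]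
    have : ev i₀ = -μ := by rw [hμdef]; ring
    linarith [h]
  -- rearrange the elementary symmetric polynomial positivity
  have hterm : ∀ i ∈ S, ∏ j ∈ Finset.univ.erase i, ev j = -μ * (P * (ev i)⁻¹) := by
    intro i hi
    have hii₀ : i ≠ i₀ := (Finset.mem_erase.mp hi).1
    have h1 : i₀ ∈ Finset.univ.erase i := Finset.mem_erase.mpr ⟨hii₀.symm, Finset.mem_univ _⟩
    have h2 : ∏ j ∈ Finset.univ.erase i, ev j
        = ev i₀ * ∏ j ∈ (Finset.univ.erase i).erase i₀, ev j :=
      (Finset.mul_prod_erase _ _ h1).symm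
    have h3 : (Finset.univ.erase i).erase i₀ = S.erase i := by
      rw [hS, Finset.erase_right_comm]
    have h4 : ∏ j ∈ S.erase i, ev j = P * (ev i)⁻¹ := by
      have h5 := Finset.prod_erase_mul S ev hi
      field_simp [hP, (hPjpos i hi).ne'] at h5 ⊢
      linarith [h5]
    rw [h2, h3, h4]
    rw [show ev i₀ = -μ by rw [hμdef]; ring]
  have hE2 : 0 < P + ∑ i ∈ S, ∏ j ∈ Finset.univ.erase i, ev j := by
    have h := Finset.sum_erase_add Finset.univ
      (fun i => ∏ j ∈ Finset.univ.erase i, ev j) (Finset.mem_univ i₀)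
    have hfold : (∏ j ∈ Finset.univ.erase i₀, ev j) = P := by rw [hP, hS]
    linarith [hE, h, hfold]
  have hμT : μ * T < 1 := by
    have hsum2 : ∑ i ∈ S, ∏ j ∈ Finset.univ.erase i, ev j = -μ * (P * T) := by
      rw [Finset.sum_congr rfl hterm, hT]
      rw [Finset.mul_sum, Finset.mul_sum]
    rw [hsum2] at hE2
    nlinarith [hPpos, hE2]
  -- Cauchy-Schwarz
  have hCS : (N - 1)^2 ≤ (N + μ) * T := by
    have e1 : ∑ j ∈ S, Real.sqrt (ev j) * (Real.sqrt (ev j))⁻¹ = (S.card : ℝ) := by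
      rw [Finset.sum_congr rfl fun j hj =>
        mul_inv_cancel₀ (Real.sqrt_ne_zero'.mpr (hPjpos j hj))]
      simp
    have h := Finset.sum_mul_sq_le_sq_mul_sq S (fun j => Real.sqrt (ev j))
      (fun j => (Real.sqrt (ev j))⁻¹)
    rw [e1, hcardR] at h
    have e2 : ∑ j ∈ S, (Real.sqrt (ev j))^2 = N + μ := by
      rw [Finset.sum_congr rfl fun j hj => Real.sq_sqrt (hPjpos j hj).le, hsumS]
    have e3 : ∑ j ∈ S, ((Real.sqrt (ev j))⁻¹)^2 = T := by
      rw [Finset.sum_congr rfl fun j hj => by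
        rw [inv_pow, Real.sq_sqrt (hPjpos j hj).le], hT]
    rw [e2, e3] at h
    exact h
  have hNμ : 0 < N + μ := by linarith
  have hfin : μ * (N - 1)^2 < N + μ := by
    calc μ * (N - 1)^2 ≤ μ * ((N + μ) * T) := by
          exact mul_le_mul_of_nonneg_left hCS hμ.le
    _ = (N + μ) * (μ * T) := by ring
    _ < (N + μ) * 1 := by exact mul_lt_mul_of_pos_left hμT hNμ
    _ = N + μ := by ring
  have hμbound : μ < 1 / (N - 2) := by
    have hN2 : (0:ℝ) < N - 2 := by linarith
    rw [lt_div_iff₀ hN2]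
    nlinarith [hfin, hμ, hn3]
  -- conclude for all i
  intro i
  by_cases hcase : i = i₀
  · subst hcase
    rw [show ev i = -μ by rw [hμdef]; ring]
    rw [hN] at hμbound
    linarith
  · have h1 : 0 < ev i := hposj i hcase
    have h2 : (0:ℝ) < 1 / (N - 2) := by
      apply div_pos one_pos; linarith
    rw [hN] at h2
    linarith
end

section
/- Let n ≥ 3 and let A be an n×n real symmetric matrix with all diagonal entries equal to 1, such that every (n−1)×(n−1) principal submatrix of A is positive definite and det(A) < 0. Then det(A) > −(1/(n−2))·((n−1)/(n−2))^(n−1). -/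
open Matrix Finset

lemma quad_pos_of_zero_coord {n : ℕ} (A : Matrix (Fin n) (Fin n) ℝ) (i : Fin n)
    (h : (A.submatrix (fun j : {j : Fin n // j ≠ i} => (j : Fin n))
        (fun j : {j : Fin n // j ≠ i} => (j : Fin n))).PosDef)
    (x : Fin n → ℝ) (hxi : x i = 0) (hx : x ≠ 0) : 0 < x ⬝ᵥ A *ᵥ x := by
  set x' : {j : Fin n // j ≠ i} → ℝ := fun j => x j with hx'def
  have hx'0 : x' ≠ 0 := by
    obtain ⟨k, hk⟩ := Function.ne_iff.mp hx
    have hki : k ≠ i := by rintro rfl; simp [hxi] at hk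
    intro h0
    have := congrFun h0 ⟨k, hki⟩
    simp [hx'def] at this
    exact hk (by simpa using this)
  have hpos := h.dotProduct_mulVec_pos hx'0
  have hstar : star x' = x' := by ext j; simp
  rw [hstar] at hpos
  have hinner : ∀ j : Fin n, (∑ k : {j : Fin n // j ≠ i}, A j k * x k) = ∑ k, A j k * x k := by
    intro j
    rw [← Finset.sum_subtype (p := fun k => k ≠ i) (univ.erase i) (fun k => by simp)
      (fun k => A j k * x k)]
    exact Finset.sum_erase _ (by simp [hxi])
  have heq : x' ⬝ᵥ ((A.submatrix (fun j : {j : Fin n // j ≠ i} => (j : Fin n))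
      (fun j : {j : Fin n // j ≠ i} => (j : Fin n))) *ᵥ x') = x ⬝ᵥ A *ᵥ x := by
    simp only [dotProduct, Matrix.mulVec, Matrix.submatrix_apply, hx'def]
    calc (∑ j : {j : Fin n // j ≠ i}, x j * ∑ k : {j : Fin n // j ≠ i}, A j k * x k)
        = ∑ j : {j : Fin n // j ≠ i}, x j * ∑ k, A j k * x k := by
          refine Finset.sum_congr rfl fun j _ => by rw [hinner]
      _ = ∑ j ∈ univ.erase i, x j * ∑ k, A j k * x k := by
          rw [← Finset.sum_subtype (p := fun k => k ≠ i) (univ.erase i) (fun k => by simp)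
            (fun j => x j * ∑ k, A j k * x k)]
      _ = ∑ j, x j * ∑ k, A j k * x k := Finset.sum_erase _ (by simp [hxi])
  rw [← heq]
  exact hpos

lemma dot_symm {n : ℕ} (A : Matrix (Fin n) (Fin n) ℝ) (hA : A.IsHermitian) (u v : Fin n → ℝ) :
    u ⬝ᵥ A *ᵥ v = v ⬝ᵥ A *ᵥ u := by
  have hAs : ∀ j k, A j k = A k j := fun j k => by
    conv_lhs => rw [← hA]
    simp [Matrix.conjTranspose_apply]
  calc u ⬝ᵥ A *ᵥ v = ∑ j, ∑ k, u j * (A j k * v k) := by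
        simp [dotProduct, Matrix.mulVec, Finset.mul_sum]
    _ = ∑ k, ∑ j, v k * (A k j * u j) := by
        rw [Finset.sum_comm]
        exact Finset.sum_congr rfl fun k _ => Finset.sum_congr rfl fun j _ => by rw [hAs]; ring
    _ = v ⬝ᵥ A *ᵥ u := by simp [dotProduct, Matrix.mulVec, Finset.mul_sum]

lemma inv_diag_neg {n : ℕ} (A : Matrix (Fin n) (Fin n) ℝ) (hA : A.IsHermitian)
    (hloc : ∀ i : Fin n,
      (A.submatrix (fun j : {j : Fin n // j ≠ i} => (j : Fin n))
        (fun j : {j : Fin n // j ≠ i} => (j : Fin n))).PosDef)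
    (hdet : A.det < 0) (i : Fin n) : A⁻¹ i i < 0 := by
  have hdu : IsUnit A.det := isUnit_iff_ne_zero.mpr hdet.ne
  set y : Fin n → ℝ := A⁻¹ *ᵥ Pi.single i 1 with hy
  have hAy : A *ᵥ y = Pi.single i 1 := by
    rw [hy, Matrix.mulVec_mulVec, Matrix.mul_nonsing_inv _ hdu, Matrix.one_mulVec]
  have hyi : y i = A⁻¹ i i := by simp [hy, Matrix.mulVec_single]
  have hq : ∀ u : Fin n → ℝ, u ⬝ᵥ A *ᵥ y = u i := by
    intro u; rw [hAy]; simp [dotProduct_single]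
  -- y i ≠ 0
  have hyne : y i ≠ 0 := by
    intro h0
    have hy0 : y = 0 := by
      by_contra hy0
      have := quad_pos_of_zero_coord A i (hloc i) y h0 hy0
      rw [hq y, h0] at this
      exact lt_irrefl 0 this
    rw [hy0, Matrix.mulVec_zero] at hAy
    have := congrFun hAy i
    simp at this
  -- y i > 0 impossible
  rcases lt_or_gt_of_ne hyne with hneg | hpos
  · rwa [hyi] at hneg
  · exfalso
    have hPD : A.PosDef := by
      refine Matrix.PosDef.of_dotProduct_mulVec_pos hA fun z hz => ?_
    -- real: star z = z
      have hsz : star z = z := by ext j; simp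
      rw [hsz]
      set t : ℝ := z i / y i with ht
      set x : Fin n → ℝ := z - t • y with hx
      have hxi : x i = 0 := by
        simp [hx, ht]
        field_simp
        ring
      have hzx : z = x + t • y := by rw [hx]; abel
      have hexp : z ⬝ᵥ A *ᵥ z = x ⬝ᵥ A *ᵥ x + t ^ 2 * y i := by
        rw [hzx, Matrix.mulVec_add, Matrix.mulVec_smul, add_dotProduct,
          smul_dotProduct, dotProduct_add, dotProduct_smul,
          dotProduct_add, dotProduct_smul]
        rw [dot_symm A hA y x, hq x, hq y, hxi]
        simp only [smul_eq_mul]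
        ring
      rw [hexp]
      by_cases hx0 : x = 0
      · have htne : t ≠ 0 := by
          intro ht0
          apply hz
          rw [hzx, hx0, ht0, zero_smul, add_zero]
        have : x ⬝ᵥ A *ᵥ x = 0 := by rw [hx0]; simp
        rw [this, zero_add]
        positivity
      · have h1 := quad_pos_of_zero_coord A i (hloc i) x hxi hx0
        nlinarith [sq_nonneg t]
    exact absurd hPD.det_pos (by linarith)

lemma trace_eq_sum_eig {n : ℕ} (A : Matrix (Fin n) (Fin n) ℝ) (hA : A.IsHermitian) :
    A.trace = ∑ i, hA.eigenvalues i := by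
  conv_lhs => rw [hA.spectral_theorem, Unitary.conjStarAlgAut_apply]
  rw [Matrix.trace_mul_cycle, Unitary.coe_star_mul_self, Matrix.one_mul]
  simp [Matrix.trace_diagonal]

lemma trace_inv_eq {n : ℕ} (A : Matrix (Fin n) (Fin n) ℝ) (hA : A.IsHermitian) (hdet : A.det ≠ 0) :
    A⁻¹.trace = ∑ i, (hA.eigenvalues i)⁻¹ := by
  have hne : ∀ i, hA.eigenvalues i ≠ 0 := by
    intro i hi
    apply hdet
    rw [hA.det_eq_prod_eigenvalues]
    exact Finset.prod_eq_zero (Finset.mem_univ i) (by simpa using hi)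
  set U : Matrix (Fin n) (Fin n) ℝ := (hA.eigenvectorUnitary : Matrix (Fin n) (Fin n) ℝ) with hU
  set D : Matrix (Fin n) (Fin n) ℝ := diagonal (RCLike.ofReal ∘ hA.eigenvalues) with hD
  set D' : Matrix (Fin n) (Fin n) ℝ := diagonal (fun i => (hA.eigenvalues i)⁻¹) with hD'
  have hDD' : D * D' = 1 := by
    rw [hD, hD', Matrix.diagonal_mul_diagonal,
      show (fun i => (RCLike.ofReal ∘ hA.eigenvalues : Fin n → ℝ) i * (hA.eigenvalues i)⁻¹)
        = fun _ => (1:ℝ) from funext fun i => by simp [mul_inv_cancel₀ (hne i)],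
      Matrix.diagonal_one]
  have key : (U * D * star U) * (U * D' * star U) = 1 := by
    calc (U * D * star U) * (U * D' * star U)
        = U * D * (star U * U) * D' * star U := by
          simp only [Matrix.mul_assoc]
      _ = U * (D * D') * star U := by
          rw [Unitary.coe_star_mul_self]
          simp only [Matrix.mul_one, Matrix.mul_assoc]
      _ = 1 := by
          rw [hDD', Matrix.mul_one, hU]
          exact (Matrix.mem_unitaryGroup_iff).mp hA.eigenvectorUnitary.2
  have hinv : A⁻¹ = U * D' * star U := by
    apply Matrix.inv_eq_right_inv
    calc A * (U * D' * star U) = (U * D * star U) * (U * D' * star U) := by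
          exact congrArg (· * (U * D' * star U)) (hA.spectral_theorem.trans (Unitary.conjStarAlgAut_apply _ _))
      _ = 1 := key
  rw [hinv, Matrix.trace_mul_cycle, Unitary.coe_star_mul_self, Matrix.one_mul, hD',
    Matrix.trace_diagonal]

lemma not_two_nonpos {n : ℕ} (hn : 0 < n) (A : Matrix (Fin n) (Fin n) ℝ) (hA : A.IsHermitian)
    (hloc : ∀ i : Fin n,
      (A.submatrix (fun j : {j : Fin n // j ≠ i} => (j : Fin n))
        (fun j : {j : Fin n // j ≠ i} => (j : Fin n))).PosDef)
    (i j : Fin n) (hij : i ≠ j) (hi : hA.eigenvalues i ≤ 0) (hj : hA.eigenvalues j ≤ 0) :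
    False := by
  set k0 : Fin n := ⟨0, hn⟩
  set v : Fin n → ℝ := ⇑(hA.eigenvectorBasis i) with hv
  set w : Fin n → ℝ := ⇑(hA.eigenvectorBasis j) with hw
  have hdot : ∀ a b : Fin n,
      (⇑(hA.eigenvectorBasis a) : Fin n → ℝ) ⬝ᵥ ⇑(hA.eigenvectorBasis b)
        = if a = b then 1 else 0 := by
    intro a b
    have h1 := orthonormal_iff_ite.mp hA.eigenvectorBasis.orthonormal a b
    simpa [PiLp.inner_apply, RCLike.inner_apply, dotProduct, mul_comm] using h1
  obtain ⟨α, β, hne, hzero⟩ : ∃ α β : ℝ, ¬(α = 0 ∧ β = 0) ∧ α * v k0 + β * w k0 = 0 := by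
    by_cases h : v k0 = 0
    · exact ⟨1, 0, by simp, by simp [h]⟩
    · exact ⟨w k0, -v k0, fun hc => h (by simpa using hc.2), by ring⟩
  set x : Fin n → ℝ := α • v + β • w with hx
  have hxk0 : x k0 = 0 := by simpa [hx] using hzero
  have hxx : x ⬝ᵥ x = α ^ 2 + β ^ 2 := by
    simp only [hx, add_dotProduct, dotProduct_add, smul_dotProduct,
      dotProduct_smul, hv, hw, hdot, if_pos rfl, if_neg hij, if_neg hij.symm,
      smul_eq_mul]
    simp [if_neg hij, if_neg hij.symm]
    ring
  have hxne : x ≠ 0 := by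
    intro h0
    have h2 : α ^ 2 + β ^ 2 = 0 := by
      have h3 := hxx
      rw [h0] at h3
      simpa using h3.symm
    obtain ⟨hα2, hβ2⟩ := (add_eq_zero_iff_of_nonneg (sq_nonneg α) (sq_nonneg β)).mp h2
    exact hne ⟨sq_eq_zero_iff.mp hα2, sq_eq_zero_iff.mp hβ2⟩
  have hq : x ⬝ᵥ A *ᵥ x = α ^ 2 * hA.eigenvalues i + β ^ 2 * hA.eigenvalues j := by
    have hAx : A *ᵥ x = α • (hA.eigenvalues i • v) + β • (hA.eigenvalues j • w) := by
      rw [hx, Matrix.mulVec_add, Matrix.mulVec_smul, Matrix.mulVec_smul, hv, hw,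
        hA.mulVec_eigenvectorBasis, hA.mulVec_eigenvectorBasis]
    rw [hAx]
    simp only [hx, add_dotProduct, dotProduct_add, smul_dotProduct,
      dotProduct_smul, hv, hw, hdot, smul_eq_mul]
    simp [if_neg hij, if_neg hij.symm]
    ring
  have hpos := quad_pos_of_zero_coord A k0 (hloc k0) x hxk0 hxne
  rw [hq] at hpos
  nlinarith [mul_nonneg (sq_nonneg α) (neg_nonneg.mpr hi),
    mul_nonneg (sq_nonneg β) (neg_nonneg.mpr hj)]

lemma key_ineq (n : ℕ) (hn : 3 ≤ n) (μ : Fin n → ℝ)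
    (hsum : ∑ i, μ i = n) (hinvsum : ∑ i, (μ i)⁻¹ < 0)
    (i0 : Fin n) (hneg : μ i0 < 0) (hpos : ∀ j, j ≠ i0 → 0 < μ j) :
    ∏ i, μ i > -(1 / ((n : ℝ) - 2)) * (((n : ℝ) - 1) / ((n : ℝ) - 2)) ^ (n - 1) := by
  set N : ℝ := (n : ℝ) with hN
  have hN3 : (3 : ℝ) ≤ N := by
    have h : (3 : ℝ) ≤ (n : ℝ) := by exact_mod_cast hn
    exact h
  set T : Finset (Fin n) := univ.erase i0 with hT
  have hcard : T.card = n - 1 := by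
    rw [hT, Finset.card_erase_of_mem (Finset.mem_univ _), Finset.card_univ, Fintype.card_fin]
  have hcardR : ((n - 1 : ℕ) : ℝ) = N - 1 := by
    have : (1:ℕ) ≤ n := by omega
    push_cast [this]
    ring
  have hmemT : ∀ j, j ∈ T → 0 < μ j := fun j hj => hpos j (Finset.ne_of_mem_erase hj)
  set s : ℝ := -μ i0 with hs
  have hs0 : 0 < s := by simp [hs]; linarith
  set S : ℝ := ∑ j ∈ T, μ j with hSdef
  have hS : S = N + s := by
    have := Finset.add_sum_erase univ μ (Finset.mem_univ i0)
    rw [hsum] at this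
    rw [hSdef, hT]
    linarith [this]
  set H : ℝ := ∑ j ∈ T, (μ j)⁻¹ with hHdef
  have hH : H < s⁻¹ := by
    have := Finset.add_sum_erase univ (fun j => (μ j)⁻¹) (Finset.mem_univ i0)
    have h2 : (μ i0)⁻¹ + H = ∑ i, (μ i)⁻¹ := this
    have h3 : (μ i0)⁻¹ = -s⁻¹ := by rw [hs, inv_neg, neg_neg]
    have h4 : H < s⁻¹ := by
      rw [h3] at h2
      linarith [hinvsum, h2]
    exact h4
  have hSpos : 0 < S := by rw [hS]; linarith
  -- Cauchy-Schwarz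
  have hCS : ((N - 1)) ^ 2 ≤ S * H := by
    have := Finset.sum_sq_le_sum_mul_sum_of_sq_eq_mul T
      (r := fun _ => (1:ℝ)) (f := μ) (g := fun j => (μ j)⁻¹)
      (fun j hj => (hmemT j hj).le) (fun j hj => (inv_pos.mpr (hmemT j hj)).le)
      (fun j hj => by rw [one_pow, mul_inv_cancel₀ (hmemT j hj).ne'])
    simpa [Finset.sum_const, hcard, hcardR] using this
  -- bound on s
  have hsb : s < 1 / (N - 2) := by
    have h1 : S * H < S * s⁻¹ := by
      exact mul_lt_mul_of_pos_left hH hSpos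
    have h2 : (N - 1) ^ 2 < (N + s) * s⁻¹ := by
      rw [← hS]; linarith
    have h3 : (N - 1) ^ 2 * s < N + s := by
      have := mul_lt_mul_of_pos_right h2 hs0
      rwa [mul_assoc, inv_mul_cancel₀ hs0.ne', mul_one] at this
    rw [lt_div_iff₀ (by linarith)]
    nlinarith
  -- AM-GM
  set P : ℝ := ∏ j ∈ T, μ j with hPdef
  have hPpos : 0 < P := Finset.prod_pos hmemT
  have hAMGM : P ≤ (S / (N - 1)) ^ (n - 1) := by
    have hw : ∀ j ∈ T, (0:ℝ) ≤ (N - 1)⁻¹ := fun j _ => inv_nonneg.mpr (by linarith)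
    have hw' : ∑ j ∈ T, (N - 1)⁻¹ = 1 := by
      rw [Finset.sum_const, hcard, nsmul_eq_mul, hcardR]
      exact mul_inv_cancel₀ (ne_of_gt (by linarith))
    have hz : ∀ j ∈ T, (0:ℝ) ≤ μ j := fun j hj => (hmemT j hj).le
    have h1 := Real.geom_mean_le_arith_mean_weighted T (fun _ => (N - 1)⁻¹) μ hw hw' hz
    have h2 : ∏ j ∈ T, μ j ^ ((N - 1)⁻¹) = P ^ ((N - 1)⁻¹) :=
      Real.finset_prod_rpow T μ hz _
    rw [h2] at h1
    have h3 : ∑ j ∈ T, (N - 1)⁻¹ * μ j = S / (N - 1) := by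
      rw [← Finset.mul_sum, ← hSdef]
      ring
    rw [h3] at h1
    have hNn : (N - 1)⁻¹ = (((n - 1 : ℕ) : ℝ))⁻¹ := by rw [hcardR]
    have h4 : (P ^ ((N - 1)⁻¹)) ^ (n - 1) ≤ (S / (N - 1)) ^ (n - 1) :=
      pow_le_pow_left₀ (Real.rpow_nonneg hPpos.le _) h1 _
    rwa [hNn, Real.rpow_inv_natCast_pow hPpos.le (by omega)] at h4
  -- final assembly
  have hprod : ∏ i, μ i = -s * P := by
    rw [hPdef, hT, ← Finset.mul_prod_erase univ μ (Finset.mem_univ i0), hs]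
    ring
  have hbase : 0 ≤ S / (N - 1) := div_nonneg hSpos.le (by linarith)
  have hs2 : s * (N - 2) < 1 := by
    have h := hsb
    rw [lt_div_iff₀ (by linarith)] at h
    exact h
  have hbaselt : S / (N - 1) < (N - 1) / (N - 2) := by
    rw [div_lt_div_iff₀ (by linarith) (by linarith)]
    nlinarith [hs2, hS]
  have hpow : (S / (N - 1)) ^ (n - 1) < ((N - 1) / (N - 2)) ^ (n - 1) :=
    pow_lt_pow_left₀ hbaselt hbase (by omega)
  have hfin : s * P < (1 / (N - 2)) * ((N - 1) / (N - 2)) ^ (n - 1) := by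
    have h1 : s * P ≤ s * (S / (N - 1)) ^ (n - 1) :=
      mul_le_mul_of_nonneg_left hAMGM hs0.le
    have h2 : s * (S / (N - 1)) ^ (n - 1) < (1 / (N - 2)) * ((N - 1) / (N - 2)) ^ (n - 1) :=
      mul_lt_mul'' hsb hpow hs0.le (pow_nonneg hbase _)
    linarith
  rw [hprod]
  have : -(s * P) > -((1 / (N - 2)) * ((N - 1) / (N - 2)) ^ (n - 1)) := by linarith
  calc -s * P = -(s * P) := by ring
    _ > -((1 / (N - 2)) * ((N - 1) / (N - 2)) ^ (n - 1)) := this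
    _ = -(1 / (N - 2)) * ((N - 1) / (N - 2)) ^ (n - 1) := by ring

/-- Determinant lower bound for unit-diagonal `(n-1)`-locally positive definite matrices. -/
theorem det_lower_bound_unit_diagonal
    (n : ℕ) (hn : 3 ≤ n) (A : Matrix (Fin n) (Fin n) ℝ) (hA : A.IsHermitian)
    (hdiag : ∀ i : Fin n, A i i = 1)
    (hloc : ∀ i : Fin n,
      (A.submatrix (fun j : {j : Fin n // j ≠ i} => (j : Fin n))
        (fun j : {j : Fin n // j ≠ i} => (j : Fin n))).PosDef)
    (hdet : A.det < 0) :
    A.det > -(1 / ((n : ℝ) - 2)) * (((n : ℝ) - 1) / ((n : ℝ) - 2)) ^ (n - 1) := by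
  have hn0 : 0 < n := by omega
  set μ : Fin n → ℝ := hA.eigenvalues with hμ
  have hdetprod : A.det = ∏ i, μ i := by simpa using hA.det_eq_prod_eigenvalues
  have htrace : ∑ i, μ i = (n : ℝ) := by
    rw [← trace_eq_sum_eig A hA]
    have : A.trace = ∑ i, A i i := rfl
    rw [this]
    simp [hdiag]
  have hinvtr : ∑ i, (μ i)⁻¹ < 0 := by
    rw [← trace_inv_eq A hA hdet.ne]
    have h1 : A⁻¹.trace = ∑ i, A⁻¹ i i := rfl
    rw [h1]
    have h2 : ∑ i, A⁻¹ i i < ∑ _i : Fin n, (0:ℝ) :=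
      Finset.sum_lt_sum_of_nonempty (by have : Nonempty (Fin n) := ⟨⟨0, hn0⟩⟩; exact Finset.univ_nonempty)
        (fun i _ => inv_diag_neg A hA hloc hdet i)
    simpa using h2
  have hprodneg : ∏ i, μ i < 0 := by rw [← hdetprod]; exact hdet
  obtain ⟨i0, hi0⟩ : ∃ i0, μ i0 < 0 := by
    by_contra h
    push_neg at h
    exact absurd (Finset.prod_nonneg fun i _ => h i) (not_le.mpr hprodneg)
  have hpos : ∀ j, j ≠ i0 → 0 < μ j := by
    intro j hj
    by_contra h
    push_neg at h
    exact not_two_nonpos hn0 A hA hloc j i0 hj h hi0.le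
  rw [hdetprod]
  exact key_ineq n hn μ htrace hinvtr i0 hi0 hpos
end

section
/- (Extended Hadamard inequality) Let n ≥ 3 and let A = (a_{ij}) be an n×n real symmetric matrix such that every (n−1)×(n−1) principal submatrix of A is positive semidefinite and det(A) < 0. Then det(A) ≥ −(1/(n−2))·((n−1)/(n−2))^(n−1) · a_{11}·a_{22}···a_{nn}. -/
open Matrix Finset

lemma quad_nonneg_of_zero {n : ℕ} {B : Matrix (Fin n) (Fin n) ℝ} {i : Fin n}
    (h : (B.submatrix (fun j : {j : Fin n // j ≠ i} => (j : Fin n))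
        (fun j : {j : Fin n // j ≠ i} => (j : Fin n))).PosSemidef)
    (x : Fin n → ℝ) (hx : x i = 0) : 0 ≤ x ⬝ᵥ B *ᵥ x := by
  have h2 := h.dotProduct_mulVec_nonneg (fun j => x j)
  simp only [star_trivial] at h2
  have key : (fun j : {j : Fin n // j ≠ i} => x j) ⬝ᵥ
      (B.submatrix (fun j : {j : Fin n // j ≠ i} => (j : Fin n))
        (fun j : {j : Fin n // j ≠ i} => (j : Fin n))) *ᵥ (fun j => x j)
      = x ⬝ᵥ B *ᵥ x := by
    have inner : ∀ j : Fin n, (∑ k : {j : Fin n // j ≠ i}, B j k * x k) = ∑ k, B j k * x k := by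
      intro j
      rw [← Finset.sum_subtype (Finset.univ.erase i)
        (fun k => by simp [Finset.mem_erase]) (fun k => B j k * x k)]
      exact Finset.sum_erase _ (by simp [hx])
    simp only [dotProduct, mulVec, submatrix_apply]
    calc (∑ j : {j : Fin n // j ≠ i}, x j * ∑ k : {j : Fin n // j ≠ i}, B j k * x k)
        = ∑ j : {j : Fin n // j ≠ i}, x j * ∑ k, B (j : Fin n) k * x k := by
          exact Finset.sum_congr rfl fun j _ => by rw [inner]
      _ = ∑ j ∈ Finset.univ.erase i, x j * ∑ k, B j k * x k := by
          rw [← Finset.sum_subtype (Finset.univ.erase i)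
            (fun k => by simp [Finset.mem_erase]) (fun j => x j * ∑ k, B j k * x k)]
      _ = ∑ j, x j * ∑ k, B j k * x k := Finset.sum_erase _ (by simp [hx])
  rwa [key] at h2


lemma psd_diag_nonneg {ι : Type*} [Fintype ι] [DecidableEq ι] {M : Matrix ι ι ℝ}
    (h : M.PosSemidef) (a : ι) : 0 ≤ M a a := by
  have := h.dotProduct_mulVec_nonneg (Pi.single a 1)
  simpa [dotProduct, mulVec, Pi.single_apply] using this

lemma psd_off_diag_zero {ι : Type*} [Fintype ι] [DecidableEq ι] {M : Matrix ι ι ℝ}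
    (h : M.PosSemidef) {a b : ι} (hab : a ≠ b) (ha : M a a = 0) : M a b = 0 := by
  by_contra hc
  set c := M a b with hcdef
  have hba : M b a = c := by
    simpa using h.1.apply a b
  set t : ℝ := -(M b b + 1) / (2 * c) with htdef

  set x : ι → ℝ := t • (Pi.single a 1 : ι → ℝ) + Pi.single b 1 with hxdef
  have hx : ∀ j, x j = t * (Pi.single a 1 : ι → ℝ) j + (Pi.single b 1 : ι → ℝ) j :=
    fun j => rfl
  have hform := h.dotProduct_mulVec_nonneg x
  have key : x ⬝ᵥ M *ᵥ x = 2 * t * c + M b b := by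
    show (∑ j, x j * ∑ k, M j k * x k) = _
    simp only [dotProduct, mulVec, hx, Pi.single_apply]
    simp only [mul_ite, mul_one, mul_zero, ite_mul, zero_mul, one_mul,
      Finset.sum_add_distrib, Finset.mul_sum, Finset.sum_ite_eq', Finset.mem_univ, if_true]
    simp only [add_mul, mul_add, ite_mul, mul_ite, mul_zero, zero_mul, zero_add, add_zero,
      one_mul, mul_one, Finset.sum_add_distrib, Finset.sum_ite_eq', Finset.mem_univ, if_true]
    rw [ha, hba, ← hcdef]
    ring
  rw [star_trivial, key] at hform
  have h2tc : 2 * t * c = -(M b b + 1) := by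
    rw [htdef]; field_simp
  rw [h2tc] at hform
  linarith


lemma det_nonneg_of_posSemidef {n : ℕ} {B : Matrix (Fin n) (Fin n) ℝ} (h : B.PosSemidef) :
    0 ≤ B.det := by
  rw [h.1.det_eq_prod_eigenvalues]
  exact Finset.prod_nonneg fun i _ => h.eigenvalues_nonneg i

lemma inv_diag_nonpos {n : ℕ} {B : Matrix (Fin n) (Fin n) ℝ} (hB : B.IsHermitian)
    (hq : ∀ (i : Fin n) (x : Fin n → ℝ), x i = 0 → 0 ≤ x ⬝ᵥ B *ᵥ x)
    (hd : B.det < 0) (i : Fin n) : B⁻¹ i i ≤ 0 := by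
  by_contra hpos
  push_neg at hpos
  set v : Fin n → ℝ := fun j => B⁻¹ j i with hv
  have hBv : B *ᵥ v = fun j => if j = i then 1 else 0 := by
    have h1 : B * B⁻¹ = 1 := Matrix.mul_nonsing_inv _ (isUnit_iff_ne_zero.2 hd.ne)
    funext j
    have := congrFun (congrFun h1 j) i
    simpa [Matrix.mul_apply, mulVec, dotProduct, Matrix.one_apply, hv] using this
  have hvBv : v ⬝ᵥ B *ᵥ v = v i := by
    rw [hBv]; simp [dotProduct, mul_ite]
  have hsym : ∀ y : Fin n → ℝ, v ⬝ᵥ B *ᵥ y = y i := by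
    intro y
    rw [Matrix.dotProduct_mulVec, ← Matrix.mulVec_transpose]
    have ht : Bᵀ = B := by
      have := hB; rwa [Matrix.IsHermitian, conjTranspose_eq_transpose_of_trivial] at this
    rw [ht, hBv]
    simp [dotProduct, ite_mul]
  have hPSD : B.PosSemidef := by
    refine PosSemidef.of_dotProduct_mulVec_nonneg hB fun x => ?_
    simp only [star_trivial]
    set t : ℝ := x i / v i with htdef
    set y : Fin n → ℝ := x - t • v with hy
    have hvne : v i ≠ 0 := ne_of_gt hpos
    have hyi : y i = 0 := by
      have hc : (x i / v i) * v i = x i := div_mul_cancel₀ _ hvne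
      simp only [hy, Pi.sub_apply, Pi.smul_apply, smul_eq_mul, htdef, hc, sub_self]
    have hx : x = y + t • v := by simp [hy]
    have expand : x ⬝ᵥ B *ᵥ x = y ⬝ᵥ B *ᵥ y + t * (y ⬝ᵥ B *ᵥ v) + (t * (v ⬝ᵥ B *ᵥ y)
        + t * t * (v ⬝ᵥ B *ᵥ v)) := by
      rw [hx]
      simp only [Matrix.mulVec_add, Matrix.mulVec_smul, dotProduct_add, add_dotProduct,
        dotProduct_smul, smul_dotProduct, smul_eq_mul]
      ring
    have hyv : y ⬝ᵥ B *ᵥ v = 0 := by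
      rw [hBv]; simp [dotProduct, mul_ite, hyi]
    have hvy : v ⬝ᵥ B *ᵥ y = 0 := by rw [hsym y, hyi]
    rw [expand, hyv, hvy, hvBv]
    have := hq i y hyi
    nlinarith [hpos]
  exact absurd (det_nonneg_of_posSemidef hPSD) (not_le.2 hd)


variable {n : ℕ} {B : Matrix (Fin n) (Fin n) ℝ}

lemma trace_eq_sum_eig_s5 (hB : B.IsHermitian) : B.trace = ∑ i, hB.eigenvalues i := by
  conv_lhs => rw [hB.spectral_theorem, Unitary.conjStarAlgAut_apply]
  rw [Matrix.trace_mul_comm, ← Matrix.mul_assoc]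
  have h1 : (star (hB.eigenvectorUnitary : Matrix (Fin n) (Fin n) ℝ)) *
      (hB.eigenvectorUnitary : Matrix (Fin n) (Fin n) ℝ) = 1 :=
    Matrix.mem_unitaryGroup_iff'.mp hB.eigenvectorUnitary.2
  rw [h1, Matrix.one_mul]
  simp [Matrix.trace_diagonal, RCLike.ofReal_real_eq_id]

lemma trace_inv_eq_sum_inv_eig (hB : B.IsHermitian) (hd : B.det ≠ 0) :
    B⁻¹.trace = ∑ i, (hB.eigenvalues i)⁻¹ := by
  have hμ : ∀ i, hB.eigenvalues i ≠ 0 := by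
    intro i hiz
    apply hd
    rw [hB.det_eq_prod_eigenvalues]
    exact Finset.prod_eq_zero (Finset.mem_univ i) (by simp [hiz])
  set U : Matrix (Fin n) (Fin n) ℝ := (hB.eigenvectorUnitary : Matrix (Fin n) (Fin n) ℝ) with hU
  have h1 : star U * U = 1 := Matrix.mem_unitaryGroup_iff'.mp hB.eigenvectorUnitary.2
  have h2 : U * star U = 1 := Matrix.mem_unitaryGroup_iff.mp hB.eigenvectorUnitary.2
  set C : Matrix (Fin n) (Fin n) ℝ :=
    U * Matrix.diagonal (fun i => (hB.eigenvalues i)⁻¹) * star U with hC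
  have hBC : B * C = 1 := by
    conv_lhs => rw [hB.spectral_theorem]
    have : Matrix.diagonal (RCLike.ofReal ∘ hB.eigenvalues) =
        Matrix.diagonal hB.eigenvalues := by simp [RCLike.ofReal_real_eq_id]
    rw [this, hC]
    calc U * Matrix.diagonal hB.eigenvalues * star U *
          (U * Matrix.diagonal (fun i => (hB.eigenvalues i)⁻¹) * star U)
        = U * Matrix.diagonal hB.eigenvalues * (star U * U) *
          Matrix.diagonal (fun i => (hB.eigenvalues i)⁻¹) * star U := by
          simp only [Matrix.mul_assoc]
      _ = U * (Matrix.diagonal hB.eigenvalues *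
          Matrix.diagonal (fun i => (hB.eigenvalues i)⁻¹)) * star U := by
          rw [h1]; simp only [Matrix.mul_one, Matrix.mul_assoc]
      _ = 1 := by
          rw [Matrix.diagonal_mul_diagonal]
          have : (fun i => hB.eigenvalues i * (hB.eigenvalues i)⁻¹) = fun _ => (1:ℝ) := by
            funext i; exact mul_inv_cancel₀ (hμ i)
          rw [this, Matrix.diagonal_one, Matrix.mul_one, h2]
  rw [Matrix.inv_eq_right_inv hBC, hC, Matrix.trace_mul_comm, ← Matrix.mul_assoc, h1,
    Matrix.one_mul, Matrix.trace_diagonal]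


variable {n : ℕ} {B : Matrix (Fin n) (Fin n) ℝ}

lemma neg_eig_unique (hB : B.IsHermitian) {i₀ : Fin n}
    (hq : ∀ x : Fin n → ℝ, x i₀ = 0 → 0 ≤ x ⬝ᵥ B *ᵥ x)
    {j k : Fin n} (hj : hB.eigenvalues j < 0) (hk : hB.eigenvalues k < 0) : j = k := by
  by_contra hne
  set u : Fin n → ℝ := ⇑(hB.eigenvectorBasis j) with hudef
  set w : Fin n → ℝ := ⇑(hB.eigenvectorBasis k) with hwdef
  have hu : B *ᵥ u = hB.eigenvalues j • u := hB.mulVec_eigenvectorBasis j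
  have hw : B *ᵥ w = hB.eigenvalues k • w := hB.mulVec_eigenvectorBasis k
  have horth := hB.eigenvectorBasis.orthonormal
  rw [orthonormal_iff_ite] at horth
  have huu : u ⬝ᵥ u = 1 := by
    have := horth j j
    rw [if_pos rfl, PiLp.inner_apply] at this
    rw [← this]; simp [dotProduct, hudef, mul_comm, sq]
  have hww : w ⬝ᵥ w = 1 := by
    have := horth k k
    rw [if_pos rfl, PiLp.inner_apply] at this
    rw [← this]; simp [dotProduct, hwdef, mul_comm, sq]
  have huw : u ⬝ᵥ w = 0 := by
    have := horth j k
    rw [if_neg hne, PiLp.inner_apply] at this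
    simpa [dotProduct, hudef, hwdef, mul_comm] using this
  have hwu : w ⬝ᵥ u = 0 := by rwa [dotProduct_comm] at huw
  by_cases hui : u i₀ = 0
  · have h0 := hq u hui
    rw [hu] at h0
    simp only [dotProduct_smul, smul_eq_mul, huu, mul_one] at h0
    exact absurd h0 (not_le.2 hj)
  · set z : Fin n → ℝ := (u i₀) • w - (w i₀) • u with hz
    have hzi : z i₀ = 0 := by simp [hz]; ring
    have h0 := hq z hzi
    have hform : z ⬝ᵥ B *ᵥ z
        = (u i₀)^2 * hB.eigenvalues k + (w i₀)^2 * hB.eigenvalues j := by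
      rw [hz]
      simp only [Matrix.mulVec_sub, Matrix.mulVec_smul, hu, hw, sub_dotProduct,
        smul_dotProduct, dotProduct_smul, dotProduct_sub, smul_eq_mul, huu, hww, huw, hwu]
      ring
    rw [hform] at h0
    have h1 : 0 < (u i₀)^2 := pow_pos (abs_pos.mpr hui) 2 |>.trans_le (by rw [sq_abs])
    nlinarith [sq_nonneg (w i₀)]



lemma diag_pos {n : ℕ} (hn : 3 ≤ n) {A : Matrix (Fin n) (Fin n) ℝ}
    (hloc : ∀ i : Fin n,
      (A.submatrix (fun j : {j : Fin n // j ≠ i} => (j : Fin n))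
        (fun j : {j : Fin n // j ≠ i} => (j : Fin n))).PosSemidef)
    (hdet : A.det < 0) (i : Fin n) : 0 < A i i := by
  have h01 : (⟨0, by omega⟩ : Fin n) ≠ ⟨1, by omega⟩ := by
    intro h; exact absurd (congrArg Fin.val h) (by simp)
  obtain ⟨j, hij⟩ : ∃ j : Fin n, i ≠ j := by
    by_cases h : i = ⟨0, by omega⟩
    · exact ⟨⟨1, by omega⟩, h ▸ h01⟩
    · exact ⟨⟨0, by omega⟩, h⟩
  have hnonneg : 0 ≤ A i i := by
    have := psd_diag_nonneg (hloc j) ⟨i, hij⟩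
    simpa using this
  rcases hnonneg.lt_or_eq with h | h
  · exact h
  · exfalso
    have hrow : ∀ jj, A i jj = 0 := by
      intro jj
      by_cases hjji : jj = i
      · rw [hjji, ← h]
      · obtain ⟨k, hk⟩ : (({i, jj} : Finset (Fin n))ᶜ).Nonempty := by
          rw [← Finset.card_pos, Finset.card_compl]
          have h2 := Finset.card_insert_le i ({jj} : Finset (Fin n))
          simp only [Finset.card_singleton, Fintype.card_fin] at h2 ⊢
          omega
        simp only [Finset.mem_compl, Finset.mem_insert, Finset.mem_singleton, not_or] at hk
        obtain ⟨hki, hkjj⟩ : k ≠ i ∧ k ≠ jj := hk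
        have hik : i ≠ k := hki.symm
        have hjjk : jj ≠ k := hkjj.symm
        have hab : (⟨i, hik⟩ : {j : Fin n // j ≠ k}) ≠ ⟨jj, hjjk⟩ := by
          intro hcon
          exact (hjji (congrArg Subtype.val hcon).symm)
        have := psd_off_diag_zero (hloc k) hab (by simpa using h.symm)
        simpa using this
    exact absurd (Matrix.det_eq_zero_of_row_eq_zero i hrow) (by exact ne_of_lt hdet)


lemma scalar_bound {n : ℕ} (hn : 3 ≤ n) (μ : Fin n → ℝ) (i₀ : Fin n)
    (hneg : μ i₀ < 0) (hpos : ∀ k, k ≠ i₀ → 0 < μ k)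
    (hsum : ∑ i, μ i = (n : ℝ))
    (hinv : ∑ i, (μ i)⁻¹ ≤ 0) :
    -(1 / ((n:ℝ) - 2)) * (((n:ℝ) - 1) / ((n:ℝ) - 2)) ^ (n - 1) ≤ ∏ i, μ i := by
  set N : ℝ := (n : ℝ) with hNdef
  have hN : (3:ℝ) ≤ N := by rw [hNdef]; exact_mod_cast hn
  set s : Finset (Fin n) := Finset.univ.erase i₀ with hs
  have hcard : s.card = n - 1 := by
    rw [hs, Finset.card_erase_of_mem (Finset.mem_univ _), Finset.card_univ, Fintype.card_fin]
  have hcardR : (s.card : ℝ) = N - 1 := by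
    rw [hcard]; push_cast [Nat.cast_sub (by omega : 1 ≤ n)]; ring
  set m : ℝ := -μ i₀ with hm
  have hm_pos : 0 < m := by simp [hm]; linarith
  have hs_pos : ∀ i ∈ s, 0 < μ i := fun i hi => hpos i (Finset.ne_of_mem_erase hi)
  have hsum_s : ∑ i ∈ s, μ i = N + m := by
    have := Finset.sum_erase_add Finset.univ μ (Finset.mem_univ i₀)
    rw [hsum] at this; rw [hs]; linarith
  have hinv_s : ∑ i ∈ s, (μ i)⁻¹ ≤ 1 / m := by
    have h1 : ∑ i ∈ Finset.univ.erase i₀, (μ i)⁻¹ + (μ i₀)⁻¹ = ∑ i, (μ i)⁻¹ :=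
      Finset.sum_erase_add _ _ (Finset.mem_univ i₀)
    have h2 : (μ i₀)⁻¹ = -(1/m) := by rw [hm]; field_simp
    rw [← h1, h2] at hinv
    rw [hs]; linarith
  -- Cauchy-Schwarz (AM-HM)
  have hCS : (N - 1)^2 ≤ (N + m) * ∑ i ∈ s, (μ i)⁻¹ := by
    have h := Finset.sum_mul_sq_le_sq_mul_sq s (fun i => Real.sqrt (μ i))
      (fun i => (Real.sqrt (μ i))⁻¹)
    have h1 : ∑ i ∈ s, Real.sqrt (μ i) * (Real.sqrt (μ i))⁻¹ = N - 1 := by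
    

      have heq : ∀ i ∈ s, Real.sqrt (μ i) * (Real.sqrt (μ i))⁻¹ = 1 := fun i hi =>
        mul_inv_cancel₀ (ne_of_gt (Real.sqrt_pos.2 (hs_pos i hi)))
      rw [Finset.sum_congr rfl heq, Finset.sum_const, nsmul_eq_mul, mul_one, hcardR]
    have h2 : ∑ i ∈ s, (Real.sqrt (μ i))^2 = N + m := by
      rw [Finset.sum_congr rfl (fun i hi => Real.sq_sqrt (hs_pos i hi).le), hsum_s]
    have h3 : ∑ i ∈ s, ((Real.sqrt (μ i))⁻¹)^2 = ∑ i ∈ s, (μ i)⁻¹ := by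
      refine Finset.sum_congr rfl (fun i hi => ?_)
      rw [inv_pow, Real.sq_sqrt (hs_pos i hi).le]
    rw [h1, h2, h3] at h
    exact h
  have hmb : m * (N - 2) ≤ 1 := by
    have hNm : (0:ℝ) < N + m := by linarith
    have h1 : (N - 1)^2 ≤ (N + m) * (1 / m) :=
      hCS.trans (mul_le_mul_of_nonneg_left hinv_s hNm.le)
    have h2 : (N - 1)^2 * m ≤ N + m := by
      have := mul_le_mul_of_nonneg_right h1 hm_pos.le
      calc (N - 1)^2 * m ≤ (N + m) * (1 / m) * m := this
        _ = N + m := by field_simp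
    nlinarith
  have hmle : m ≤ 1 / (N - 2) := by
    rw [le_div_iff₀ (by linarith : (0:ℝ) < N - 2)]
    exact hmb
  -- AM-GM
  set p : ℝ := ∏ i ∈ s, μ i with hp
  have hp_pos : 0 < p := Finset.prod_pos hs_pos
  set R : ℝ := (N + m) / (N - 1) with hR
  have hR_pos : 0 < R := by
    apply div_pos (by linarith) (by linarith)
  have hgm : p ^ ((1:ℝ)/(N-1)) ≤ R := by
    have h := Real.geom_mean_le_arith_mean_weighted s (fun _ => 1/(N-1)) μ
      (fun i _ => one_div_nonneg.2 (by linarith)) (by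
        rw [Finset.sum_const, nsmul_eq_mul, hcardR, mul_one_div,
          div_self (by linarith : N - 1 ≠ 0)])
      (fun i hi => (hs_pos i hi).le)
    rw [Real.finset_prod_rpow s μ (fun i hi => (hs_pos i hi).le)] at h
    refine h.trans ?_
    rw [← Finset.mul_sum, hsum_s, hR]
    ring_nf
    exact le_refl _
  have hpR : p ≤ R ^ (n - 1) := by
    have e1 : p = (p ^ ((1:ℝ)/(N-1))) ^ ((N-1:ℝ)) := by
      rw [← Real.rpow_mul hp_pos.le, one_div, inv_mul_cancel₀ (by linarith : N - 1 ≠ 0),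
        Real.rpow_one]
    have e2 : (p ^ ((1:ℝ)/(N-1))) ^ ((N-1:ℝ)) ≤ R ^ ((N-1:ℝ)) :=
      Real.rpow_le_rpow (Real.rpow_nonneg hp_pos.le _) hgm (by linarith)
    have e3 : ((n-1:ℕ):ℝ) = N - 1 := by
      push_cast [Nat.cast_sub (by omega : 1 ≤ n)]; ring
    have e4 : R ^ ((N-1:ℝ)) = R ^ (n-1) := by
      rw [← e3, Real.rpow_natCast]
    calc p = (p ^ ((1:ℝ)/(N-1))) ^ ((N-1:ℝ)) := e1
      _ ≤ R ^ ((N-1:ℝ)) := e2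
      _ = R ^ (n-1) := e4
  have hRQ : R ≤ (N-1)/(N-2) := by
    rw [hR, div_le_div_iff₀ (by linarith) (by linarith)]
    nlinarith [hmb]
  have hfin : m * p ≤ (1/(N-2)) * ((N-1)/(N-2))^(n-1) := by
    calc m * p ≤ m * R ^ (n-1) := mul_le_mul_of_nonneg_left hpR hm_pos.le
      _ ≤ (1/(N-2)) * ((N-1)/(N-2))^(n-1) := by
          exact mul_le_mul hmle (pow_le_pow_left₀ hR_pos.le hRQ _)
            (pow_nonneg hR_pos.le _) (one_div_nonneg.2 (by linarith))
  have hprod : ∏ i, μ i = -m * p := by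
    rw [hm, hp, hs, neg_neg, ← Finset.mul_prod_erase Finset.univ μ (Finset.mem_univ i₀)]
  rw [hprod]
  nlinarith [hfin]


/-- Extended Hadamard inequality for `(n-1)`-locally positive semidefinite matrices. -/
theorem extended_hadamard
    (n : ℕ) (hn : 3 ≤ n) (A : Matrix (Fin n) (Fin n) ℝ) (hA : A.IsHermitian)
    (hloc : ∀ i : Fin n,
      (A.submatrix (fun j : {j : Fin n // j ≠ i} => (j : Fin n))
        (fun j : {j : Fin n // j ≠ i} => (j : Fin n))).PosSemidef)
    (hdet : A.det < 0) :
    A.det ≥ -(1 / ((n : ℝ) - 2)) * (((n : ℝ) - 1) / ((n : ℝ) - 2)) ^ (n - 1) *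
      ∏ i : Fin n, A i i := by
  have hdiag : ∀ i, 0 < A i i := diag_pos hn hloc hdet
  have hAs : ∀ i j, A j i = A i j := fun i j => by simpa using hA.apply i j
  set c : Fin n → ℝ := fun i => (Real.sqrt (A i i))⁻¹ with hc
  have hcpos : ∀ i, 0 < c i := fun i => inv_pos.2 (Real.sqrt_pos.2 (hdiag i))
  set B : Matrix (Fin n) (Fin n) ℝ := Matrix.diagonal c * A * Matrix.diagonal c with hB
  have hBapp : ∀ i j, B i j = c i * A i j * c j := by
    intro i j
    rw [hB, Matrix.mul_diagonal, Matrix.diagonal_mul]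
  have hone : ∀ i, c i * A i i * c i = 1 := by
    intro i
    have h1 : Real.sqrt (A i i) * Real.sqrt (A i i) = A i i :=
      Real.mul_self_sqrt (hdiag i).le
    have hne : Real.sqrt (A i i) ≠ 0 := (Real.sqrt_pos.2 (hdiag i)).ne'
    rw [hc]
    field_simp
    rw [sq, h1]
  have hBdiag : ∀ i, B i i = 1 := fun i => by rw [hBapp]; exact hone i
  have hBherm : B.IsHermitian := by
    show Bᴴ = B
    ext i j
    rw [Matrix.conjTranspose_apply, star_trivial, hBapp, hBapp, hAs]
    ring
  have hBsub : ∀ i : Fin n,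
      (B.submatrix (fun j : {j : Fin n // j ≠ i} => (j : Fin n))
        (fun j : {j : Fin n // j ≠ i} => (j : Fin n))).PosSemidef := by
    intro i
    have h2 := (hloc i).mul_mul_conjTranspose_same
      (Matrix.diagonal (fun j : {j : Fin n // j ≠ i} => c j))
    have hDh : (Matrix.diagonal (fun j : {j : Fin n // j ≠ i} => c j))ᴴ
        = Matrix.diagonal (fun j : {j : Fin n // j ≠ i} => c j) := by
      rw [Matrix.diagonal_conjTranspose]
      congr
    rw [hDh] at h2
    have h1 : B.submatrix (fun j : {j : Fin n // j ≠ i} => (j : Fin n))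
        (fun j : {j : Fin n // j ≠ i} => (j : Fin n))
        = Matrix.diagonal (fun j : {j : Fin n // j ≠ i} => c j) *
          (A.submatrix (fun j : {j : Fin n // j ≠ i} => (j : Fin n))
            (fun j : {j : Fin n // j ≠ i} => (j : Fin n))) *
          Matrix.diagonal (fun j : {j : Fin n // j ≠ i} => c j) := by
      ext j k
      rw [Matrix.mul_diagonal, Matrix.diagonal_mul]
      simp only [submatrix_apply]
      rw [hBapp]
    rw [h1]
    exact h2
  have hq : ∀ (i : Fin n) (x : Fin n → ℝ), x i = 0 → 0 ≤ x ⬝ᵥ B *ᵥ x :=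
    fun i => quad_nonneg_of_zero (hBsub i)
  have hPA : 0 < ∏ i, A i i := Finset.prod_pos (fun i _ => hdiag i)
  have hdetAB : B.det * ∏ i, A i i = A.det := by
    rw [hB, Matrix.det_mul, Matrix.det_mul, Matrix.det_diagonal]
    have : (∏ i, c i) * A.det * (∏ i, c i) * ∏ i, A i i
        = A.det * ∏ i, (c i * A i i * c i) := by
      rw [Finset.prod_mul_distrib, Finset.prod_mul_distrib]
      ring
    rw [this, Finset.prod_congr rfl (fun i _ => hone i), Finset.prod_const_one, mul_one]
  have hdetB : B.det < 0 := by nlinarith [hPA, hdetAB, hdet]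
  set μ : Fin n → ℝ := hBherm.eigenvalues with hμ
  have hprodμ : ∏ i, μ i = B.det := by
    rw [hBherm.det_eq_prod_eigenvalues]
    norm_cast
  have hsumμ : ∑ i, μ i = (n : ℝ) := by
    rw [← trace_eq_sum_eig_s5 hBherm]
    have : B.trace = ∑ i, B i i := rfl
    rw [this, Finset.sum_congr rfl (fun i _ => hBdiag i), Finset.sum_const,
      Finset.card_univ, Fintype.card_fin, nsmul_eq_mul, mul_one]
  have hinvtr : ∑ i, (μ i)⁻¹ ≤ 0 := by
    rw [← trace_inv_eq_sum_inv_eig hBherm hdetB.ne]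
    have : B⁻¹.trace = ∑ i, B⁻¹ i i := rfl
    rw [this]
    exact Finset.sum_nonpos (fun i _ => inv_diag_nonpos hBherm hq hdetB i)
  obtain ⟨i₀, hneg⟩ : ∃ i, μ i < 0 := by
    by_contra hcon
    push_neg at hcon
    exact absurd (hprodμ ▸ Finset.prod_nonneg (fun i _ => hcon i)) (not_le.2 hdetB)
  have hposk : ∀ k, k ≠ i₀ → 0 < μ k := by
    intro k hk
    rcases lt_trichotomy (μ k) 0 with h | h | h
    · exact absurd (neg_eig_unique hBherm (hq i₀) h hneg) hk
    · exfalso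
      exact absurd (hprodμ ▸ Finset.prod_eq_zero (Finset.mem_univ k) h) hdetB.ne
    · exact h
  have hbound := scalar_bound hn μ i₀ hneg hposk hsumμ hinvtr
  rw [hprodμ] at hbound
  rw [ge_iff_le, ← hdetAB]
  exact mul_le_mul_of_nonneg_right hbound hPA.le
end

section
/- (Strict extended Hadamard inequality) Let n ≥ 3 and let A = (a_{ij}) be an n×n real symmetric matrix such that every (n−1)×(n−1) principal submatrix of A is positive definite and det(A) < 0. Then det(A) > −(1/(n−2))·((n−1)/(n−2))^(n−1) · a_{11}·a_{22}···a_{nn}. -/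
open Matrix Finset


lemma aux_posOn {n : ℕ} (A : Matrix (Fin n) (Fin n) ℝ)
    (hloc : ∀ i : Fin n,
      (A.submatrix (fun j : {j : Fin n // j ≠ i} => (j : Fin n))
        (fun j : {j : Fin n // j ≠ i} => (j : Fin n))).PosDef) :
    ∀ (i : Fin n) (y : Fin n → ℝ), y ≠ 0 → y i = 0 → 0 < y ⬝ᵥ A *ᵥ y := by
  intro i y hy hyi
  set z : {j : Fin n // j ≠ i} → ℝ := fun j => y j with hz_def
  have hz : z ≠ 0 := by
    obtain ⟨j, hj⟩ := Function.ne_iff.mp hy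
    have hji : j ≠ i := by rintro rfl; exact hj hyi
    intro h0
    exact hj (by simpa using congrFun h0 ⟨j, hji⟩)
  have h := (hloc i).dotProduct_mulVec_pos hz
  rw [star_trivial] at h
  convert h using 1
  · rfl
  have inner_eq : ∀ j : Fin n, (A *ᵥ y) j = ∑ k : {k : Fin n // k ≠ i}, A j k * z k := by
    intro j
    rw [mulVec, dotProduct, ← Finset.sum_subtype (Finset.univ.erase i)
      (fun k => by simp [Finset.mem_erase]) (fun k => A j k * y k)]
    exact (Finset.sum_erase _ (by simp [hyi])).symm
  calc ∑ j : Fin n, y j * (A *ᵥ y) j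
      = ∑ j ∈ Finset.univ.erase i, y j * (A *ᵥ y) j :=
        (Finset.sum_erase _ (by simp [hyi])).symm
    _ = ∑ j : {j : Fin n // j ≠ i}, y j * (A *ᵥ y) j :=
        Finset.sum_subtype _ (fun k => by simp [Finset.mem_erase]) _
    _ = z ⬝ᵥ (A.submatrix (fun j : {j : Fin n // j ≠ i} => (j : Fin n))
          (fun j : {j : Fin n // j ≠ i} => (j : Fin n))) *ᵥ z := by
        refine Finset.sum_congr rfl fun j _ => ?_
        rw [inner_eq]
        simp [mulVec, dotProduct, submatrix_apply, hz_def]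


lemma normalized_bound {n : ℕ} (hn : 3 ≤ n) (B : Matrix (Fin n) (Fin n) ℝ)
    (hB : B.IsHermitian) (hdiag : ∀ i, B i i = 1)
    (hpos : ∀ (i : Fin n) (y : Fin n → ℝ), y ≠ 0 → y i = 0 → 0 < y ⬝ᵥ B *ᵥ y)
    (hdet : B.det < 0) :
    B.det > -(1 / ((n : ℝ) - 2)) * (((n : ℝ) - 1) / ((n : ℝ) - 2)) ^ (n - 1) := by
  have hn2 : (0:ℝ) < (n:ℝ) - 2 := by
    have : (3:ℝ) ≤ (n:ℝ) := by exact_mod_cast hn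
    linarith
  have hn1 : (0:ℝ) < (n:ℝ) - 1 := by linarith
  set μ : Fin n → ℝ := hB.eigenvalues with hμ
  set u : Fin n → (Fin n → ℝ) := fun j => ⇑(hB.eigenvectorBasis j) with hu
  -- determinant and trace
  have hdetμ : B.det = ∏ i, μ i := by
    have := hB.det_eq_prod_eigenvalues
    simpa using this
  have htr : ∑ i, μ i = (n : ℝ) := by
    have h1 : B.trace = ∑ i, μ i := by
      simpa using hB.trace_eq_sum_eigenvalues
    have h2 : B.trace = (n : ℝ) := by
      simp [Matrix.trace, Matrix.diag, hdiag]
    rw [← h1, h2]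
  -- dot products of eigenvectors
  have dotuu : ∀ a b, u a ⬝ᵥ u b = if a = b then 1 else 0 := by
    intro a b
    have h := hB.eigenvectorBasis.orthonormal
    rw [orthonormal_iff_ite] at h
    rw [← h a b]
    simp only [PiLp.inner_apply, RCLike.inner_apply, starRingEnd_apply, star_trivial]
    simp [dotProduct, hu, mul_comm]
  have mulu : ∀ a, B *ᵥ u a = μ a • u a := fun a => hB.mulVec_eigenvectorBasis a
  -- quadratic form on two eigenvectors
  have form2 : ∀ (c₁ c₂ : ℝ) (a b : Fin n), a ≠ b →
      (c₁ • u a + c₂ • u b) ⬝ᵥ B *ᵥ (c₁ • u a + c₂ • u b) = c₁^2 * μ a + c₂^2 * μ b := by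
    intro c₁ c₂ a b hab
    rw [Matrix.mulVec_add, Matrix.mulVec_smul, Matrix.mulVec_smul, mulu, mulu]
    simp only [dotProduct_add, add_dotProduct, smul_dotProduct, dotProduct_smul,
      smul_eq_mul, smul_smul, dotuu]
    simp only [if_neg hab, if_neg (Ne.symm hab), if_true, eq_self_iff_true]
    ring
  have npos : 0 < n := by omega
  let k0 : Fin n := ⟨0, npos⟩
  -- at most one nonpositive eigenvalue
  have uniq : ∀ a b : Fin n, a ≠ b → μ a ≤ 0 → μ b ≤ 0 → False := by
    intro a b hab ha hb
    obtain ⟨c₁, c₂, hc, hx0⟩ : ∃ c₁ c₂ : ℝ, ¬(c₁ = 0 ∧ c₂ = 0) ∧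
        c₁ * u a k0 + c₂ * u b k0 = 0 := by
      by_cases h0 : u a k0 = 0
      · exact ⟨1, 0, by simp, by simp [h0]⟩
      · exact ⟨u b k0, -(u a k0), fun h => h0 (by simpa using h.2), by ring⟩
    set x : Fin n → ℝ := c₁ • u a + c₂ • u b with hx
    have hxi : x k0 = 0 := by
      simpa [hx, Pi.add_apply, Pi.smul_apply, smul_eq_mul] using hx0
    have hxne : x ≠ 0 := by
      intro h0
      have h1 : x ⬝ᵥ u a = c₁ := by
        simp [hx, add_dotProduct, smul_dotProduct, dotuu, hab, Ne.symm hab]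
      have h2 : x ⬝ᵥ u b = c₂ := by
        simp [hx, add_dotProduct, smul_dotProduct, dotuu, hab, Ne.symm hab]
      rw [h0, zero_dotProduct] at h1 h2
      exact hc ⟨h1.symm, h2.symm⟩
    have hgt := hpos k0 x hxne hxi
    rw [hx, form2 c₁ c₂ a b hab] at hgt
    nlinarith [sq_nonneg c₁, sq_nonneg c₂]
  -- eigenvalues are nonzero, exactly one negative
  have hμne : ∀ i, μ i ≠ 0 := by
    intro i h0
    have : B.det = 0 := by rw [hdetμ]; exact Finset.prod_eq_zero (mem_univ i) h0
    exact absurd this (ne_of_lt hdet)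
  obtain ⟨i0, hi0⟩ : ∃ i0, μ i0 < 0 := by
    by_contra h
    push_neg at h
    have : 0 < ∏ i, μ i :=
      Finset.prod_pos fun i _ => lt_of_le_of_ne (h i) (Ne.symm (hμne i))
    rw [hdetμ] at hdet; linarith
  have hposrest : ∀ i, i ≠ i0 → 0 < μ i := by
    intro i hi
    rcases lt_trichotomy (μ i) 0 with h | h | h
    · exact absurd (uniq i i0 hi h.le hi0.le) (fun f => f)
    · exact absurd h (hμne i)
    · exact h
  set a : ℝ := -μ i0 with ha_def
  have ha : 0 < a := by simp [ha_def]; linarith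
  -- the eigenvector for the negative eigenvalue
  set v : Fin n → ℝ := u i0 with hv
  have hv1 : v ⬝ᵥ v = 1 := by simpa using dotuu i0 i0
  have hvB : v ⬝ᵥ B *ᵥ v = μ i0 := by
    rw [hv, mulu, dotProduct_smul, smul_eq_mul]
    rw [← hv] at *
    rw [hv1]; ring
  -- key coordinate bound
  have keybound : ∀ i : Fin n, a * (1 - 2 * (v i)^2) < (v i)^2 := by
    intro i
    set e : Fin n → ℝ := Pi.single i 1 with he
    have heB : e ⬝ᵥ B *ᵥ e = 1 := by
      simp [he, dotProduct, mulVec, Pi.single_apply, Finset.sum_ite_eq,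
        Finset.sum_ite_eq', hdiag i]
    have heBv : e ⬝ᵥ B *ᵥ v = μ i0 * v i := by
      simp [he, hv, mulu, Pi.single_apply, dotProduct, Finset.sum_ite_eq']
    have hvBe : v ⬝ᵥ B *ᵥ e = μ i0 * v i := by
      have hsym : ∀ j k, B j k = B k j := fun j k =>
        (congrFun (congrFun hB.symm j) k).symm ▸ by
          have := congrFun (congrFun hB j) k
          simpa [conjTranspose_apply] using this.symm
      calc v ⬝ᵥ B *ᵥ e = e ⬝ᵥ B *ᵥ v := by
            simp only [dotProduct, mulVec, Finset.mul_sum]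
            rw [Finset.sum_comm]
            refine Finset.sum_congr rfl fun j _ => Finset.sum_congr rfl fun k _ => ?_
            rw [hsym j k]; ring
        _ = μ i0 * v i := heBv
    set x : Fin n → ℝ := v - v i • e with hxdef
    have hxi : x i = 0 := by simp [hxdef, he, Pi.single_apply]
    have hxform : x ⬝ᵥ B *ᵥ x = μ i0 - 2 * (v i) * (μ i0 * v i) + (v i)^2 := by
      rw [hxdef]
      rw [Matrix.mulVec_sub, Matrix.mulVec_smul]
      simp only [sub_dotProduct, dotProduct_sub, smul_dotProduct, dotProduct_smul,
        smul_eq_mul]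
      rw [hvB, hvBe, heBv, heB]
      ring
    have hxne : x ≠ 0 := by
      intro h0
      have hveq : v = v i • e := sub_eq_zero.mp (by rw [← hxdef]; exact h0)
      have hform : (v i • e) ⬝ᵥ B *ᵥ (v i • e) = (v i)^2 := by
        rw [Matrix.mulVec_smul, smul_dotProduct, dotProduct_smul, smul_eq_mul,
          smul_eq_mul, heB]
        ring
      rw [← hveq, hvB] at hform
      nlinarith [sq_nonneg (v i)]
    have hgt := hpos i x hxne hxi
    rw [hxform] at hgt
    have : μ i0 = -a := by simp [ha_def]
    rw [this] at hgt
    nlinarith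
  -- summing: a < 1/(n-2)
  have hsumsq : ∑ i : Fin n, (v i)^2 = 1 := by
    rw [← hv1, dotProduct]
    exact Finset.sum_congr rfl fun i _ => sq (v i)
  have hasmall : a * ((n : ℝ) - 2) < 1 := by
    have hlt : ∑ i : Fin n, a * (1 - 2 * (v i)^2) < ∑ i : Fin n, (v i)^2 :=
      Finset.sum_lt_sum_of_nonempty (univ_nonempty_iff.mpr ⟨k0⟩) fun i _ => keybound i
    rw [hsumsq] at hlt
    have hexp : ∑ i : Fin n, a * (1 - 2 * (v i)^2)
        = (n : ℝ) * a - 2 * a * ∑ i : Fin n, (v i)^2 := by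
      calc ∑ i : Fin n, a * (1 - 2 * (v i)^2)
          = ∑ i : Fin n, (a - 2 * a * (v i)^2) :=
            Finset.sum_congr rfl fun i _ => by ring
        _ = (n : ℝ) * a - 2 * a * ∑ i : Fin n, (v i)^2 := by
            rw [Finset.sum_sub_distrib, Finset.sum_const, ← Finset.mul_sum]
            simp [Finset.card_univ]
    rw [hexp, hsumsq] at hlt
    linarith
  have ha2 : a < 1 / ((n : ℝ) - 2) := by
    rw [lt_div_iff₀ hn2]; exact hasmall
  -- AM-GM on the positive eigenvalues
  set s : Finset (Fin n) := Finset.univ.erase i0 with hs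
  have hcard : (s.card : ℝ) = (n : ℝ) - 1 := by
    rw [hs, Finset.card_erase_of_mem (mem_univ i0), Finset.card_univ, Fintype.card_fin]
    have h1n : 1 ≤ n := by omega
    push_cast [Nat.cast_sub h1n]
    ring
  have hsum : ∑ i ∈ s, μ i = (n : ℝ) + a := by
    have h : ∑ i ∈ s, μ i + μ i0 = (n : ℝ) := by
      rw [hs, Finset.sum_erase_add Finset.univ μ (mem_univ i0)]; exact htr
    rw [ha_def]; linarith
  have hμs : ∀ i ∈ s, 0 < μ i := fun i hi =>
    hposrest i (Finset.ne_of_mem_erase hi)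
  set P : ℝ := ∏ i ∈ s, μ i with hP
  have hPpos : 0 < P := Finset.prod_pos hμs
  set w : ℝ := 1 / ((n : ℝ) - 1) with hw
  have hwpos : 0 < w := by positivity
  have hamgm : P ≤ (((n : ℝ) + a) / ((n : ℝ) - 1)) ^ (n - 1) := by
    have h1 : ∏ i ∈ s, (μ i) ^ w ≤ ∑ i ∈ s, w * μ i :=
      Real.geom_mean_le_arith_mean_weighted s (fun _ => w) μ
        (fun i _ => hwpos.le)
        (by rw [Finset.sum_const, nsmul_eq_mul, hcard, hw]; field_simp)
        (fun i hi => (hμs i hi).le)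
    have h2 : ∑ i ∈ s, w * μ i = ((n : ℝ) + a) / ((n : ℝ) - 1) := by
      rw [← Finset.mul_sum, hsum, hw]; field_simp
    rw [h2] at h1
    have h3 : (0:ℝ) ≤ ∏ i ∈ s, (μ i) ^ w :=
      Finset.prod_nonneg fun i hi => Real.rpow_nonneg (hμs i hi).le w
    have h4 : (∏ i ∈ s, (μ i) ^ w) ^ ((n : ℝ) - 1)
        ≤ (((n : ℝ) + a) / ((n : ℝ) - 1)) ^ ((n : ℝ) - 1) :=
      Real.rpow_le_rpow h3 h1 (by linarith)
    have h5 : (∏ i ∈ s, (μ i) ^ w) ^ ((n : ℝ) - 1) = P := by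
      rw [Real.finset_prod_rpow s μ (fun i hi => (hμs i hi).le) w, ← hP,
        ← Real.rpow_mul hPpos.le]
      rw [show w * ((n:ℝ) - 1) = 1 by rw [hw]; field_simp]
      exact Real.rpow_one P
    have h6 : (((n:ℝ) + a) / ((n:ℝ) - 1)) ^ ((n:ℝ) - 1)
        = (((n:ℝ) + a) / ((n:ℝ) - 1)) ^ (n - 1 : ℕ) := by
      rw [← Real.rpow_natCast (((n:ℝ) + a) / ((n:ℝ) - 1)) (n - 1)]
      congr 1
      have h1n : 1 ≤ n := by omega
      push_cast [Nat.cast_sub h1n]; ring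
    rw [h5, h6] at h4
    exact h4
  -- final combination
  have hdetP : B.det = -(a * P) := by
    rw [hdetμ, ← Finset.mul_prod_erase Finset.univ μ (mem_univ i0), ← hs, ← hP, ha_def]
    ring
  have hQpos : (0:ℝ) < ((n:ℝ) + a) / ((n:ℝ) - 1) := div_pos (by linarith) hn1
  have hbase : ((n:ℝ) + a) / ((n:ℝ) - 1) ≤ ((n:ℝ) - 1) / ((n:ℝ) - 2) := by
    rw [div_le_div_iff₀ hn1 hn2]
    nlinarith [hasmall]
  have hQle : (((n:ℝ) + a) / ((n:ℝ) - 1)) ^ (n - 1)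
      ≤ (((n:ℝ) - 1) / ((n:ℝ) - 2)) ^ (n - 1) :=
    pow_le_pow_left₀ hQpos.le hbase _
  have hfinal : a * P < (1 / ((n:ℝ) - 2)) * (((n:ℝ) - 1) / ((n:ℝ) - 2)) ^ (n - 1) := by
    have h7 : a * P ≤ a * (((n:ℝ) - 1) / ((n:ℝ) - 2)) ^ (n - 1) :=
      mul_le_mul_of_nonneg_left (le_trans hamgm hQle) ha.le
    have h8 : a * (((n:ℝ) - 1) / ((n:ℝ) - 2)) ^ (n - 1)
        < (1 / ((n:ℝ) - 2)) * (((n:ℝ) - 1) / ((n:ℝ) - 2)) ^ (n - 1) :=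
      mul_lt_mul_of_pos_right ha2 (pow_pos (div_pos hn1 hn2) _)
    linarith
  rw [hdetP]
  have hrw : -(1 / ((n : ℝ) - 2)) * (((n : ℝ) - 1) / ((n : ℝ) - 2)) ^ (n - 1)
      = -((1 / ((n:ℝ) - 2)) * (((n:ℝ) - 1) / ((n:ℝ) - 2)) ^ (n - 1)) := by ring
  rw [gt_iff_lt, hrw]
  exact neg_lt_neg hfinal



lemma extended_hadamard_strict_aux
    (n : ℕ) (hn : 3 ≤ n) (A : Matrix (Fin n) (Fin n) ℝ) (hA : A.IsHermitian)
    (hposA : ∀ (i : Fin n) (y : Fin n → ℝ), y ≠ 0 → y i = 0 → 0 < y ⬝ᵥ A *ᵥ y)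
    (hdet : A.det < 0) :
    A.det > -(1 / ((n : ℝ) - 2)) * (((n : ℝ) - 1) / ((n : ℝ) - 2)) ^ (n - 1) *
      ∏ i : Fin n, A i i := by
  have hnontriv : Nontrivial (Fin n) := Fin.nontrivial_iff_two_le.mpr (by omega)
  have hAsym : ∀ i j, A j i = A i j := by
    intro i j
    have := congrFun (congrFun hA j) i
    exact (by simpa [conjTranspose_apply] using this : A i j = A j i).symm
  -- diagonal entries are positive
  have hd : ∀ i, 0 < A i i := by
    intro i
    obtain ⟨j, hj⟩ := exists_ne i
    have h1 : (Pi.single i 1 : Fin n → ℝ) ≠ 0 := by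
      intro h0; simpa using congrFun h0 i
    have h2 : (Pi.single i 1 : Fin n → ℝ) j = 0 := by
      simp [Pi.single_apply, hj]
    have h := hposA j (Pi.single i 1) h1 h2
    have hform : (Pi.single i 1 : Fin n → ℝ) ⬝ᵥ A *ᵥ Pi.single i 1 = A i i := by
      simp [dotProduct, mulVec, Pi.single_apply, Finset.sum_ite_eq, Finset.sum_ite_eq']
    rwa [hform] at h
  set e : Fin n → ℝ := fun i => Real.sqrt (A i i) with he_def
  have he : ∀ i, 0 < e i := fun i => Real.sqrt_pos.mpr (hd i)
  have hee : ∀ i, e i * e i = A i i := fun i => Real.mul_self_sqrt (hd i).le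
  set B : Matrix (Fin n) (Fin n) ℝ :=
    Matrix.of (fun i j => (e i)⁻¹ * A i j * (e j)⁻¹) with hB_def
  have hBA : B = Matrix.diagonal (fun i => (e i)⁻¹) * A
      * Matrix.diagonal (fun i => (e i)⁻¹) := by
    ext i j
    simp [hB_def, mul_diagonal, diagonal_mul]
  have detB : B.det = (∏ i, (e i)⁻¹)^2 * A.det := by
    rw [hBA, det_mul, det_mul, det_diagonal]
    ring
  have hBherm : B.IsHermitian := by
    rw [Matrix.IsHermitian]
    ext i j
    simp [hB_def, conjTranspose_apply, hAsym i j]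
    ring
  have hBdiag : ∀ i, B i i = 1 := by
    intro i
    have : B i i = (e i)⁻¹ * A i i * (e i)⁻¹ := rfl
    rw [this, ← hee i]
    field_simp
    exact div_self (he i).ne'
  have hBpos : ∀ (i : Fin n) (y : Fin n → ℝ), y ≠ 0 → y i = 0 → 0 < y ⬝ᵥ B *ᵥ y := by
    intro i y hy hyi
    set z : Fin n → ℝ := fun j => (e j)⁻¹ * y j with hz_def
    have hz : z ≠ 0 := by
      obtain ⟨j, hj⟩ := Function.ne_iff.mp hy
      intro h0
      have := congrFun h0 j
      simp [hz_def] at this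
      rcases this with h | h
      · exact (he j).ne' h
      · exact hj h
    have hzi : z i = 0 := by simp [hz_def, hyi]
    have hform : y ⬝ᵥ B *ᵥ y = z ⬝ᵥ A *ᵥ z := by
      simp only [dotProduct, mulVec, hB_def, hz_def, Matrix.of_apply, Finset.mul_sum]
      refine Finset.sum_congr rfl fun j _ => Finset.sum_congr rfl fun k _ => ?_
      ring
    rw [hform]
    exact hposA i z hz hzi
  have hc2 : (0:ℝ) < (∏ i, (e i)⁻¹)^2 := by
    have : (0:ℝ) < ∏ i, (e i)⁻¹ := Finset.prod_pos fun i _ => inv_pos.mpr (he i)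
    positivity
  have hBdet : B.det < 0 := by
    rw [detB]
    exact mul_neg_of_pos_of_neg hc2 hdet
  have hmain := normalized_bound hn B hBherm hBdiag hBpos hBdet
  have hprodA : (0:ℝ) < ∏ i, A i i := Finset.prod_pos fun i _ => hd i
  have hprod1 : (∏ i, (e i)⁻¹)^2 * ∏ i, A i i = 1 := by
    rw [← Finset.prod_pow, ← Finset.prod_mul_distrib]
    rw [Finset.prod_eq_one]
    intro i _
    have h9 : (e i)⁻¹ ^ 2 * (e i * e i) = ((e i)⁻¹ * e i) ^ 2 := by ring
    rw [← hee i, h9, inv_mul_cancel₀ (he i).ne', one_pow]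
  have hAeq : A.det = B.det * ∏ i, A i i := by
    have h1 : B.det * ∏ i, A i i
        = A.det * ((∏ i, (e i)⁻¹)^2 * ∏ i, A i i) := by rw [detB]; ring
    rw [h1, hprod1, mul_one]
  rw [hAeq]
  exact mul_lt_mul_of_pos_right hmain hprodA

/-- Strict extended Hadamard inequality for `(n-1)`-locally positive definite matrices. -/
theorem extended_hadamard_strict
    (n : ℕ) (hn : 3 ≤ n) (A : Matrix (Fin n) (Fin n) ℝ) (hA : A.IsHermitian)
    (hloc : ∀ i : Fin n,
      (A.submatrix (fun j : {j : Fin n // j ≠ i} => (j : Fin n))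
        (fun j : {j : Fin n // j ≠ i} => (j : Fin n))).PosDef)
    (hdet : A.det < 0) :
    A.det > -(1 / ((n : ℝ) - 2)) * (((n : ℝ) - 1) / ((n : ℝ) - 2)) ^ (n - 1) *
      ∏ i : Fin n, A i i :=
  extended_hadamard_strict_aux n hn A hA (aux_posOn A hloc) hdet
end

section
/- For n ≥ 3, let A be the n×n matrix with a_{ii} = 1 and a_{ij} = −1/(n−2) for i ≠ j. Then every (n−1)×(n−1) principal submatrix of A is positive semidefinite, and det(A) = −(1/(n−2))·((n−1)/(n−2))^(n−1). In particular, the constant in the extended Hadamard inequality is sharp. -/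
open Matrix Finset

/-- A matrix with unit diagonal and constant nonpositive off-diagonal entry `r`
with `1 + (card - 1) * r ≥ 0` is positive semidefinite. -/
lemma aux_psd_const {ι : Type*} [Fintype ι] [DecidableEq ι] (r : ℝ) (hr : r ≤ 0)
    (h : 0 ≤ 1 + ((Fintype.card ι : ℝ) - 1) * r) :
    Matrix.PosSemidef (Matrix.of fun i j : ι => if i = j then (1 : ℝ) else r) := by
  rw [Matrix.posSemidef_iff_dotProduct_mulVec]
  constructor
  · ext i j
    by_cases hij : i = j <;> simp [Matrix.IsHermitian, hij, eq_comm, Matrix.conjTranspose_apply]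
  · intro x
    have key : dotProduct (star x) ((Matrix.of fun i j : ι => if i = j then (1 : ℝ) else r) *ᵥ x)
        = (1 - r) * ∑ i, x i ^ 2 + r * (∑ i, x i) ^ 2 := by
      simp only [dotProduct, Matrix.mulVec, star, Matrix.of_apply, dotProduct, id_eq]
      have : ∀ i : ι, (∑ j, (if i = j then (1:ℝ) else r) * x j)
          = (1 - r) * x i + r * ∑ j, x j := by
        intro i
        have : (∑ j, (if i = j then (1:ℝ) else r) * x j)
            = ∑ j, ((if i = j then (1 - r : ℝ) else 0) * x j + r * x j) := by
          refine Finset.sum_congr rfl fun j _ => ?_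
          by_cases hij : i = j <;> simp [hij] <;> ring
        rw [this, Finset.sum_add_distrib, ← Finset.mul_sum]
        congr 1
        simp [ite_mul]
      simp_rw [this]
      rw [Finset.sum_congr rfl (fun i _ => by ring :
        ∀ i ∈ Finset.univ, x i * ((1 - r) * x i + r * ∑ j, x j)
          = (1 - r) * x i ^ 2 + (r * ∑ j, x j) * x i)]
      rw [Finset.sum_add_distrib, ← Finset.mul_sum, ← Finset.mul_sum]
      ring
    rw [key]
    have hcs : (∑ i, x i) ^ 2 ≤ (Fintype.card ι : ℝ) * ∑ i, x i ^ 2 := by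
      simpa [Finset.card_univ] using sq_sum_le_card_mul_sum_sq (s := Finset.univ) (f := x)
    have hsq : (0:ℝ) ≤ ∑ i, x i ^ 2 := Finset.sum_nonneg fun i _ => sq_nonneg _
    nlinarith [mul_nonneg (neg_nonneg.mpr hr) (sub_nonneg.mpr hcs), mul_nonneg h hsq]

/-- The matrix with unit diagonal and off-diagonal entries `-1/(n-2)` has all
`(n-1)×(n-1)` principal submatrices PSD, and its determinant attains the extended
Hadamard bound. -/
theorem extremal_matrix_extended_hadamard
    (n : ℕ) (hn : 3 ≤ n)
    (A : Matrix (Fin n) (Fin n) ℝ)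
    (hAdef : ∀ i j : Fin n, A i j = if i = j then 1 else -(1 / ((n : ℝ) - 2))) :
    (∀ i : Fin n,
      (A.submatrix (fun j : {j : Fin n // j ≠ i} => (j : Fin n))
        (fun j : {j : Fin n // j ≠ i} => (j : Fin n))).PosSemidef) ∧
    A.det = -(1 / ((n : ℝ) - 2)) * (((n : ℝ) - 1) / ((n : ℝ) - 2)) ^ (n - 1) := by
  set r : ℝ := -(1 / ((n : ℝ) - 2)) with hrdef
  have hn2 : (2:ℝ) ≤ (n:ℝ) - 1 := by
    have : (3:ℝ) ≤ (n:ℝ) := by exact_mod_cast hn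
    linarith
  have hne : (n:ℝ) - 2 ≠ 0 := by linarith
  have hpos : (0:ℝ) < (n:ℝ) - 2 := by linarith
  have hr : r ≤ 0 := by
    rw [hrdef, neg_nonpos]
    exact le_of_lt (div_pos one_pos hpos)
  constructor
  · intro i
    have hcard : (Fintype.card {j : Fin n // j ≠ i} : ℝ) = (n : ℝ) - 1 := by
      have h1 : Fintype.card {j : Fin n // j ≠ i} = n - 1 := by
        simp [Fintype.card_subtype_compl, Fintype.card_subtype_eq]
      rw [h1, Nat.cast_sub (by omega)]
      simp
    have heq : (A.submatrix (fun j : {j : Fin n // j ≠ i} => (j : Fin n))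
        (fun j : {j : Fin n // j ≠ i} => (j : Fin n)))
        = Matrix.of fun a b : {j : Fin n // j ≠ i} => if a = b then (1:ℝ) else r := by
      ext a b
      simp only [Matrix.submatrix_apply, Matrix.of_apply, hAdef]
      simp [Subtype.coe_inj]
    rw [heq]
    apply aux_psd_const r hr
    rw [hcard]
    have hz : 1 + (((n:ℝ) - 1) - 1) * r = 0 := by
      rw [hrdef]; field_simp; ring
    exact hz.ge
  · -- determinant
    have hA : A = ((1 - r) • (1 + Matrix.replicateCol Unit (fun _ => r / (1 - r)) *
        Matrix.replicateRow Unit (fun _ : Fin n => (1:ℝ)))) := by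
      have h1r : (1:ℝ) - r ≠ 0 := by
        rw [hrdef]
        have : (0:ℝ) < (n:ℝ) - 2 := by linarith
        have : (0:ℝ) < 1 / ((n:ℝ) - 2) := by positivity
        intro h; rw [sub_neg_eq_add] at h; linarith
      ext i j
      simp only [hAdef, Matrix.smul_apply, Matrix.add_apply, Matrix.one_apply,
        Matrix.mul_apply, Matrix.replicateCol_apply, Matrix.replicateRow_apply, Finset.sum_const,
        Finset.card_univ, Fintype.card_unit, one_smul, smul_eq_mul]
      by_cases hij : i = j <;> simp [hij] <;> field_simp <;> ring_nf <;> norm_num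
    rw [hA, Matrix.det_smul, Matrix.det_one_add_replicateCol_mul_replicateRow]
    have h1r : (1:ℝ) - r = ((n:ℝ) - 1) / ((n:ℝ) - 2) := by
      rw [hrdef]; field_simp; ring
    have hdot : (fun _ : Fin n => (1:ℝ)) ⬝ᵥ (fun _ => r / (1 - r)) = n * (r / (1 - r)) := by
      simp [dotProduct, Finset.sum_const, Finset.card_univ]
    rw [hdot]
    have h1rne : (1:ℝ) - r ≠ 0 := by
      rw [h1r]; positivity
    have hfact : (1:ℝ) + n * (r / (1 - r)) = (1 + ((n:ℝ) - 1) * r) / (1 - r) := by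
      field_simp; ring
    have hval : (1:ℝ) + ((n:ℝ) - 1) * r = r := by
      rw [hrdef]; field_simp; ring
    have hpow : ((1:ℝ) - r) ^ n = (1 - r) ^ (n - 1) * (1 - r) := by
      conv_lhs => rw [show n = (n - 1) + 1 from by omega]
      rw [pow_succ]
    rw [hfact, hval, Fintype.card_fin, hpow, h1r]
    have hc : ((n:ℝ) - 1) / ((n:ℝ) - 2) ≠ 0 := by positivity
    field_simp
end

section
/- Let n ≥ 3 and let A be an n×n real symmetric matrix of block form A = [[B, b],[bᵀ, a_{nn}]], where B is an (n−1)×(n−1) positive semidefinite matrix. Assume det(A) ≤ 0, a_{nn} ≥ 0, and |b_i| ≤ √(a_{ii}·a_{nn}) for i = 1,…,n−1. Then det(A) ≥ −(n−1)·((n−1)/(n−2))^(n−2) · a_{11}·a_{22}···a_{nn}. -/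
open Matrix Finset Filter

lemma my_amgm {ι : Type*} (s : Finset ι) (hs : s.Nonempty) (f : ι → ℝ)
    (hf : ∀ i ∈ s, 0 ≤ f i) :
    ∏ i ∈ s, f i ≤ ((∑ i ∈ s, f i) / s.card) ^ s.card := by
  have hk : (0:ℝ) < s.card := by
    exact_mod_cast Finset.card_pos.mpr hs
  have h := Real.geom_mean_le_arith_mean_weighted s (fun _ => (s.card : ℝ)⁻¹) f
    (fun i _ => by positivity) (by simp [Finset.sum_const]; field_simp) hf
  have hL : ∏ i ∈ s, f i = (∏ i ∈ s, f i ^ ((s.card : ℝ)⁻¹)) ^ s.card := by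
    rw [← Finset.prod_pow]
    refine Finset.prod_congr rfl fun i hi => ?_
    rw [← Real.rpow_natCast (f i ^ ((s.card:ℝ)⁻¹)), ← Real.rpow_mul (hf i hi),
      inv_mul_cancel₀ hk.ne', Real.rpow_one]
  have hR : ∑ i ∈ s, ((s.card : ℝ))⁻¹ * f i = (∑ i ∈ s, f i) / s.card := by
    rw [← Finset.mul_sum]; ring
  rw [hL]
  refine pow_le_pow_left₀ (Finset.prod_nonneg fun i hi => Real.rpow_nonneg (hf i hi) _) ?_ _
  rw [← hR]; exact h

/-- Core bound: `det (diagonal μ - wwᵀ) ≥ -m (m/(m-1))^(m-1)` when the `μ` are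
nonnegative with sum at most `m` and `∑ wᵢ² ≤ m`. -/
lemma my_core (m : ℕ) (hm : 2 ≤ m) (μ w : Fin m → ℝ)
    (hμ : ∀ i, 0 ≤ μ i) (hsum : ∑ i, μ i ≤ m) (hw : ∑ i, w i * w i ≤ m) :
    -(m:ℝ) * ((m:ℝ) / ((m:ℝ) - 1)) ^ (m - 1)
      ≤ (Matrix.diagonal μ - Matrix.replicateCol Unit w * Matrix.replicateRow Unit w).det := by
  have hm1 : (0:ℝ) < (m:ℝ) - 1 := by
    have : (2:ℝ) ≤ (m:ℝ) := by exact_mod_cast hm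
    linarith
  have hmpos : (0:ℝ) < (m:ℝ) := by linarith
  set C : ℝ := (m:ℝ) * ((m:ℝ) / ((m:ℝ) - 1)) ^ (m - 1) with hC
  have hCnonneg : 0 ≤ C := by positivity
  set F : ℝ → ℝ := fun t =>
    (Matrix.diagonal (fun i => μ i + t) - Matrix.replicateCol Unit w * Matrix.replicateRow Unit w).det with hF
  have hFcont : Continuous F := by
    apply Continuous.matrix_det
    apply continuous_matrix
    intro i j
    simp only [Matrix.sub_apply, Matrix.diagonal_apply]
    by_cases h : i = j <;> simp [h] <;> fun_prop
  -- the bound for positive t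
  have step : ∀ t ∈ Set.Ioi (0:ℝ), -C * (1 + t) ^ (m - 1) ≤ F t := by
    intro t ht
    rw [Set.mem_Ioi] at ht
    set ν : Fin m → ℝ := fun i => μ i + t with hνdef
    have hν : ∀ i, 0 < ν i := fun i => by have := hμ i; simp only [hνdef]; linarith
    have hP : 0 < ∏ i, ν i := Finset.prod_pos fun i _ => hν i
    have hdetD : (Matrix.diagonal ν).det = ∏ i, ν i := Matrix.det_diagonal
    have hunit : IsUnit (Matrix.diagonal ν).det := by
      rw [hdetD]; exact hP.ne'.isUnit
    have hinv : (Matrix.diagonal ν)⁻¹ = Matrix.diagonal (fun i => (ν i)⁻¹) := by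
      apply Matrix.inv_eq_right_inv
      rw [Matrix.diagonal_mul_diagonal]
      have : (fun i => ν i * (ν i)⁻¹) = fun _ => (1:ℝ) := by
        funext i; exact mul_inv_cancel₀ (hν i).ne'
      rw [this, Matrix.diagonal_one]
    have hcolneg : Matrix.replicateCol Unit (-w) = -Matrix.replicateCol Unit w := by
      ext i j; simp [Matrix.replicateCol]
    have hFt : F t = (Matrix.diagonal ν + Matrix.replicateCol Unit (-w) * Matrix.replicateRow Unit w).det := by
      rw [hcolneg, Matrix.neg_mul, ← sub_eq_add_neg]
    have hentry : Matrix.replicateRow Unit w * (Matrix.diagonal ν)⁻¹ * Matrix.replicateCol Unit (-w)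
        = Matrix.of fun _ _ => -∑ i, w i * w i / ν i := by
      rw [hinv]
      ext i j
      simp [Matrix.mul_apply, Matrix.replicateRow, Matrix.replicateCol, Matrix.diagonal_apply,
        Finset.mul_sum, div_eq_mul_inv]
      exact Finset.sum_congr rfl fun x _ => by ring
    have hdcr := Matrix.det_add_replicateCol_mul_replicateRow (ι := Unit) (A := Matrix.diagonal ν) hunit (-w) w
    have hinner : (1 + Matrix.replicateRow Unit w * (Matrix.diagonal ν)⁻¹ * Matrix.replicateCol Unit (-w)).det
        = 1 - ∑ i, w i * w i / ν i := by
      rw [hentry, Matrix.det_unique]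
      simp [Matrix.one_apply, sub_eq_add_neg]
    have hFt2 : F t = (∏ i, ν i) - ∑ i, (w i * w i) * ((∏ j, ν j) / ν i) := by
      rw [hFt, hdcr, hinner, hdetD, mul_sub, mul_one, Finset.mul_sum]
      congr 1
      exact Finset.sum_congr rfl fun x _ => by
        rw [div_eq_mul_inv, div_eq_mul_inv]; ring
    have hPi : ∀ i : Fin m, (∏ j, ν j) / ν i = ∏ j ∈ Finset.univ.erase i, ν j := by
      intro i
      rw [← Finset.mul_prod_erase Finset.univ ν (Finset.mem_univ i)]
      exact mul_div_cancel_left₀ _ (hν i).ne'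
    set Q : ℝ := ((m:ℝ) / ((m:ℝ) - 1)) ^ (m - 1) * (1 + t) ^ (m - 1) with hQ
    have hQnonneg : 0 ≤ Q := by positivity
    have herase : ∀ i : Fin m, ∏ j ∈ Finset.univ.erase i, ν j ≤ Q := by
      intro i
      have hcard : (Finset.univ.erase i).card = m - 1 := by
        rw [Finset.card_erase_of_mem (Finset.mem_univ i), Finset.card_univ, Fintype.card_fin]
      have hne : (Finset.univ.erase i).Nonempty := by
        rw [← Finset.card_pos, hcard]; omega
      have h1 := my_amgm (Finset.univ.erase i) hne ν (fun j _ => (hν j).le)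
      rw [hcard] at h1
      have hcast : ((m - 1 : ℕ) : ℝ) = (m:ℝ) - 1 := by
        have : 1 ≤ m := by omega
        push_cast [this]; ring
      rw [hcast] at h1
      refine h1.trans ?_
      have hsumerase : ∑ j ∈ Finset.univ.erase i, ν j ≤ (m:ℝ) * (1 + t) := by
        have h2 : ∑ j ∈ Finset.univ.erase i, ν j
            = (∑ j ∈ Finset.univ.erase i, μ j) + ((m:ℝ) - 1) * t := by
          simp only [hνdef]
          rw [Finset.sum_add_distrib, Finset.sum_const, hcard, nsmul_eq_mul, hcast]
        have h3 : ∑ j ∈ Finset.univ.erase i, μ j ≤ ∑ j, μ j :=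
          Finset.sum_le_sum_of_subset_of_nonneg (Finset.subset_univ _)
            (fun j _ _ => hμ j)
        have := hsum
        nlinarith [ht.le]
      have hbase : (∑ j ∈ Finset.univ.erase i, ν j) / ((m:ℝ) - 1)
          ≤ (m:ℝ) / ((m:ℝ) - 1) * (1 + t) := by
        rw [div_le_iff₀ hm1]
        calc ∑ j ∈ Finset.univ.erase i, ν j ≤ (m:ℝ) * (1 + t) := hsumerase
        _ = (m:ℝ) / ((m:ℝ) - 1) * (1 + t) * ((m:ℝ) - 1) := by field_simp
      have hbnn : 0 ≤ (∑ j ∈ Finset.univ.erase i, ν j) / ((m:ℝ) - 1) := by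
        apply div_nonneg _ hm1.le
        exact Finset.sum_nonneg fun j _ => (hν j).le
      calc ((∑ j ∈ Finset.univ.erase i, ν j) / ((m:ℝ) - 1)) ^ (m - 1)
          ≤ ((m:ℝ) / ((m:ℝ) - 1) * (1 + t)) ^ (m - 1) :=
            pow_le_pow_left₀ hbnn hbase _
        _ = Q := by rw [hQ, mul_pow]
    have hsumQ : ∑ i, (w i * w i) * ((∏ j, ν j) / ν i) ≤ C * (1 + t) ^ (m - 1) := by
      calc ∑ i, (w i * w i) * ((∏ j, ν j) / ν i)
          ≤ ∑ i, (w i * w i) * Q := by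
            refine Finset.sum_le_sum fun i _ => ?_
            rw [hPi i]
            exact mul_le_mul_of_nonneg_left (herase i) (mul_self_nonneg _)
        _ = (∑ i, w i * w i) * Q := by rw [← Finset.sum_mul]
        _ ≤ (m:ℝ) * Q := mul_le_mul_of_nonneg_right hw hQnonneg
        _ = C * (1 + t) ^ (m - 1) := by rw [hQ, hC]; ring
    rw [hFt2]
    nlinarith [hP.le]
  -- pass to the limit t → 0⁺
  have h1 : Tendsto (fun t : ℝ => -C * (1 + t) ^ (m - 1)) (nhdsWithin 0 (Set.Ioi 0))
      (nhds (-C * (1 + 0) ^ (m - 1))) := by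
    apply Tendsto.mono_left _ nhdsWithin_le_nhds
    exact (Continuous.tendsto (by fun_prop) 0)
  have h2 : Tendsto F (nhdsWithin 0 (Set.Ioi 0)) (nhds (F 0)) :=
    (hFcont.tendsto 0).mono_left nhdsWithin_le_nhds
  have hle := le_of_tendsto_of_tendsto h1 h2
    (eventually_nhdsWithin_of_forall step)
  have hF0 : F 0 = (Matrix.diagonal μ - Matrix.replicateCol Unit w * Matrix.replicateRow Unit w).det := by
    simp [hF]
  rw [hF0] at hle
  simpa using hle


-- entries of a PSD matrix vanish on a zero-diagonal row
lemma my_psd_row_zero {k : ℕ} {B : Matrix (Fin k) (Fin k) ℝ} (hB : B.PosSemidef)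
    {i : Fin k} (hi : B i i = 0) (j : Fin k) : B i j = 0 := by
  by_cases hij : i = j
  · rw [hij] at hi ⊢; exact hi
  have hsym : B j i = B i j := by
    have := hB.isHermitian.apply j i
    simpa using this.symm
  have hq : ∀ x : ℝ, 0 ≤ B j j * (x * x) + 2 * B i j * x + 0 := by
    intro x
    have h := hB.dotProduct_mulVec_nonneg ((Pi.single i (1:ℝ) : Fin k → ℝ) + x • (Pi.single j (1:ℝ) : Fin k → ℝ))
    simp only [star_trivial, Matrix.mulVec_add, Matrix.mulVec_smul,
      Matrix.mulVec_single, dotProduct_add, add_dotProduct, smul_dotProduct,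
      dotProduct_smul, Pi.single_apply, smul_eq_mul] at h
    simp only [dotProduct, Pi.add_apply, Pi.smul_apply, Pi.single_apply, smul_eq_mul,
      mul_ite, mul_one, mul_zero, ite_mul, zero_mul, Finset.sum_add_distrib,
      Finset.sum_ite_eq', Finset.mem_univ, if_true, Matrix.col_apply, MulOpposite.op_one,
      one_smul, one_mul] at h
    rw [hi, hsym] at h
    nlinarith [h]
  have hd := discrim_le_zero hq
  rw [discrim] at hd
  nlinarith [hd]

/-- Determinant lower bound for a bordered positive semidefinite matrix. -/
theorem det_lower_bound_bordered_psd
    (n : ℕ) (hn : 3 ≤ n)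
    (B : Matrix (Fin (n - 1)) (Fin (n - 1)) ℝ) (b : Fin (n - 1) → ℝ) (a : ℝ)
    (A : Matrix (Fin (n - 1) ⊕ Unit) (Fin (n - 1) ⊕ Unit) ℝ)
    (hAdef : A = Matrix.fromBlocks B (Matrix.of fun i _ => b i)
      (Matrix.of fun _ j => b j) (Matrix.of fun _ _ => a))
    (hB : B.PosSemidef)
    (hdet : A.det ≤ 0) (ha : 0 ≤ a)
    (hb : ∀ i : Fin (n - 1), |b i| ≤ Real.sqrt (B i i * a)) :
    A.det ≥ -((n : ℝ) - 1) * (((n : ℝ) - 1) / ((n : ℝ) - 2)) ^ (n - 2) *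
      ((∏ i : Fin (n - 1), B i i) * a) := by
  have hBdiag : ∀ i, 0 ≤ B i i := by
    intro i
    have h := hB.dotProduct_mulVec_nonneg (Pi.single i 1)
    simpa [dotProduct, Matrix.mulVec_single, Pi.single_apply] using h
  -- degenerate cases
  by_cases ha0 : a = 0
  · have hb0 : ∀ i, b i = 0 := by
      intro i
      have := hb i
      rw [ha0, mul_zero, Real.sqrt_zero] at this
      exact abs_eq_zero.mp (le_antisymm this (abs_nonneg _))
    have hdet0 : A.det = 0 := by
      apply Matrix.det_eq_zero_of_row_eq_zero (Sum.inr ())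
      rintro (j | j) <;> simp [hAdef, hb0, ha0]
    rw [hdet0, ha0]
    simp
  by_cases hB0 : ∃ i, B i i = 0
  · obtain ⟨i, hi⟩ := hB0
    have hbi : b i = 0 := by
      have := hb i
      rw [hi, zero_mul, Real.sqrt_zero] at this
      exact abs_eq_zero.mp (le_antisymm this (abs_nonneg _))
    have hdet0 : A.det = 0 := by
      apply Matrix.det_eq_zero_of_row_eq_zero (Sum.inl i)
      rintro (j | j)
      · simp [hAdef, my_psd_row_zero hB hi j]
      · simp [hAdef, hbi]
    have hprod : (∏ k : Fin (n-1), B k k) = 0 :=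
      Finset.prod_eq_zero (Finset.mem_univ i) hi
    rw [hdet0, hprod]
    simp
  push_neg at hB0
  have hBpos : ∀ i, 0 < B i i := fun i => (hBdiag i).lt_of_ne' (hB0 i)
  have hapos : 0 < a := ha.lt_of_ne' ha0
  -- notation
  set d : Fin (n-1) → ℝ := fun i => Real.sqrt (B i i) with hddef
  have hdpos : ∀ i, 0 < d i := fun i => Real.sqrt_pos.mpr (hBpos i)
  have hdd : ∀ i, d i * d i = B i i := fun i => Real.mul_self_sqrt (hBdiag i)
  set s : ℝ := Real.sqrt a with hsdef
  have hspos : 0 < s := Real.sqrt_pos.mpr hapos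
  have hss : s * s = a := Real.mul_self_sqrt ha
  set b' : Fin (n-1) → ℝ := fun i => b i / (d i * s) with hb'def
  set B' : Matrix (Fin (n-1)) (Fin (n-1)) ℝ :=
    Matrix.of fun i j => B i j / (d i * d j) with hB'def
  -- Schur complement step
  letI : Invertible (Matrix.of fun _ _ => a : Matrix Unit Unit ℝ) :=
    ⟨Matrix.of fun _ _ => a⁻¹,
      by ext i j; simp [Matrix.mul_apply, Matrix.one_apply, inv_mul_cancel₀ ha0],
      by ext i j; simp [Matrix.mul_apply, Matrix.one_apply, mul_inv_cancel₀ ha0]⟩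
  have hinvOf : ⅟(Matrix.of fun _ _ => a : Matrix Unit Unit ℝ)
      = Matrix.of fun _ _ => a⁻¹ := rfl
  set N : Matrix (Fin (n-1)) (Fin (n-1)) ℝ :=
    Matrix.of fun i j => B i j - b i * a⁻¹ * b j with hNdef
  have hSchur : A.det = a * N.det := by
    rw [hAdef, Matrix.det_fromBlocks₂₂]
    congr 1
    · rw [Matrix.det_unique]; rfl
    · congr 1
      ext i j
      rw [hinvOf]
      simp [Matrix.mul_apply, hNdef]
  set M : Matrix (Fin (n-1)) (Fin (n-1)) ℝ :=
    B' - Matrix.replicateCol Unit b' * Matrix.replicateRow Unit b' with hMdef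
  have hNfact : N = Matrix.diagonal d * M * Matrix.diagonal d := by
    ext i j
    rw [Matrix.mul_diagonal, Matrix.diagonal_mul]
    have hcr : (Matrix.replicateCol Unit b' * Matrix.replicateRow Unit b') i j = b' i * b' j := by
      simp [Matrix.mul_apply, Matrix.replicateCol, Matrix.replicateRow]
    rw [hMdef, Matrix.sub_apply, hcr]
    simp only [hMdef, Matrix.sub_apply, hcr, hNdef, hB'def, Matrix.of_apply, hb'def]
    rw [← hss]
    have h1 := (hdpos i).ne'
    have h2 := (hdpos j).ne'
    have h3 := hspos.ne'
    field_simp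
  have hdetN : N.det = (∏ i, B i i) * M.det := by
    rw [hNfact, Matrix.det_mul, Matrix.det_mul, Matrix.det_diagonal]
    have hp : (∏ i, d i) * (∏ i, d i) = ∏ i, B i i := by
      rw [← Finset.prod_mul_distrib]
      exact Finset.prod_congr rfl fun i _ => hdd i
    calc (∏ i, d i) * M.det * (∏ i, d i)
        = ((∏ i, d i) * (∏ i, d i)) * M.det := by ring
      _ = (∏ i, B i i) * M.det := by rw [hp]
  -- B' is PSD with unit diagonal
  have hB'eq : Matrix.diagonal (fun i => (d i)⁻¹) * B
      * (Matrix.diagonal (fun i => (d i)⁻¹))ᴴ = B' := by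
    rw [Matrix.diagonal_conjTranspose]
    ext i j
    rw [Matrix.mul_diagonal, Matrix.diagonal_mul]
    simp only [hB'def, Matrix.of_apply, Pi.star_apply, star_trivial]
    rw [div_eq_mul_inv, mul_inv]
    ring
  have hB'psd : B'.PosSemidef := hB'eq ▸ hB.mul_mul_conjTranspose_same _
  have hB'diag : ∀ i, B' i i = 1 := by
    intro i
    simp only [hB'def, Matrix.of_apply]
    rw [hdd i, div_self (hBpos i).ne']
  -- spectral decomposition
  have hH := hB'psd.isHermitian
  set U : Matrix (Fin (n-1)) (Fin (n-1)) ℝ :=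
    (Matrix.IsHermitian.eigenvectorUnitary hH : Matrix (Fin (n-1)) (Fin (n-1)) ℝ) with hUdef
  set μ : Fin (n-1) → ℝ := hH.eigenvalues with hμdef
  have hspec : B' = U * Matrix.diagonal μ * star U := by
    have h := hH.spectral_theorem
    rwa [RCLike.ofReal_real_eq_id, Function.id_comp] at h
  have hU1 : U * star U = 1 :=
    Matrix.mem_unitaryGroup_iff.mp (Matrix.IsHermitian.eigenvectorUnitary hH).2
  have hU2 : star U * U = 1 :=
    Matrix.mem_unitaryGroup_iff'.mp (Matrix.IsHermitian.eigenvectorUnitary hH).2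
  have hstarU : star U = Uᵀ := by
    rw [Matrix.star_eq_conjTranspose, Matrix.conjTranspose_eq_transpose_of_trivial]
  set w : Fin (n-1) → ℝ := (star U) *ᵥ b' with hwdef
  have hUw : U *ᵥ w = b' := by
    rw [hwdef, Matrix.mulVec_mulVec, hU1, Matrix.one_mulVec]
  have hcolw : Matrix.replicateCol Unit w = star U * Matrix.replicateCol Unit b' := by
    ext i j
    simp [Matrix.mul_apply, Matrix.mulVec, dotProduct, hwdef, Matrix.replicateCol]
  have hroww : Matrix.replicateRow Unit w = Matrix.replicateRow Unit b' * U := by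
    ext i j
    simp only [Matrix.replicateRow_apply, Matrix.mul_apply, hwdef, Matrix.mulVec,
      dotProduct, hstarU, Matrix.transpose_apply]
    exact Finset.sum_congr rfl fun k _ => mul_comm _ _
  have h2 : U * (Matrix.replicateCol Unit w * Matrix.replicateRow Unit w) * star U
      = Matrix.replicateCol Unit b' * Matrix.replicateRow Unit b' := by
    rw [hcolw, hroww]
    simp only [← Matrix.mul_assoc]
    rw [hU1, Matrix.one_mul,
      Matrix.mul_assoc (Matrix.replicateCol Unit b' * Matrix.replicateRow Unit b') U (star U),
      hU1, Matrix.mul_one]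
  have hkey : M = U * (Matrix.diagonal μ - Matrix.replicateCol Unit w * Matrix.replicateRow Unit w)
      * star U := by
    rw [Matrix.mul_sub, Matrix.sub_mul, h2, ← hspec]
  have hdetMK : M.det
      = (Matrix.diagonal μ - Matrix.replicateCol Unit w * Matrix.replicateRow Unit w).det := by
    rw [hkey, Matrix.det_mul, Matrix.det_mul]
    have hdetU : U.det * (star U).det = 1 := by
      rw [← Matrix.det_mul, hU1, Matrix.det_one]
    calc U.det * (Matrix.diagonal μ - Matrix.replicateCol Unit w * Matrix.replicateRow Unit w).det
          * (star U).det
        = (Matrix.diagonal μ - Matrix.replicateCol Unit w * Matrix.replicateRow Unit w).det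
          * (U.det * (star U).det) := by ring
      _ = _ := by rw [hdetU, mul_one]
  -- eigenvalue and vector norms facts
  have hc1 : ((n - 1 : ℕ) : ℝ) = (n:ℝ) - 1 := by
    have h1 : 1 ≤ n := by omega
    push_cast [h1]
    ring
  have htrace : ∑ i, μ i = ((n:ℝ) - 1) := by
    have h1 : B'.trace = ((n-1:ℕ) : ℝ) := by
      simp [Matrix.trace, Matrix.diag, hB'diag]
    have h2 : B'.trace = ∑ i, μ i := by
      rw [hspec, Matrix.trace_mul_cycle, hU2, Matrix.one_mul]
      simp [Matrix.trace, Matrix.diag]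
    rw [← hc1, ← h1, h2]
  have hμnonneg : ∀ i, 0 ≤ μ i := hB'psd.eigenvalues_nonneg
  have hb'sq : ∀ i, b' i * b' i ≤ 1 := by
    intro i
    have hbb : b i * b i ≤ B i i * a := by
      have h := hb i
      nlinarith [Real.sq_sqrt (mul_nonneg (hBdiag i) ha), abs_nonneg (b i),
        abs_mul_abs_self (b i)]
    have hpos : 0 < B i i * a := mul_pos (hBpos i) hapos
    have : b' i * b' i = (b i * b i) / (B i i * a) := by
      simp only [hb'def]
      rw [div_mul_div_comm]
      congr 1
      rw [← hdd i, ← hss]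
      ring
    rw [this]
    exact (div_le_one hpos).mpr hbb
  have hwb : ∑ i, w i * w i = ∑ i, b' i * b' i := by
    have h1 : w ⬝ᵥ w = b' ⬝ᵥ b' := by
      calc w ⬝ᵥ w = w ⬝ᵥ (star U *ᵥ b') := rfl
        _ = (w ᵥ* star U) ⬝ᵥ b' := by rw [Matrix.dotProduct_mulVec]
        _ = b' ⬝ᵥ b' := by rw [hstarU, Matrix.vecMul_transpose, hUw]
    simpa [dotProduct] using h1
  have hwsum : ∑ i, w i * w i ≤ ((n:ℝ) - 1) := by
    rw [hwb]
    calc ∑ i, b' i * b' i ≤ ∑ _i : Fin (n-1), (1:ℝ) :=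
          Finset.sum_le_sum fun i _ => hb'sq i
      _ = ((n-1:ℕ) : ℝ) := by simp
      _ = (n:ℝ) - 1 := hc1
  -- apply the core bound
  have hm2 : 2 ≤ n - 1 := by omega
  have hcore := my_core (n-1) hm2 μ w hμnonneg (by rw [hc1]; exact htrace.le)
    (by rw [hc1]; exact hwsum)
  rw [hc1] at hcore
  have hc3 : n - 1 - 1 = n - 2 := by omega
  rw [hc3] at hcore
  have hc2 : (n:ℝ) - 1 - 1 = (n:ℝ) - 2 := by ring
  rw [hc2] at hcore
  -- assemble
  have hfinal : A.det = (a * ∏ i, B i i)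
      * (Matrix.diagonal μ - Matrix.replicateCol Unit w * Matrix.replicateRow Unit w).det := by
    rw [hSchur, hdetN, hdetMK]; ring
  have hprodpos : 0 < a * ∏ i, B i i :=
    mul_pos hapos (Finset.prod_pos fun i _ => hBpos i)
  rw [ge_iff_le, hfinal]
  calc -((n:ℝ) - 1) * (((n:ℝ) - 1) / ((n:ℝ) - 2)) ^ (n - 2)
        * ((∏ i : Fin (n-1), B i i) * a)
      = (a * ∏ i, B i i)
        * (-((n:ℝ) - 1) * (((n:ℝ) - 1) / ((n:ℝ) - 2)) ^ (n - 2)) := by ring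
    _ ≤ (a * ∏ i, B i i)
        * (Matrix.diagonal μ - Matrix.replicateCol Unit w * Matrix.replicateRow Unit w).det := by
        exact mul_le_mul_of_nonneg_left hcore hprodpos.le
end

section
/- Let n ≥ 3 and let A = [[B, b],[bᵀ, a_{nn}]] be an n×n real symmetric matrix where B is (n−1)×(n−1) positive definite, det(A) ≤ 0, a_{nn} > 0, and |b_i| ≤ √(a_{ii}·a_{nn}) for i = 1,…,n−1 (a_{ii} being the diagonal entries of B). Then det(A) > −(n−1)·((n−1)/(n−2))^(n−2) · a_{11}···a_{nn} (strict inequality). -/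
open Matrix Finset

/-- AM-GM: the product over a nonempty finset is at most (sum/card)^card. -/
lemma amgm_aux {ι : Type*} (s : Finset ι) (f : ι → ℝ) (hf : ∀ i ∈ s, 0 ≤ f i)
    (hs : s.Nonempty) :
    ∏ i ∈ s, f i ≤ ((∑ i ∈ s, f i) / s.card) ^ s.card := by
  have hcard : (0:ℝ) < s.card := by exact_mod_cast hs.card_pos
  have h := Real.geom_mean_le_arith_mean s (fun _ => 1) f (by intro i _; norm_num)
    (by simpa using hcard) hf
  simp only [Real.rpow_one, Finset.sum_const, nsmul_eq_mul, mul_one, one_mul] at h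
  -- h : (∏ i in s, f i) ^ ((s.card : ℝ))⁻¹ ≤ (∑ i in s, f i) / s.card
  have hp : (0:ℝ) ≤ ∏ i ∈ s, f i := Finset.prod_nonneg hf
  have h2 := pow_le_pow_left₀ (Real.rpow_nonneg hp _) h s.card
  rwa [← Real.rpow_natCast ((∏ i ∈ s, f i) ^ ((s.card : ℝ))⁻¹) s.card,
    ← Real.rpow_mul hp, inv_mul_cancel₀ hcard.ne', Real.rpow_one] at h2

/-- Strict determinant lower bound for a bordered positive definite matrix. -/
theorem det_lower_bound_bordered_pd
    (n : ℕ) (hn : 3 ≤ n)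
    (B : Matrix (Fin (n - 1)) (Fin (n - 1)) ℝ) (b : Fin (n - 1) → ℝ) (a : ℝ)
    (A : Matrix (Fin (n - 1) ⊕ Unit) (Fin (n - 1) ⊕ Unit) ℝ)
    (hAdef : A = Matrix.fromBlocks B (Matrix.of fun i _ => b i)
      (Matrix.of fun _ j => b j) (Matrix.of fun _ _ => a))
    (hB : B.PosDef)
    (hdet : A.det ≤ 0) (ha : 0 < a)
    (hb : ∀ i : Fin (n - 1), |b i| ≤ Real.sqrt (B i i * a)) :
    A.det > -((n : ℝ) - 1) * (((n : ℝ) - 1) / ((n : ℝ) - 2)) ^ (n - 2) *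
      ((∏ i : Fin (n - 1), B i i) * a) := by
  classical
  set K : ℝ := (((n : ℝ) - 1) / ((n : ℝ) - 2)) ^ (n - 2) with hK
  -- diagonal entries are positive
  have hdiag : ∀ i, 0 < B i i := by
    intro i
    have h := (posDef_iff_dotProduct_mulVec.mp hB).2 (x := Pi.single i 1) (by
      intro h; simpa using congrFun h i)
    simpa [dotProduct, Matrix.mulVec, Pi.single_apply, Finset.mul_sum] using h
  set d : Fin (n-1) → ℝ := fun i => Real.sqrt (B i i) with hd
  have hdpos : ∀ i, 0 < d i := fun i => Real.sqrt_pos.mpr (hdiag i)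
  have hdsq : ∀ i, d i * d i = B i i := fun i => Real.mul_self_sqrt (hdiag i).le
  set E : Matrix (Fin (n-1)) (Fin (n-1)) ℝ := diagonal d with hE
  set F : Matrix (Fin (n-1)) (Fin (n-1)) ℝ := diagonal (fun i => (d i)⁻¹) with hF
  have hEF : E * F = 1 := by
    rw [hE, hF, diagonal_mul_diagonal,
      show (fun i => d i * (d i)⁻¹) = (fun _ => (1:ℝ)) from
        funext fun i => mul_inv_cancel₀ (hdpos i).ne', diagonal_one]
  have hFE : F * E = 1 := by
    rw [hE, hF, diagonal_mul_diagonal,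
      show (fun i => (d i)⁻¹ * d i) = (fun _ => (1:ℝ)) from
        funext fun i => inv_mul_cancel₀ (hdpos i).ne', diagonal_one]
  set B' : Matrix (Fin (n-1)) (Fin (n-1)) ℝ := F * B * F with hB'def
  have hB'pos : B'.PosDef := by
    rw [posDef_iff_dotProduct_mulVec]
    constructor
    · rw [hB'def]
      have : F = Fᴴ := by
        rw [hF]; ext i j; simp [diagonal, Matrix.conjTranspose_apply, diagonal_apply]
        by_cases h : i = j
        · subst h; simp
        · simp [h, Ne.symm h]
      nth_rewrite 1 [this]
      exact Matrix.isHermitian_conjTranspose_mul_mul F hB.1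
    · intro x hx
      have hFx : F *ᵥ x ≠ 0 := by
        intro h
        apply hx
        funext i
        have := congrFun h i
        simp [hF, Matrix.mulVec_diagonal] at this
        rcases this with h1 | h1
        · exact absurd h1 (hdpos i).ne'
        · exact h1
      have h := (posDef_iff_dotProduct_mulVec.mp hB).2 hFx
      have heq : star x ⬝ᵥ (B' *ᵥ x) = star (F *ᵥ x) ⬝ᵥ (B *ᵥ (F *ᵥ x)) := by
        rw [hB'def, ← Matrix.mulVec_mulVec, ← Matrix.mulVec_mulVec]
        simp only [dotProduct, Matrix.mulVec_diagonal, hF, star_trivial, Pi.star_apply]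
        apply Finset.sum_congr rfl
        intro i _
        ring
      rw [heq]
      exact h
  have hB'detpos : 0 < B'.det := hB'pos.det_pos
  have hBfact : B = E * B' * E := by
    rw [hB'def]
    calc B = 1 * B * 1 := by rw [one_mul, mul_one]
    _ = (E * F) * B * (F * E) := by rw [hEF, hFE]
    _ = E * (F * B * F) * E := by noncomm_ring
  have hdetE : E.det = ∏ i, d i := by rw [hE, det_diagonal]
  have hPpos : 0 < ∏ i, B i i := Finset.prod_pos fun i _ => hdiag i
  have hdetB : B.det = (∏ i, B i i) * B'.det := by
    conv_lhs => rw [hBfact]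
    rw [det_mul, det_mul, hdetE]
    rw [mul_comm ((∏ i, d i) * B'.det) (∏ i, d i), ← mul_assoc]
    congr 1
    rw [← Finset.prod_mul_distrib]
    exact Finset.prod_congr rfl fun i _ => hdsq i
  -- Schur complement
  haveI : Invertible B := invertibleOfIsUnitDet B (isUnit_iff_ne_zero.mpr hB.det_pos.ne')
  set q : ℝ := b ⬝ᵥ (B⁻¹ *ᵥ b) with hq
  have hschur : A.det = B.det * (a - q) := by
    rw [hAdef, det_fromBlocks₁₁]
    congr 1
    rw [det_unique, Matrix.sub_apply]
    congr 1
    rw [invOf_eq_nonsing_inv, hq]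
    simp only [Matrix.mul_apply, Matrix.of_apply, dotProduct, Matrix.mulVec,
      Finset.sum_mul, Finset.mul_sum]
    rw [Finset.sum_comm]
    apply Finset.sum_congr rfl
    intro i _
    apply Finset.sum_congr rfl
    intro j _
    ring
  -- rewrite q using B'
  set c : Fin (n-1) → ℝ := F *ᵥ b with hc
  have hB'inv : B⁻¹ = F * B'⁻¹ * F := by
    apply inv_eq_right_inv
    rw [hBfact]
    calc E * B' * E * (F * B'⁻¹ * F) = E * B' * (E * F) * B'⁻¹ * F := by noncomm_ring
    _ = E * (B' * B'⁻¹) * F := by rw [hEF]; noncomm_ring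
    _ = E * F := by rw [Matrix.mul_nonsing_inv _ (isUnit_iff_ne_zero.mpr hB'detpos.ne'), mul_one]
    _ = 1 := hEF
  have hqc : q = c ⬝ᵥ (B'⁻¹ *ᵥ c) := by
    rw [hq, hB'inv, ← Matrix.mulVec_mulVec, ← Matrix.mulVec_mulVec, hc]
    simp only [dotProduct, hF, Matrix.mulVec_diagonal]
    apply Finset.sum_congr rfl
    intro i _
    ring
  -- spectral decomposition of B'
  have hH := hB'pos.1
  set U : Matrix (Fin (n-1)) (Fin (n-1)) ℝ := (hH.eigenvectorUnitary : Matrix (Fin (n-1)) (Fin (n-1)) ℝ) with hU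
  set lam : Fin (n-1) → ℝ := hH.eigenvalues with hlam
  have hlpos : ∀ i, 0 < lam i := fun i => hB'pos.eigenvalues_pos i
  have hspec : B' = U * diagonal lam * star U := by
    have h := hH.spectral_theorem
    simpa [hU, hlam] using h
  have hUstar : star U * U = 1 := by
    simpa [hU] using Matrix.UnitaryGroup.star_mul_self hH.eigenvectorUnitary
  have hUstar' : U * star U = 1 := by
    simpa [hU] using Matrix.mem_unitaryGroup_iff.mp hH.eigenvectorUnitary.2
  -- trace and determinant
  have hcastm : ((n - 1 : ℕ) : ℝ) = (n : ℝ) - 1 := by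
    have : 1 ≤ n := by omega
    push_cast [this]; ring
  have hsum : ∑ i, lam i = (n : ℝ) - 1 := by
    have t1 : B'.trace = ∑ i, lam i := by
      rw [hspec, Matrix.trace_mul_cycle, hUstar, one_mul, Matrix.trace_diagonal]
    have hdiagB' : ∀ i, B' i i = 1 := by
      intro i
      rw [hB'def]
      have h1 : (F * B * F) i i = (d i)⁻¹ * B i i * (d i)⁻¹ := by
        rw [hF, Matrix.mul_diagonal, Matrix.diagonal_mul]
      have h2 := (hdpos i).ne'
      rw [h1, ← hdsq i]
      field_simp
    have t2 : B'.trace = (n : ℝ) - 1 := by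
      rw [Matrix.trace]
      simp only [Matrix.diag_apply, hdiagB']
      simp [hcastm]
    rw [← t1, t2]
  have hprod : ∏ i, lam i = B'.det := by
    have := hH.det_eq_prod_eigenvalues
    simpa [hlam] using this.symm
  -- inverse of B'
  have hB'invspec : B'⁻¹ = U * diagonal (fun i => (lam i)⁻¹) * star U := by
    apply inv_eq_right_inv
    rw [hspec]
    calc U * diagonal lam * star U * (U * diagonal (fun i => (lam i)⁻¹) * star U)
        = U * diagonal lam * (star U * U) * diagonal (fun i => (lam i)⁻¹) * star U := by
          noncomm_ring
    _ = U * (diagonal lam * diagonal (fun i => (lam i)⁻¹)) * star U := by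
          rw [hUstar]; noncomm_ring
    _ = U * 1 * star U := by
          rw [diagonal_mul_diagonal,
            show (fun i => lam i * (lam i)⁻¹) = (fun _ => (1:ℝ)) from
              funext fun i => mul_inv_cancel₀ (hlpos i).ne', diagonal_one]
    _ = 1 := by rw [mul_one, hUstar']
  set y : Fin (n-1) → ℝ := c ᵥ* U with hy
  have hyz : star U *ᵥ c = y := by
    funext i
    simp [hy, Matrix.mulVec, Matrix.vecMul, dotProduct, Matrix.star_apply, mul_comm]
  have hq2 : q = ∑ i, (lam i)⁻¹ * (y i)^2 := by
    rw [hqc, hB'invspec, ← Matrix.mulVec_mulVec, ← Matrix.mulVec_mulVec, hyz,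
      Matrix.dotProduct_mulVec]
    simp only [← hy]
    simp only [dotProduct, Matrix.mulVec_diagonal]
    apply Finset.sum_congr rfl
    intro i _
    ring
  have hynorm : ∑ i, (y i)^2 = ∑ i, (c i)^2 := by
    have h1 : y ⬝ᵥ y = c ⬝ᵥ c := by
      calc y ⬝ᵥ y = y ⬝ᵥ (star U *ᵥ c) := by rw [hyz]
      _ = (y ᵥ* star U) ⬝ᵥ c := by rw [Matrix.dotProduct_mulVec]
      _ = ((c ᵥ* U) ᵥ* star U) ⬝ᵥ c := by rw [hy]
      _ = (c ᵥ* (U * star U)) ⬝ᵥ c := by rw [Matrix.vecMul_vecMul]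
      _ = c ⬝ᵥ c := by rw [hUstar', Matrix.vecMul_one]
    simpa [dotProduct, sq] using h1
  -- bound on c
  have hcb : ∀ i, (c i)^2 ≤ a := by
    intro i
    have hci : c i = (d i)⁻¹ * b i := by
      simp [hc, hF, Matrix.mulVec_diagonal]
    have hbi : (b i)^2 ≤ B i i * a := by
      have h1 := hb i
      have h2 : (b i)^2 = |b i|^2 := (sq_abs _).symm
      rw [h2]
      calc |b i|^2 ≤ (Real.sqrt (B i i * a))^2 :=
        pow_le_pow_left₀ (abs_nonneg _) h1 2
      _ = B i i * a := Real.sq_sqrt (mul_nonneg (hdiag i).le ha.le)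
    rw [hci, mul_pow]
    have : ((d i)⁻¹)^2 = (B i i)⁻¹ := by
      rw [← hdsq i]; rw [sq]; rw [mul_inv]
    rw [this]
    rw [inv_mul_le_iff₀ (hdiag i)]
    linarith [hbi]
  -- AM-GM bound on products of eigenvalues
  have hKnonneg : (0:ℝ) ≤ K := by
    rw [hK]
    apply pow_nonneg
    apply div_nonneg <;> [skip; skip] <;>
      · have : (3:ℝ) ≤ (n:ℝ) := by exact_mod_cast hn
        linarith
  have hKb : ∀ i : Fin (n-1), ∏ j ∈ univ.erase i, lam j ≤ K := by
    intro i
    have hcard : (univ.erase i).card = n - 2 := by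
      rw [Finset.card_erase_of_mem (mem_univ i), Finset.card_univ, Fintype.card_fin]
      omega
    have hne : (univ.erase i).Nonempty := by
      rw [← Finset.card_pos, hcard]; omega
    have h1 := amgm_aux (univ.erase i) lam (fun j _ => (hlpos j).le) hne
    rw [hcard] at h1
    have hsumle : ∑ j ∈ univ.erase i, lam j ≤ (n:ℝ) - 1 := by
      rw [← hsum]
      apply Finset.sum_le_sum_of_subset_of_nonneg (Finset.subset_univ _)
      intro j _ _
      exact (hlpos j).le
    have hcast2 : ((n - 2 : ℕ) : ℝ) = (n : ℝ) - 2 := by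
      have : 2 ≤ n := by omega
      push_cast [this]; ring
    have hn2pos : (0:ℝ) < (n : ℝ) - 2 := by
      have : (3:ℝ) ≤ (n:ℝ) := by exact_mod_cast hn
      linarith
    calc ∏ j ∈ univ.erase i, lam j
        ≤ ((∑ j ∈ univ.erase i, lam j) / ((n - 2 : ℕ) : ℝ)) ^ (n - 2) := h1
    _ ≤ (((n:ℝ) - 1) / ((n:ℝ) - 2)) ^ (n - 2) := by
        apply pow_le_pow_left₀
        · apply div_nonneg
          · exact Finset.sum_nonneg fun j _ => (hlpos j).le
          · rw [hcast2]; linarith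
        · rw [hcast2]
          exact (div_le_div_iff_of_pos_right hn2pos).mpr hsumle
    _ = K := by rw [hK]
  -- main bound : B'.det * q ≤ ((n:ℝ)-1) * K * a
  have hmain : B'.det * q ≤ ((n:ℝ) - 1) * K * a := by
    have h1 : B'.det * q = ∑ i, (∏ j ∈ univ.erase i, lam j) * (y i)^2 := by
      rw [hq2, Finset.mul_sum]
      apply Finset.sum_congr rfl
      intro i _
      rw [← hprod]
      have : (∏ j, lam j) * (lam i)⁻¹ = ∏ j ∈ univ.erase i, lam j := by
        rw [← Finset.prod_erase_mul univ lam (mem_univ i), mul_assoc,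
          mul_inv_cancel₀ (hlpos i).ne', mul_one]
      rw [← mul_assoc, this]
    rw [h1]
    calc ∑ i, (∏ j ∈ univ.erase i, lam j) * (y i)^2
        ≤ ∑ i, K * (y i)^2 := by
          apply Finset.sum_le_sum
          intro i _
          exact mul_le_mul_of_nonneg_right (hKb i) (sq_nonneg _)
    _ = K * ∑ i, (y i)^2 := by rw [Finset.mul_sum]
    _ = K * ∑ i, (c i)^2 := by rw [hynorm]
    _ ≤ K * (((n:ℝ) - 1) * a) := by
        apply mul_le_mul_of_nonneg_left _ hKnonneg
        calc ∑ i, (c i)^2 ≤ ∑ _i : Fin (n-1), a := Finset.sum_le_sum fun i _ => hcb i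
        _ = ((n:ℝ) - 1) * a := by
            rw [Finset.sum_const, Finset.card_univ, Fintype.card_fin, nsmul_eq_mul, hcastm]
    _ = ((n:ℝ) - 1) * K * a := by ring
  -- conclude
  have hApos : A.det = (∏ i, B i i) * B'.det * a - (∏ i, B i i) * (B'.det * q) := by
    rw [hschur, hdetB]; ring
  have hfinal : (∏ i, B i i) * (B'.det * q) ≤ (∏ i, B i i) * (((n:ℝ) - 1) * K * a) :=
    mul_le_mul_of_nonneg_left hmain hPpos.le
  have hposterm : 0 < (∏ i, B i i) * B'.det * a := by positivity
  rw [hApos]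
  nlinarith [hfinal, hposterm]
end

section
/- Let n ≥ 3, and let A be the n×n symmetric matrix whose top-left (n−1)×(n−1) block B has entries b_{ii} = 1 and b_{ij} = −1/(n−2) for i ≠ j, with last column/row given by b = (1,…,1)ᵀ and a_{nn} = 1. Then every proper principal minor of B is positive, det(B) = 0, and det(A) = −(n−1)·((n−1)/(n−2))^(n−2). In particular, this matrix attains equality in the determinant lower bound det(A) ≥ −(n−1)·((n−1)/(n−2))^(n−2)·a_{11}···a_{nn}. -/
open Matrix Finset

lemma det_const_diag {m : Type*} [Fintype m] [DecidableEq m] [Nonempty m]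
    (x y : ℝ) (h : x ≠ y) :
    ((Matrix.of fun i j => if i = j then x else y : Matrix m m ℝ)).det
      = (x - y) ^ (Fintype.card m - 1) * (x + (Fintype.card m - 1) * y) := by
  have hxy : x - y ≠ 0 := sub_ne_zero.mpr h
  have key : (Matrix.of fun i j : m => if i = j then x else y)
      = (x - y) • (1 + Matrix.replicateCol Unit (fun _ => (1 : ℝ))
          * Matrix.replicateRow Unit (fun _ => y / (x - y))) := by
    ext i j
    simp only [Matrix.of_apply, Matrix.smul_apply, Matrix.add_apply, Matrix.one_apply,
      Matrix.mul_apply, Matrix.replicateCol_apply, Matrix.replicateRow_apply, Finset.sum_const,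
      Finset.card_univ, Fintype.card_unit, one_smul, smul_eq_mul]
    by_cases hij : i = j <;> simp [hij] <;> field_simp <;> ring
  rw [key, Matrix.det_smul, Matrix.det_one_add_replicateCol_mul_replicateRow]
  have hsum : (fun _ : m => y / (x - y)) ⬝ᵥ (fun _ => (1 : ℝ))
      = (Fintype.card m : ℝ) * (y / (x - y)) := by
    simp [dotProduct, Finset.sum_const, Finset.card_univ, mul_comm]
  rw [hsum]
  obtain ⟨k, hk⟩ : ∃ k, Fintype.card m = k + 1 :=
    ⟨Fintype.card m - 1, (Nat.succ_pred_eq_of_pos Fintype.card_pos).symm⟩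
  rw [hk]
  simp only [Nat.add_sub_cancel]
  push_cast
  field_simp
  ring

/-- The bordered extremal example: with `B` having unit diagonal and off-diagonal entries
`-1/(n-2)`, border vector of ones and corner entry `1`, every proper principal minor of `B`
is positive, `det B = 0`, and `det A` attains the bordered determinant lower bound. -/
theorem extremal_bordered_matrix
    (n : ℕ) (hn : 3 ≤ n)
    (B : Matrix (Fin (n - 1)) (Fin (n - 1)) ℝ)
    (hBdef : ∀ i j : Fin (n - 1), B i j = if i = j then 1 else -(1 / ((n : ℝ) - 2)))
    (A : Matrix (Fin (n - 1) ⊕ Unit) (Fin (n - 1) ⊕ Unit) ℝ)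
    (hAdef : A = Matrix.fromBlocks B (Matrix.of fun _ _ => (1 : ℝ))
      (Matrix.of fun _ _ => (1 : ℝ)) (Matrix.of fun _ _ => (1 : ℝ))) :
    (∀ s : Finset (Fin (n - 1)), s ≠ Finset.univ →
      0 < (B.submatrix (fun j : {j : Fin (n - 1) // j ∈ s} => (j : Fin (n - 1)))
        (fun j : {j : Fin (n - 1) // j ∈ s} => (j : Fin (n - 1)))).det) ∧
    B.det = 0 ∧
    A.det = -((n : ℝ) - 1) * (((n : ℝ) - 1) / ((n : ℝ) - 2)) ^ (n - 2) := by
  obtain ⟨m, rfl⟩ : ∃ m, n = m + 3 := ⟨n - 3, by omega⟩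
  set c : ℝ := 1 / ((m : ℝ) + 1) with hc
  have hm1 : (0 : ℝ) < (m : ℝ) + 1 := by positivity
  have hcpos : 0 < c := by positivity
  have hcast : ((m + 3 : ℕ) : ℝ) - 2 = (m : ℝ) + 1 := by push_cast; ring
  have hB' : ∀ i j, B i j = if i = j then 1 else -c := by
    intro i j; rw [hBdef i j, hcast]
  have hcard : m + 3 - 1 = m + 2 := rfl
  refine ⟨?_, ?_, ?_⟩
  · intro s hs
    rcases s.eq_empty_or_nonempty with rfl | hne
    · haveI : IsEmpty {j : Fin (m + 3 - 1) // j ∈ (∅ : Finset (Fin (m + 3 - 1)))} := by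
        constructor; rintro ⟨j, hj⟩; simp at hj
      rw [Matrix.det_isEmpty]; norm_num
    · haveI : Nonempty {j : Fin (m + 3 - 1) // j ∈ s} := by
        obtain ⟨j, hj⟩ := hne; exact ⟨⟨j, hj⟩⟩
      have heq : B.submatrix (fun j : {j : Fin (m + 3 - 1) // j ∈ s} => (j : Fin (m + 3 - 1)))
            (fun j : {j : Fin (m + 3 - 1) // j ∈ s} => (j : Fin (m + 3 - 1)))
          = Matrix.of fun i j => if i = j then (1 : ℝ) else -c := by
        ext i j
        simp only [Matrix.submatrix_apply, Matrix.of_apply]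
        rw [hB' i j]
        by_cases hij : (i : Fin (m + 3 - 1)) = (j : Fin (m + 3 - 1))
        · rw [if_pos hij, if_pos (Subtype.ext hij)]
        · rw [if_neg hij, if_neg fun hh => hij (congrArg _ hh)]
      rw [heq, det_const_diag 1 (-c) (by linarith)]
      have hcards : Fintype.card {j : Fin (m + 3 - 1) // j ∈ s} = s.card :=
        Fintype.card_coe s
      have hslt : s.card < m + 2 := by
        have := Finset.card_lt_card (lt_of_le_of_ne (Finset.subset_univ s) hs)
        simpa [hcard, Finset.card_univ] using this
      rw [hcards]
      obtain ⟨k, hk⟩ : ∃ k, s.card = k + 1 :=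
        ⟨s.card - 1, (Nat.succ_pred_eq_of_pos (Finset.card_pos.mpr hne)).symm⟩
      have hkle : (k : ℝ) ≤ (m : ℝ) := by
        have : k ≤ m := by omega
        exact_mod_cast this
    -- det = (1+c)^k * (1 - k*c)
      rw [hk]
      simp only [Nat.add_sub_cancel]
      push_cast
      have h1 : (0:ℝ) < 1 - -c := by linarith
      have h2 : (0:ℝ) < 1 + ((k : ℝ) + 1 - 1) * -c := by
        rw [hc]
        have : (k : ℝ) * (1 / ((m:ℝ)+1)) < 1 := by
          rw [mul_one_div, div_lt_one hm1]; linarith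
        have hkk : ((k : ℝ) + 1 - 1) = (k : ℝ) := by ring
        rw [hkk]; linarith
      exact mul_pos (pow_pos h1 k) h2
  · have heq : B = Matrix.of fun i j => if i = j then (1 : ℝ) else -c := by
      ext i j; rw [hB' i j]; rfl
    haveI : Nonempty (Fin (m + 3 - 1)) := ⟨⟨0, by omega⟩⟩
    rw [heq, det_const_diag 1 (-c) (by linarith)]
    have : (Fintype.card (Fin (m + 3 - 1)) : ℝ) - 1 = (m : ℝ) + 1 := by
      simp [hcard]; push_cast; ring
    have hc2 : Fintype.card (Fin (m + 3 - 1)) - 1 = m + 1 := by simp [hcard]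
    rw [hc2]
    simp only [Fintype.card_fin, hcard]
    push_cast
    rw [hc]
    field_simp
    ring_nf
  · have hD : (Matrix.of fun _ _ => (1 : ℝ) : Matrix Unit Unit ℝ) = 1 := by
      ext i j; simp [Matrix.one_apply, Subsingleton.elim i j]
    rw [hAdef, hD, Matrix.det_fromBlocks_one₂₂]
    have heq : B - (Matrix.of fun _ _ => (1 : ℝ) : Matrix (Fin (m + 3 - 1)) Unit ℝ)
        * (Matrix.of fun _ _ => (1 : ℝ) : Matrix Unit (Fin (m + 3 - 1)) ℝ)
        = Matrix.of fun i j => if i = j then (0 : ℝ) else -(1 + c) := by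
      ext i j
      simp only [Matrix.sub_apply, Matrix.mul_apply, Matrix.of_apply, Finset.sum_const,
        Finset.card_univ, Fintype.card_unit, one_smul, mul_one]
      rw [hB' i j]
      by_cases hij : i = j <;> simp [hij] <;> ring
    haveI : Nonempty (Fin (m + 3 - 1)) := ⟨⟨0, by omega⟩⟩
    rw [heq, det_const_diag 0 (-(1 + c)) (by intro h; linarith [hcpos])]
    have hc2 : Fintype.card (Fin (m + 3 - 1)) - 1 = m + 1 := by simp [hcard]
    have hexp : m + 3 - 2 = m + 1 := rfl
    rw [hc2, hexp]
    have hd : (0:ℝ) - -(1 + c) = ((m:ℝ) + 2) / ((m:ℝ) + 1) := by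
      rw [hc]; field_simp; ring
    have h2 : (0 + ((Fintype.card (Fin (m + 3 - 1)) : ℝ) - 1) * -(1 + c)) = -((m:ℝ) + 2) := by
      rw [Fintype.card_fin, hcard]; push_cast; rw [hc]; field_simp; ring
    have hd2 : ((m + 3 : ℕ) : ℝ) - 1 = (m : ℝ) + 2 := by push_cast; ring
    have hd3 : ((m + 3 : ℕ) : ℝ) - 2 = (m : ℝ) + 1 := by push_cast; ring
    rw [hd, h2, hd2, hd3]
    ring
end

section
/- Let n ≥ 3. Set p = ((n−2)/(n−1))^(n−1), t = (1−p)/(n−1), s² = (1+(n−2)p)/((n−1)(n−2)), and B = I_{n−1} − t·J_{n−1}. Let A be the n×n symmetric matrix with top-left block B, last column s·𝟏, and bottom-right entry 1. Then every (n−1)×(n−1) principal submatrix of A is positive semidefinite, det(A) = −1/(n−2), det(B) = p, and det(A) = −(1/(n−2))·((n−1)/(n−2))^(n−1)·det(B)·1, i.e., the extended Fischer inequality with α = {n} holds with equality for A. -/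
open Matrix Finset

/-- A matrix of the form `diag(w) - c • w wᵀ` with `w` idempotent entrywise (0/1 vector),
`c ≥ 0` and `c * ∑ w ≤ 1`, is positive semidefinite. -/
lemma aux_psd {ι : Type*} [Fintype ι] [DecidableEq ι] (w : ι → ℝ)
    (hw : ∀ i, w i * w i = w i) (c : ℝ) (hc : 0 ≤ c) (h : c * ∑ i, w i ≤ 1) :
    Matrix.PosSemidef (Matrix.of fun i j => (if i = j then w i else 0) - c * (w i * w j)) := by
  refine Matrix.posSemidef_iff_dotProduct_mulVec.mpr ⟨?_, ?_⟩
  · ext i j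
    simp only [conjTranspose_apply, Matrix.of_apply, star_trivial]
    by_cases hij : i = j
    · subst hij; ring
    · rw [if_neg hij, if_neg (Ne.symm hij)]; ring
  · intro x
    have inner : ∀ i, (∑ j, ((if i = j then w i else 0) - c * (w i * w j)) * x j)
        = w i * x i - c * (w i * ∑ j, w j * x j) := by
      intro i
      have e : ∀ j, ((if i = j then w i else 0) - c * (w i * w j)) * x j
          = (if i = j then w i * x j else 0) - c * w i * (w j * x j) := by
        intro j; split_ifs <;> ring
      simp_rw [e, Finset.sum_sub_distrib, ← Finset.mul_sum, Finset.sum_ite_eq, Finset.mem_univ,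
        if_true]
      ring
    have key : dotProduct (star x)
        ((Matrix.of fun i j => (if i = j then w i else 0) - c * (w i * w j)) *ᵥ x)
        = (∑ i, w i * x i ^ 2) - c * (∑ i, w i * x i) ^ 2 := by
      simp only [dotProduct, mulVec, dotProduct, Matrix.of_apply, Pi.star_apply, star_trivial]
      simp_rw [inner]
      have e : ∀ i, x i * (w i * x i - c * (w i * ∑ j, w j * x j))
          = w i * x i ^ 2 - c * ((w i * x i) * ∑ j, w j * x j) := fun i => by ring
      simp_rw [e, Finset.sum_sub_distrib, ← Finset.mul_sum, ← Finset.sum_mul]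
      ring
    rw [key]
    have hT : (∑ i, w i * x i) ^ 2 ≤ (∑ i, w i) * ∑ i, w i * x i ^ 2 := by
      have := Finset.sum_mul_sq_le_sq_mul_sq Finset.univ w (fun i => w i * x i)
      have e1 : ∀ i, w i * (w i * x i) = w i * x i := fun i => by rw [← mul_assoc, hw]
      have e2 : ∀ i, w i ^ 2 = w i := fun i => by rw [sq, hw]
      have e3 : ∀ i, (w i * x i) ^ 2 = w i * x i ^ 2 := fun i => by
        rw [mul_pow, sq, hw]
      simp_rw [e1, e2, e3] at this
      exact this
    have hQ : 0 ≤ ∑ i, w i * x i ^ 2 := by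
      refine Finset.sum_nonneg fun i _ => ?_
      nlinarith [hw i, sq_nonneg (w i * x i)]
    nlinarith [mul_le_mul_of_nonneg_left hT hc, mul_le_mul_of_nonneg_right h hQ]

/-- A symmetric outer product `v vᵀ` is positive semidefinite. -/
lemma aux_vvT {ι : Type*} [Fintype ι] (v : ι → ℝ) :
    Matrix.PosSemidef (Matrix.vecMulVec v v) := by
  have hvv : Matrix.vecMulVec v v = (Matrix.replicateRow Unit v)ᴴ * (Matrix.replicateRow Unit v) := by
    ext i j
    simp [Matrix.vecMulVec_apply, Matrix.mul_apply, Matrix.replicateRow_apply,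
      Matrix.conjTranspose_apply]
  rw [hvv]
  exact Matrix.posSemidef_conjTranspose_mul_self _

/-- The extremal example for the extended Fischer inequality with `α = {n}`: all
`(n-1)×(n-1)` principal submatrices of `A` are PSD, `det A = -1/(n-2)`, `det B = p`, and
equality holds in the extended Fischer inequality. -/
theorem extremal_matrix_extended_fischer
    (n : ℕ) (hn : 3 ≤ n)
    (p t s : ℝ)
    (hp : p = (((n : ℝ) - 2) / ((n : ℝ) - 1)) ^ (n - 1))
    (ht : t = (1 - p) / ((n : ℝ) - 1))
    (hs : 0 ≤ s ∧ s ^ 2 = (1 + ((n : ℝ) - 2) * p) / (((n : ℝ) - 1) * ((n : ℝ) - 2)))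
    (B : Matrix (Fin (n - 1)) (Fin (n - 1)) ℝ)
    (hBdef : B = (1 : Matrix (Fin (n - 1)) (Fin (n - 1)) ℝ) -
      t • (Matrix.of fun _ _ => (1 : ℝ)))
    (A : Matrix (Fin (n - 1) ⊕ Unit) (Fin (n - 1) ⊕ Unit) ℝ)
    (hAdef : A = Matrix.fromBlocks B (Matrix.of fun _ _ => s)
      (Matrix.of fun _ _ => s) (Matrix.of fun _ _ => (1 : ℝ))) :
    (∀ i : Fin (n - 1) ⊕ Unit,
      (A.submatrix (fun j : {j : Fin (n - 1) ⊕ Unit // j ≠ i} => (j : Fin (n - 1) ⊕ Unit))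
        (fun j : {j : Fin (n - 1) ⊕ Unit // j ≠ i} => (j : Fin (n - 1) ⊕ Unit))).PosSemidef) ∧
    A.det = -(1 / ((n : ℝ) - 2)) ∧
    B.det = p ∧
    A.det = -(1 / ((n : ℝ) - 2)) * (((n : ℝ) - 1) / ((n : ℝ) - 2)) ^ (n - 1) * B.det * 1 := by
  have hN3 : (3 : ℝ) ≤ (n : ℝ) := by exact_mod_cast hn
  have h1 : (0 : ℝ) < (n : ℝ) - 1 := by linarith
  have h2 : (0 : ℝ) < (n : ℝ) - 2 := by linarith
  have hcast : ((n - 1 : ℕ) : ℝ) = (n : ℝ) - 1 := by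
    rw [Nat.cast_sub (by omega)]; norm_num
  have hp0 : 0 < p := by rw [hp]; positivity
  have hp1 : p ≤ 1 := by
    rw [hp]
    exact pow_le_one₀ (by positivity) (by rw [div_le_one h1]; linarith)
  have hts : t + s ^ 2 = 1 / ((n : ℝ) - 2) := by
    rw [ht, hs.2]
    field_simp
    ring
  have ht0 : 0 ≤ t := by
    rw [ht]; exact div_nonneg (by linarith) (le_of_lt h1)
  -- determinant of B
  have hdetB : B.det = p := by
    have hB1 : B = 1 + Matrix.replicateCol Unit (fun _ => -t) * Matrix.replicateRow Unit (fun _ => (1 : ℝ)) := by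
      rw [hBdef]
      ext i j
      simp [Matrix.mul_apply, Matrix.one_apply, sub_eq_add_neg]
    rw [hB1, Matrix.det_one_add_replicateCol_mul_replicateRow]
    simp only [dotProduct, one_mul, Finset.sum_const, Finset.card_univ, Fintype.card_fin,
      nsmul_eq_mul, hcast]
    rw [ht]
    field_simp
    ring
  -- determinant of A
  have hdetA : A.det = -(1 / ((n : ℝ) - 2)) := by
    have hA1 : A = Matrix.fromBlocks B (Matrix.of fun _ _ => s)
        (Matrix.of fun _ _ => s) (1 : Matrix Unit Unit ℝ) := by
      rw [hAdef]
      have h11 : (Matrix.of fun _ _ => (1 : ℝ) : Matrix Unit Unit ℝ) = 1 := by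
        ext i j
        simp [Matrix.one_apply, Subsingleton.elim i j]
      rw [h11]
    rw [hA1, Matrix.det_fromBlocks_one₂₂]
    have hSchur : B - (Matrix.of fun _ _ => s : Matrix (Fin (n - 1)) Unit ℝ)
          * (Matrix.of fun _ _ => s : Matrix Unit (Fin (n - 1)) ℝ)
        = 1 + Matrix.replicateCol Unit (fun _ => -(t + s ^ 2)) * Matrix.replicateRow Unit (fun _ => (1 : ℝ)) := by
      rw [hBdef]
      ext i j
      simp [Matrix.mul_apply, Matrix.one_apply, sq]
      ring
    rw [hSchur, Matrix.det_one_add_replicateCol_mul_replicateRow]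
    simp only [dotProduct, one_mul, Finset.sum_const, Finset.card_univ, Fintype.card_fin,
      nsmul_eq_mul, hcast]
    rw [hts]
    field_simp
    ring
  have hpow : (((n : ℝ) - 1) / ((n : ℝ) - 2)) ^ (n - 1) * p = 1 := by
    rw [hp, ← mul_pow, div_mul_div_comm, mul_comm (((n : ℝ) - 1)) (((n : ℝ) - 2)),
      div_self (by positivity), one_pow]
  -- subtype sums
  have hsub : ∀ (i : Fin (n - 1) ⊕ Unit) (f : Fin (n - 1) ⊕ Unit → ℝ),
      ∑ j : {j : Fin (n - 1) ⊕ Unit // j ≠ i}, f (j : Fin (n - 1) ⊕ Unit)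
        = (∑ j, f j) - f i := by
    intro i f
    rw [← Finset.sum_subtype (Finset.univ.erase i) (fun x => by simp [Finset.mem_erase]) f]
    exact Finset.sum_erase_eq_sub (Finset.mem_univ i)
  refine ⟨?_, hdetA, hdetB, ?_⟩
  · intro i
    match i with
    | Sum.inr u =>
      cases u
      have key : A.submatrix
          (fun j : {j : Fin (n - 1) ⊕ Unit // j ≠ Sum.inr ()} => (j : Fin (n - 1) ⊕ Unit))
          (fun j : {j : Fin (n - 1) ⊕ Unit // j ≠ Sum.inr ()} => (j : Fin (n - 1) ⊕ Unit))
          = Matrix.of (fun j k : {j : Fin (n - 1) ⊕ Unit // j ≠ Sum.inr ()} =>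
              (if j = k then (1 : ℝ) else 0) - t * (1 * 1)) := by
        ext j k
        obtain ⟨jv, hj⟩ := j
        obtain ⟨kv, hk⟩ := k
        match jv, kv with
        | Sum.inl b, Sum.inl b' =>
          by_cases hbb : b = b'
          · subst hbb
            simp [hAdef, hBdef, Matrix.one_apply]
          · have hne : (⟨Sum.inl b, hj⟩ : {j : Fin (n - 1) ⊕ Unit // j ≠ Sum.inr ()})
                ≠ ⟨Sum.inl b', hk⟩ := by simp [Subtype.ext_iff, hbb]
            simp [hAdef, hBdef, Matrix.one_apply, hbb, hne]
        | Sum.inl b, Sum.inr u' => cases u'; exact absurd rfl hk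
        | Sum.inr u', _ => cases u'; exact absurd rfl hj
      rw [key]
      have := aux_psd (ι := {j : Fin (n - 1) ⊕ Unit // j ≠ Sum.inr ()})
        (fun _ => (1 : ℝ)) (fun _ => by norm_num) t ht0 ?_
      · convert this using 3 with j k
      · rw [hsub (Sum.inr ()) (fun _ => (1 : ℝ))]
        have hcard : (∑ _j : Fin (n - 1) ⊕ Unit, (1 : ℝ)) = ((n : ℝ) - 1) + 1 := by
          simp [Finset.sum_const, Finset.card_univ, hcast]
        rw [hcard, ht]
        have : ((n : ℝ) - 1 + 1 - 1) = (n : ℝ) - 1 := by ring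
        rw [this]
        rw [div_mul_cancel₀ _ (ne_of_gt h1)]
        linarith
    | Sum.inl a =>
      set σ := {j : Fin (n - 1) ⊕ Unit // j ≠ Sum.inl a}
      set w : σ → ℝ := fun j => Sum.elim (fun _ => (1 : ℝ)) (fun _ => 0) (j : Fin (n - 1) ⊕ Unit)
        with hwdef
      set v : σ → ℝ := fun j => Sum.elim (fun _ => s) (fun _ => 1) (j : Fin (n - 1) ⊕ Unit)
        with hvdef
      set c : ℝ := 1 / ((n : ℝ) - 2) with hcdef
      have hcts : c = t + s ^ 2 := hts.symm
      have key : A.submatrix (fun j : σ => (j : Fin (n - 1) ⊕ Unit))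
          (fun j : σ => (j : Fin (n - 1) ⊕ Unit))
          = Matrix.of (fun j k : σ => (if j = k then w j else 0) - c * (w j * w k))
            + Matrix.vecMulVec v v := by
        ext j k
        obtain ⟨jv, hj⟩ := j
        obtain ⟨kv, hk⟩ := k
        match jv, kv with
        | Sum.inl b, Sum.inl b' =>
          by_cases hbb : b = b'
          · subst hbb
            simp only [Matrix.submatrix_apply, hAdef, Matrix.fromBlocks_apply₁₁, hBdef,
              Matrix.sub_apply, Matrix.one_apply_eq, Matrix.smul_apply, Matrix.of_apply,
              smul_eq_mul, mul_one, Matrix.add_apply, Matrix.vecMulVec_apply, if_pos rfl,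
              hwdef, hvdef, Sum.elim_inl, eq_self_iff_true, if_true]
            rw [hcts]; ring
          · have hne : (⟨Sum.inl b, hj⟩ : σ) ≠ ⟨Sum.inl b', hk⟩ := by
              simp [Subtype.ext_iff, hbb]
            simp only [Matrix.submatrix_apply, hAdef, Matrix.fromBlocks_apply₁₁, hBdef,
              Matrix.sub_apply, Matrix.one_apply_ne hbb, Matrix.smul_apply, Matrix.of_apply,
              smul_eq_mul, mul_one, Matrix.add_apply, Matrix.vecMulVec_apply, if_neg hne,
              hwdef, hvdef, Sum.elim_inl]
            rw [hcts]; ring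
        | Sum.inl b, Sum.inr u' =>
          have hne : (⟨Sum.inl b, hj⟩ : σ) ≠ ⟨Sum.inr u', hk⟩ := by
            simp [Subtype.ext_iff]
          simp only [Matrix.submatrix_apply, hAdef, Matrix.fromBlocks_apply₁₂,
            Matrix.of_apply, Matrix.add_apply, Matrix.vecMulVec_apply, if_neg hne,
            hwdef, hvdef, Sum.elim_inl, Sum.elim_inr]
          ring
        | Sum.inr u', Sum.inl b =>
          have hne : (⟨Sum.inr u', hj⟩ : σ) ≠ ⟨Sum.inl b, hk⟩ := by
            simp [Subtype.ext_iff]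
          simp only [Matrix.submatrix_apply, hAdef, Matrix.fromBlocks_apply₂₁,
            Matrix.of_apply, Matrix.add_apply, Matrix.vecMulVec_apply, if_neg hne,
            hwdef, hvdef, Sum.elim_inl, Sum.elim_inr]
          ring
        | Sum.inr u', Sum.inr u'' =>
          cases u'; cases u''
          simp only [Matrix.submatrix_apply, hAdef, Matrix.fromBlocks_apply₂₂,
            Matrix.of_apply, Matrix.add_apply, Matrix.vecMulVec_apply, if_pos rfl,
            hwdef, hvdef, Sum.elim_inr, eq_self_iff_true, if_true]
          ring
      rw [key]
      refine Matrix.PosSemidef.add (aux_psd w ?_ c (by positivity) ?_) (aux_vvT v)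
      · rintro ⟨jv | jv, hj⟩ <;> simp [hwdef]
      · have hwsum : (∑ j : σ, w j) = (n : ℝ) - 2 := by
          rw [hwdef]
          rw [hsub (Sum.inl a) (Sum.elim (fun _ => (1 : ℝ)) (fun _ => 0))]
          rw [Fintype.sum_sum_type]
          simp [Finset.sum_const, Finset.card_univ, hcast]
          linarith
        rw [hwsum, hcdef, one_div, inv_mul_cancel₀ (ne_of_gt h2)]
  · rw [hdetA, hdetB, mul_one, mul_assoc, hpow, mul_one]
end

section
/- (Crabtree–Haynsworth quotient property) Let A be a square matrix, B a nonsingular principal submatrix of A, and C a nonsingular principal submatrix of B. Then the Schur complement B/C is a principal submatrix of A/C, and A/B = (A/C)/(B/C). -/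
open Matrix Finset

lemma quotient_blocks {p q r : Type*} [Fintype p] [Fintype q] [Fintype r]
    [DecidableEq p] [DecidableEq q]
    (C : Matrix p p ℝ) (E : Matrix p q ℝ) (G : Matrix q p ℝ) (D : Matrix q q ℝ)
    (F : Matrix p r ℝ) (H : Matrix q r ℝ) (J : Matrix r p ℝ) (K : Matrix r q ℝ)
    (M : Matrix r r ℝ)
    (hC : IsUnit C.det) (hS : IsUnit (D - G * C⁻¹ * E).det) :
    M - (fromCols J K) * (fromBlocks C E G D)⁻¹ * (fromRows F H) =
      (M - J * C⁻¹ * F) -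
        (K - J * C⁻¹ * E) * (D - G * C⁻¹ * E)⁻¹ * (H - G * C⁻¹ * F) := by
  haveI iC : Invertible C := C.invertibleOfIsUnitDet hC
  haveI iS : Invertible (D - G * C⁻¹ * E) := (D - G * C⁻¹ * E).invertibleOfIsUnitDet hS
  haveI iS' : Invertible (D - G * ⅟C * E) := by rw [invOf_eq_nonsing_inv]; exact iS
  haveI iB : Invertible (fromBlocks C E G D) := fromBlocks₁₁Invertible C E G D
  have h1 : (fromBlocks C E G D)⁻¹ = ⅟(fromBlocks C E G D) := (invOf_eq_nonsing_inv _).symm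
  rw [h1, invOf_fromBlocks₁₁_eq, fromCols_mul_fromBlocks, fromCols_mul_fromRows]
  simp only [invOf_eq_nonsing_inv]
  generalize (D - G * C⁻¹ * E)⁻¹ = S
  generalize C⁻¹ = Ci
  simp only [Matrix.sub_mul, Matrix.mul_sub, Matrix.mul_add, Matrix.add_mul,
    Matrix.mul_assoc, Matrix.mul_neg, Matrix.neg_mul, sub_eq_add_neg, neg_add, neg_neg]
  abel

/-- The principal submatrix of `A` indexed by a finset `s`. -/
def principalSub {ι : Type*} (A : Matrix ι ι ℝ) (s : Finset ι) :
    Matrix {i : ι // i ∈ s} {i : ι // i ∈ s} ℝ :=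
  A.submatrix (fun i => (i : ι)) (fun i => (i : ι))

/-- The Schur complement `A/A[γ]` of the principal submatrix indexed by `γ` in `A`,
indexed by the complementary indices. -/
noncomputable def schurCompl {ι : Type*} [Fintype ι] [DecidableEq ι]
    (A : Matrix ι ι ℝ) (γ : Finset ι) :
    Matrix {i : ι // i ∉ γ} {i : ι // i ∉ γ} ℝ :=
  A.submatrix (fun i : {i : ι // i ∉ γ} => (i : ι)) (fun i : {i : ι // i ∉ γ} => (i : ι)) -
    (A.submatrix (fun i : {i : ι // i ∉ γ} => (i : ι)) (fun i : {i : ι // i ∈ γ} => (i : ι))) *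
    (A.submatrix (fun i : {i : ι // i ∈ γ} => (i : ι)) (fun i : {i : ι // i ∈ γ} => (i : ι)))⁻¹ *
    (A.submatrix (fun i : {i : ι // i ∈ γ} => (i : ι)) (fun i : {i : ι // i ∉ γ} => (i : ι)))


section Parts

variable {ι : Type*} [Fintype ι] [DecidableEq ι]

def eGamma (γ β : Finset ι) (hγβ : γ ⊆ β) :
    {k : {l : ι // l ∈ β} // k ∈ Finset.univ.filter (fun m : {l : ι // l ∈ β} => (m : ι) ∈ γ)} ≃ {x : ι // x ∈ γ} where
  toFun := fun k => ⟨k.1.1, (Finset.mem_filter.mp k.2).2⟩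
  invFun := fun x => ⟨⟨x.1, hγβ x.2⟩, Finset.mem_filter.mpr ⟨Finset.mem_univ _, x.2⟩⟩
  left_inv := fun _ => rfl
  right_inv := fun _ => rfl

def fGamma (γ β : Finset ι) :
    {k : {l : ι // l ∈ β} // k ∉ Finset.univ.filter (fun m : {l : ι // l ∈ β} => (m : ι) ∈ γ)} → {x : ι // x ∉ γ} :=
  fun k => ⟨k.1.1, fun hk => k.2 (Finset.mem_filter.mpr ⟨Finset.mem_univ _, hk⟩)⟩

lemma part1 (A : Matrix ι ι ℝ) (γ β : Finset ι) (hγβ : γ ⊆ β)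
    (i j : {k : {l : ι // l ∈ β} // k ∉ Finset.univ.filter (fun m : {l : ι // l ∈ β} => (m : ι) ∈ γ)}) :
    schurCompl (principalSub A β) (Finset.univ.filter (fun m : {l : ι // l ∈ β} => (m : ι) ∈ γ)) i j =
      schurCompl A γ ⟨((i : {l : ι // l ∈ β}) : ι), by simpa using i.2⟩
        ⟨((j : {l : ι // l ∈ β}) : ι), by simpa using j.2⟩ := by
  have h : schurCompl (principalSub A β) (Finset.univ.filter (fun m : {l : ι // l ∈ β} => (m : ι) ∈ γ)) =
      (schurCompl A γ).submatrix (fGamma γ β) (fGamma γ β) := by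
    show (A.submatrix (fun x : {x : ι // x ∉ γ} => (x : ι)) (fun x : {x : ι // x ∉ γ} => (x : ι))).submatrix
          (fGamma γ β) (fGamma γ β) -
        (A.submatrix (fun x : {x : ι // x ∉ γ} => (x : ι)) (fun x : {x : ι // x ∈ γ} => (x : ι))).submatrix
          (fGamma γ β) ⇑(eGamma γ β hγβ) *
        ((A.submatrix (fun x : {x : ι // x ∈ γ} => (x : ι)) (fun x : {x : ι // x ∈ γ} => (x : ι))).submatrix
          ⇑(eGamma γ β hγβ) ⇑(eGamma γ β hγβ))⁻¹ *
        (A.submatrix (fun x : {x : ι // x ∈ γ} => (x : ι)) (fun x : {x : ι // x ∉ γ} => (x : ι))).submatrix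
          ⇑(eGamma γ β hγβ) (fGamma γ β) = _
    rw [Matrix.inv_submatrix_equiv, Matrix.submatrix_mul_equiv, Matrix.submatrix_mul_equiv]
    ext x y
    simp [schurCompl]
    rfl
  exact congrFun (congrFun h i) j

def eBeta (γ β : Finset ι) (hγβ : γ ⊆ β) : {x : ι // x ∈ γ} ⊕ {k : {x : ι // x ∉ γ} // k ∈ Finset.univ.filter (fun m : {x : ι // x ∉ γ} => (m : ι) ∈ β)} ≃ {l : ι // l ∈ β} where
  toFun := Sum.elim (fun x => ⟨x.1, hγβ x.2⟩)
    (fun y => ⟨y.1.1, (Finset.mem_filter.mp y.2).2⟩)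
  invFun := fun z => if h : z.1 ∈ γ then Sum.inl ⟨z.1, h⟩
    else Sum.inr ⟨⟨z.1, h⟩, Finset.mem_filter.mpr ⟨Finset.mem_univ _, z.2⟩⟩
  left_inv := by
    rintro (x | y)
    · simp only [Sum.elim_inl]
      exact dif_pos x.2
    · simp only [Sum.elim_inr]
      exact dif_neg y.1.2
  right_inv := fun z => by
    by_cases h : z.1 ∈ γ
    · simp only []
      rw [dif_pos h]
      rfl
    · simp only []
      rw [dif_neg h]
      rfl

def rMap (γ β : Finset ι) (hγβ : γ ⊆ β) : {x : ι // x ∉ β} → {x : ι // x ∉ γ} :=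
  fun z => ⟨z.1, fun hz => z.2 (hγβ hz)⟩

def qMap (γ β : Finset ι) : {k : {x : ι // x ∉ γ} // k ∈ Finset.univ.filter (fun m : {x : ι // x ∉ γ} => (m : ι) ∈ β)} → {x : ι // x ∉ γ} := fun y => y.1

def mC (A : Matrix ι ι ℝ) (γ : Finset ι) : Matrix {x : ι // x ∈ γ} {x : ι // x ∈ γ} ℝ :=
  A.submatrix (fun x => x.1) (fun x => x.1)
def mE (A : Matrix ι ι ℝ) (γ β : Finset ι) : Matrix {x : ι // x ∈ γ} {k : {x : ι // x ∉ γ} // k ∈ Finset.univ.filter (fun m : {x : ι // x ∉ γ} => (m : ι) ∈ β)} ℝ :=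
  A.submatrix (fun x => x.1) (fun y => y.1.1)
def mG (A : Matrix ι ι ℝ) (γ β : Finset ι) : Matrix {k : {x : ι // x ∉ γ} // k ∈ Finset.univ.filter (fun m : {x : ι // x ∉ γ} => (m : ι) ∈ β)} {x : ι // x ∈ γ} ℝ :=
  A.submatrix (fun y => y.1.1) (fun x => x.1)
def mD (A : Matrix ι ι ℝ) (γ β : Finset ι) : Matrix {k : {x : ι // x ∉ γ} // k ∈ Finset.univ.filter (fun m : {x : ι // x ∉ γ} => (m : ι) ∈ β)} {k : {x : ι // x ∉ γ} // k ∈ Finset.univ.filter (fun m : {x : ι // x ∉ γ} => (m : ι) ∈ β)} ℝ :=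
  A.submatrix (fun y => y.1.1) (fun y => y.1.1)
def mF (A : Matrix ι ι ℝ) (γ β : Finset ι) : Matrix {x : ι // x ∈ γ} {x : ι // x ∉ β} ℝ :=
  A.submatrix (fun x => x.1) (fun z => z.1)
def mH (A : Matrix ι ι ℝ) (γ β : Finset ι) : Matrix {k : {x : ι // x ∉ γ} // k ∈ Finset.univ.filter (fun m : {x : ι // x ∉ γ} => (m : ι) ∈ β)} {x : ι // x ∉ β} ℝ :=
  A.submatrix (fun y => y.1.1) (fun z => z.1)
def mJ (A : Matrix ι ι ℝ) (γ β : Finset ι) : Matrix {x : ι // x ∉ β} {x : ι // x ∈ γ} ℝ :=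
  A.submatrix (fun z => z.1) (fun x => x.1)
def mK (A : Matrix ι ι ℝ) (γ β : Finset ι) : Matrix {x : ι // x ∉ β} {k : {x : ι // x ∉ γ} // k ∈ Finset.univ.filter (fun m : {x : ι // x ∉ γ} => (m : ι) ∈ β)} ℝ :=
  A.submatrix (fun z => z.1) (fun y => y.1.1)
def mM (A : Matrix ι ι ℝ) (β : Finset ι) : Matrix {x : ι // x ∉ β} {x : ι // x ∉ β} ℝ :=
  A.submatrix (fun z => z.1) (fun z => z.1)

lemma part2 (A : Matrix ι ι ℝ) (γ β : Finset ι) (hγβ : γ ⊆ β)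
    (hC : (principalSub A γ).det ≠ 0) (hB : (principalSub A β).det ≠ 0)
    (i j : {k : ι // k ∉ β}) :
    schurCompl A β i j =
      schurCompl (schurCompl A γ)
          (Finset.univ.filter (fun m : {x : ι // x ∉ γ} => (m : ι) ∈ β))
        ⟨⟨(i : ι), fun hiγ => i.2 (hγβ hiγ)⟩, by simpa using i.2⟩
        ⟨⟨(j : ι), fun hjγ => j.2 (hγβ hjγ)⟩, by simpa using j.2⟩ := by
  have h1 : fromBlocks (mC A γ) (mE A γ β) (mG A γ β) (mD A γ β) =
      (A.submatrix (fun z : {l : ι // l ∈ β} => (z : ι)) (fun z : {l : ι // l ∈ β} => (z : ι))).submatrix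
        ⇑(eBeta γ β hγβ) ⇑(eBeta γ β hγβ) := by
    ext x y
    cases x <;> cases y <;> rfl
  have hBB : A.submatrix (fun z : {l : ι // l ∈ β} => (z : ι)) (fun z : {l : ι // l ∈ β} => (z : ι)) =
      (fromBlocks (mC A γ) (mE A γ β) (mG A γ β) (mD A γ β)).submatrix
        ⇑(eBeta γ β hγβ).symm ⇑(eBeta γ β hγβ).symm := by
    rw [h1]
    ext x y
    simp
  have h2 : fromCols (mJ A γ β) (mK A γ β) =
      (A.submatrix (fun z : {x : ι // x ∉ β} => (z : ι)) (fun z : {l : ι // l ∈ β} => (z : ι))).submatrix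
        _root_.id ⇑(eBeta γ β hγβ) := by
    ext x y
    cases y <;> rfl
  have hJK : A.submatrix (fun z : {x : ι // x ∉ β} => (z : ι)) (fun z : {l : ι // l ∈ β} => (z : ι)) =
      (fromCols (mJ A γ β) (mK A γ β)).submatrix _root_.id ⇑(eBeta γ β hγβ).symm := by
    rw [h2]
    ext x y
    simp
  have h3 : fromRows (mF A γ β) (mH A γ β) =
      (A.submatrix (fun z : {l : ι // l ∈ β} => (z : ι)) (fun z : {x : ι // x ∉ β} => (z : ι))).submatrix
        ⇑(eBeta γ β hγβ) _root_.id := by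
    ext x y
    cases x <;> rfl
  have hFH : A.submatrix (fun z : {l : ι // l ∈ β} => (z : ι)) (fun z : {x : ι // x ∉ β} => (z : ι)) =
      (fromRows (mF A γ β) (mH A γ β)).submatrix ⇑(eBeta γ β hγβ).symm _root_.id := by
    rw [h3]
    ext x y
    simp
  haveI iCC : Invertible (mC A γ) :=
    (mC A γ).invertibleOfIsUnitDet (isUnit_iff_ne_zero.mpr hC)
  have hdet : (fromBlocks (mC A γ) (mE A γ β) (mG A γ β) (mD A γ β)).det =
      (principalSub A β).det := by
    rw [h1, Matrix.det_submatrix_equiv_self]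
    rfl
  have hSdet : IsUnit (mD A γ β - mG A γ β * (mC A γ)⁻¹ * mE A γ β).det := by
    have h4 : (fromBlocks (mC A γ) (mE A γ β) (mG A γ β) (mD A γ β)).det =
        (mC A γ).det * (mD A γ β - mG A γ β * (mC A γ)⁻¹ * mE A γ β).det := by
      rw [Matrix.det_fromBlocks₁₁, invOf_eq_nonsing_inv]
    rw [isUnit_iff_ne_zero]
    intro h0
    apply hB
    rw [← hdet, h4, h0, mul_zero]
  have hL : schurCompl A β =
      (mM A β - mJ A γ β * (mC A γ)⁻¹ * mF A γ β) -
        (mK A γ β - mJ A γ β * (mC A γ)⁻¹ * mE A γ β) *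
          (mD A γ β - mG A γ β * (mC A γ)⁻¹ * mE A γ β)⁻¹ *
          (mH A γ β - mG A γ β * (mC A γ)⁻¹ * mF A γ β) := by
    show mM A β -
        A.submatrix (fun z : {x : ι // x ∉ β} => (z : ι)) (fun z : {l : ι // l ∈ β} => (z : ι)) *
          (A.submatrix (fun z : {l : ι // l ∈ β} => (z : ι)) (fun z : {l : ι // l ∈ β} => (z : ι)))⁻¹ *
          A.submatrix (fun z : {l : ι // l ∈ β} => (z : ι)) (fun z : {x : ι // x ∉ β} => (z : ι)) = _
    rw [hBB, hJK, hFH, Matrix.inv_submatrix_equiv, Matrix.submatrix_mul_equiv,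
      Matrix.submatrix_mul_equiv, Matrix.submatrix_id_id]
    exact quotient_blocks _ _ _ _ _ _ _ _ _ (isUnit_iff_ne_zero.mpr hC) hSdet
  have ha : (schurCompl A γ).submatrix (qMap γ β) (qMap γ β) =
      mD A γ β - mG A γ β * (mC A γ)⁻¹ * mE A γ β := by
    ext x y
    rfl
  have hb : (schurCompl A γ).submatrix (qMap γ β) (rMap γ β hγβ) =
      mH A γ β - mG A γ β * (mC A γ)⁻¹ * mF A γ β := by
    ext x y
    rfl
  have hc : (schurCompl A γ).submatrix (rMap γ β hγβ) (qMap γ β) =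
      mK A γ β - mJ A γ β * (mC A γ)⁻¹ * mE A γ β := by
    ext x y
    rfl
  have hd : (schurCompl A γ).submatrix (rMap γ β hγβ) (rMap γ β hγβ) =
      mM A β - mJ A γ β * (mC A γ)⁻¹ * mF A γ β := by
    ext x y
    rfl
  have key : (schurCompl A γ).submatrix (rMap γ β hγβ) (rMap γ β hγβ) -
      (schurCompl A γ).submatrix (rMap γ β hγβ) (qMap γ β) *
        ((schurCompl A γ).submatrix (qMap γ β) (qMap γ β))⁻¹ *
        (schurCompl A γ).submatrix (qMap γ β) (rMap γ β hγβ) =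
      (mM A β - mJ A γ β * (mC A γ)⁻¹ * mF A γ β) -
        (mK A γ β - mJ A γ β * (mC A γ)⁻¹ * mE A γ β) *
          (mD A γ β - mG A γ β * (mC A γ)⁻¹ * mE A γ β)⁻¹ *
          (mH A γ β - mG A γ β * (mC A γ)⁻¹ * mF A γ β) := by
    rw [ha, hb, hc, hd]
  rw [hL, ← key]
  rfl

end Parts

/-- Crabtree–Haynsworth quotient property: if `C = A[γ]` is a nonsingular principal submatrix
of the nonsingular principal submatrix `B = A[β]` of `A`, then `B/C` is a principal submatrix
of `A/C`, and `A/B = (A/C)/(B/C)`. -/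
theorem crabtree_haynsworth
    (n : ℕ) (A : Matrix (Fin n) (Fin n) ℝ)
    (γ β : Finset (Fin n)) (hγβ : γ ⊆ β)
    (hC : (principalSub A γ).det ≠ 0)
    (hB : (principalSub A β).det ≠ 0) :
    (∀ i j : {k : {l : Fin n // l ∈ β} //
        k ∉ Finset.univ.filter (fun m : {l : Fin n // l ∈ β} => (m : Fin n) ∈ γ)},
      schurCompl (principalSub A β)
          (Finset.univ.filter (fun m : {l : Fin n // l ∈ β} => (m : Fin n) ∈ γ)) i j =
        schurCompl A γ ⟨((i : {l : Fin n // l ∈ β}) : Fin n), by simpa using i.2⟩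
          ⟨((j : {l : Fin n // l ∈ β}) : Fin n), by simpa using j.2⟩) ∧
    (∀ i j : {k : Fin n // k ∉ β},
      schurCompl A β i j =
        schurCompl (schurCompl A γ)
            (Finset.univ.filter (fun m : {l : Fin n // l ∉ γ} => (m : Fin n) ∈ β))
          ⟨⟨(i : Fin n), fun hiγ => i.2 (hγβ hiγ)⟩, by simpa using i.2⟩
          ⟨⟨(j : Fin n), fun hjγ => j.2 (hγβ hjγ)⟩, by simpa using j.2⟩) :=
  ⟨fun i j => part1 A γ β hγβ i j, fun i j => part2 A γ β hγβ hC hB i j⟩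
end
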